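/- arXiv:1208.6424 — 6 statements merged into one kernel-verified Lean document; each statement's English description precedes it below -/
import Mathlib

section
/- The set B*_k = { t_{n-1} t_{n-2} ... t_{2k} · t_{2k-2} t_{2k-4} ... t_2 : each t_j ∈ {1} ∪ {s_{i,j} : 1 ≤ i ≤ j} } has exactly n!/(2^k k!) elements. -/
/-- The simple transposition `s_i = (i, i+1)`, acting on the vertices `1, …, n` (inside `ℕ`). -/
def simpleT (i : ℕ) : Equiv.Perm ℕ := Equiv.swap i (i + 1)

/-- `sseq i j = s_i s_{i+1} ⋯ s_j` for `i ≤ j`. -/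
def sseq (i j : ℕ) : Equiv.Perm ℕ := ((List.range' i (j + 1 - i)).map simpleT).prod

/-- The factor `t_j`: the identity if `t j = 0`, and `s_{t j, j} = s_{t j} s_{t j + 1} ⋯ s_j`
if `1 ≤ t j ≤ j`. -/
def tfac (t : ℕ → ℕ) (j : ℕ) : Equiv.Perm ℕ := if t j = 0 then 1 else sseq (t j) j

/-- The Coxeter length of `σ ∈ S_n`: the number of inversions
`{(i, j) : 1 ≤ i < j ≤ n, σ j < σ i}`. -/
def len (n : ℕ) (σ : Equiv.Perm ℕ) : ℕ :=
  ((Finset.Icc 1 n ×ˢ Finset.Icc 1 n).filter fun p => p.1 < p.2 ∧ σ p.2 < σ p.1).card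

/-- The product `t_{n-1} t_{n-2} ⋯ t_{2k} ⋅ t_{2k-2} t_{2k-4} ⋯ t_2`. -/
def BstarProd (n k : ℕ) (t : ℕ → ℕ) : Equiv.Perm ℕ :=
  (((List.range' (2*k) (n - 2*k)).reverse).map (tfac t)).prod *
  (((List.range (k-1)).map (fun m => tfac t (2*(m+1)))).reverse).prod

/-- The set `B*_k = { t_{n-1} t_{n-2} ⋯ t_{2k} ⋅ t_{2k-2} t_{2k-4} ⋯ t_2 }`, where each
`t_j ∈ {1} ∪ {s_{i,j} : 1 ≤ i ≤ j}`. -/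
def Bstar (n k : ℕ) : Set (Equiv.Perm ℕ) :=
  {ω | ∃ t : ℕ → ℕ, (∀ j, t j ≤ j) ∧ ω = BstarProd n k t}

lemma prod_apply_fix (l : List (Equiv.Perm ℕ)) (x : ℕ) (h : ∀ p ∈ l, p x = x) :
    l.prod x = x := by
  induction l with
  | nil => simp
  | cons a l ih =>
    rw [List.prod_cons, Equiv.Perm.mul_apply, ih (fun p hp => h p (List.mem_cons_of_mem a hp)),
      h a (List.mem_cons_self (a := a) (l := l))]

lemma sseq_apply_of_gt (i j x : ℕ) (h : j + 1 < x) : sseq i j x = x := by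
  apply prod_apply_fix
  intro p hp
  simp only [List.mem_map, List.mem_range'] at hp
  obtain ⟨m, ⟨him, hm⟩, rfl⟩ := hp
  have h1 : m ≠ x := by omega
  have h2 : m + 1 ≠ x := by omega
  exact Equiv.swap_apply_of_ne_of_ne (Ne.symm h1) (Ne.symm h2)

lemma sseq_top : ∀ (d i : ℕ), sseq i (i + d) (i + d + 1) = i := by
  intro d
  induction d with
  | zero =>
    intro i
    simp only [sseq, Nat.add_zero]
    have : i + 1 - i = 1 := by omega
    rw [this]
    simp [simpleT]
  | succ d ih =>
    intro i
    have hr : i + (d + 1) + 1 - i = (d + 1) + 1 := by omega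
    rw [sseq, hr, List.range'_succ, List.map_cons, List.prod_cons]
    have : List.range' (i + 1) (d + 1) = List.range' (i+1) ((i + 1 + d) + 1 - (i+1)) := by
      congr 1; omega
    rw [this]
    have h2 : ((List.range' (i+1) ((i + 1 + d) + 1 - (i+1))).map simpleT).prod = sseq (i+1) (i+1+d) := rfl
    rw [h2, Equiv.Perm.mul_apply]
    have : i + (d + 1) + 1 = (i + 1) + d + 1 := by omega
    rw [this, ih (i+1)]
    simp [simpleT]

lemma sseq_apply_top {i j : ℕ} (h : i ≤ j) : sseq i j (j + 1) = i := by
  obtain ⟨d, rfl⟩ := Nat.exists_eq_add_of_le h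
  exact sseq_top d i

lemma tfac_apply_of_gt {t : ℕ → ℕ} {j x : ℕ} (h : j + 1 < x) : tfac t j x = x := by
  unfold tfac
  split
  · rfl
  · exact sseq_apply_of_gt _ _ _ h

lemma tfac_top_inj {t t' : ℕ → ℕ} {j : ℕ} (ht : t j ≤ j) (ht' : t' j ≤ j)
    (h : tfac t j (j + 1) = tfac t' j (j + 1)) : t j = t' j := by
  unfold tfac at h
  split at h <;> split at h
  · omega
  · rename_i h0 h1
    rw [sseq_apply_top (by omega)] at h
    simp at h; omega
  · rename_i h0 h1
    rw [sseq_apply_top (by omega)] at h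
    simp at h; omega
  · rename_i h0 h1
    rw [sseq_apply_top (by omega), sseq_apply_top (by omega)] at h
    exact h

lemma tfac_congr {t t' : ℕ → ℕ} {j : ℕ} (h : t j = t' j) : tfac t j = tfac t' j := by
  unfold tfac; rw [h]

lemma prod_tfac_inj : ∀ (L : List ℕ), L.Pairwise (· > ·) → ∀ {t t' : ℕ → ℕ},
    (∀ j ∈ L, t j ≤ j) → (∀ j ∈ L, t' j ≤ j) →
    (L.map (tfac t)).prod = (L.map (tfac t')).prod → ∀ j ∈ L, t j = t' j := by
  intro L
  induction L with
  | nil => intro _ _ _ _ _ _ j hj; simp at hj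
  | cons a L ih =>
    intro hP t t' ht ht' heq j hj
    rw [List.pairwise_cons] at hP
    have key : ∀ (s : ℕ → ℕ), (L.map (tfac s)).prod (a + 1) = a + 1 := by
      intro s
      apply prod_apply_fix
      intro p hp
      simp only [List.mem_map] at hp
      obtain ⟨m, hm, rfl⟩ := hp
      exact tfac_apply_of_gt (by have := hP.1 m hm; omega)
    rw [List.map_cons, List.prod_cons, List.map_cons, List.prod_cons] at heq
    have htop : tfac t a (a + 1) = tfac t' a (a + 1) := by
      have := congrArg (fun σ : Equiv.Perm ℕ => σ (a + 1)) heq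
      simpa [Equiv.Perm.mul_apply, key t, key t'] using this
    have ha : t a = t' a :=
      tfac_top_inj (ht a (List.mem_cons_self (a := a) (l := L))) (ht' a (List.mem_cons_self (a := a) (l := L))) htop
    rcases List.mem_cons.1 hj with rfl | hj'
    · exact ha
    · have heq' : (L.map (tfac t)).prod = (L.map (tfac t')).prod := by
        have : tfac t a = tfac t' a := tfac_congr ha
        rw [this] at heq
        exact mul_left_cancel heq
      exact ih hP.2 (fun j hj => ht j (List.mem_cons_of_mem a hj))
        (fun j hj => ht' j (List.mem_cons_of_mem a hj)) heq' j hj'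

/-- The combined index list `[n-1, …, 2k, 2k-2, 2k-4, …, 2]`. -/
def idxL (n k : ℕ) : List ℕ :=
  (List.range' (2*k) (n - 2*k)).reverse ++ ((List.range (k-1)).map (fun m => 2*(m+1))).reverse

lemma BstarProd_eq (n k : ℕ) (t : ℕ → ℕ) :
    BstarProd n k t = ((idxL n k).map (tfac t)).prod := by
  unfold BstarProd idxL
  rw [List.map_append, List.prod_append]
  congr 1
  rw [← List.map_reverse, ← List.map_reverse, List.map_map]
  rfl

lemma idxL_pairwise (n k : ℕ) : (idxL n k).Pairwise (· > ·) := by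
  unfold idxL
  rw [List.pairwise_append]
  refine ⟨?_, ?_, ?_⟩
  · rw [List.pairwise_reverse]
    exact List.pairwise_lt_range' _ (by norm_num)
  · rw [List.pairwise_reverse, List.pairwise_map]
    apply List.Pairwise.imp (fun h => by omega) (List.pairwise_lt_range)
  · intro a ha b hb
    rw [List.mem_reverse, List.mem_range'] at ha
    rw [List.mem_reverse, List.mem_map] at hb
    obtain ⟨m, hm, rfl⟩ := hb
    rw [List.mem_range] at hm
    omega

lemma idxL_nodup (n k : ℕ) : (idxL n k).Nodup :=
  (idxL_pairwise n k).imp (fun h => by omega)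

lemma fact_prod_range' : ∀ (c a : ℕ),
    a.factorial * ((List.range' a c).map (· + 1)).prod = (a + c).factorial := by
  intro c
  induction c with
  | zero => simp
  | succ c ih =>
    intro a
    rw [List.range'_succ, List.map_cons, List.prod_cons, ← mul_assoc]
    have h1 : a.factorial * (a + 1) = (a + 1).factorial := by
      rw [Nat.factorial_succ]; ring
    rw [h1, ih (a + 1)]
    congr 1
    omega

lemma fact_odd_prod : ∀ (k : ℕ),
    2 ^ k * k.factorial * ((List.range (k-1)).map (fun m => 2*(m+1) + 1)).prod
      = (2 * k).factorial := by
  intro k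
  induction k with
  | zero => simp
  | succ k ih =>
    match k, ih with
    | 0, _ => simp [Nat.factorial]
    | k + 1, ih =>
      have hk : k + 1 - 1 = k := rfl
      rw [hk] at ih
      have hr : (k + 1 + 1) - 1 = k + 1 := rfl
      rw [hr, List.range_succ, List.map_append, List.prod_append]
      simp only [List.map_cons, List.map_nil, List.prod_cons, List.prod_nil, mul_one]
      have e1 : (2 * (k + 1 + 1)).factorial
          = (2*(k+1)+2) * ((2*(k+1)+1) * (2*(k+1)).factorial) := by
        have h2 : 2 * (k+1+1) = (2*(k+1)+1)+1 := by omega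
        rw [h2, Nat.factorial_succ, Nat.factorial_succ]
      rw [e1, ← ih, Nat.factorial_succ (k+1), pow_succ]
      ring

lemma idxL_prod_succ (n k : ℕ) (h : 2 * k ≤ n) :
    2 ^ k * k.factorial * ((idxL n k).map (· + 1)).prod = n.factorial := by
  unfold idxL
  rw [List.map_append, List.prod_append, List.map_reverse, List.prod_reverse,
    List.map_reverse, List.prod_reverse, List.map_map]
  have h1 := fact_prod_range' (n - 2*k) (2*k)
  have h2 := fact_odd_prod k
  have hn : 2*k + (n - 2*k) = n := by omega
  rw [hn] at h1
  calc 2 ^ k * k.factorial *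
        (((List.range' (2*k) (n - 2*k)).map (· + 1)).prod *
          ((List.range (k-1)).map ((· + 1) ∘ fun m => 2*(m+1))).prod)
      = (2 ^ k * k.factorial * ((List.range (k-1)).map (fun m => 2*(m+1) + 1)).prod) *
          ((List.range' (2*k) (n - 2*k)).map (· + 1)).prod := by
        have hc : ((· + 1) ∘ fun m => 2*(m+1)) = (fun m => 2*(m+1) + 1) := rfl
        rw [hc]; ring
    _ = (2*k).factorial * ((List.range' (2*k) (n - 2*k)).map (· + 1)).prod := by rw [h2]
    _ = n.factorial := h1

/-- `B*_k` has exactly `n!/(2^k k!)` elements. -/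
theorem card_Bstar (n k : ℕ) (h : 2 * k ≤ n) :
    (Bstar n k).ncard = n.factorial / (2 ^ k * k.factorial) := by
  classical
  set L := idxL n k with hLdef
  set F : Finset (∀ j ∈ L.toFinset, ℕ) := L.toFinset.pi (fun j => Finset.range (j+1)) with hFdef
  set ext : (∀ j ∈ L.toFinset, ℕ) → (ℕ → ℕ) :=
    fun f j => if hj : j ∈ L.toFinset then f j hj else 0 with hextdef
  set g : (∀ j ∈ L.toFinset, ℕ) → Equiv.Perm ℕ := fun f => BstarProd n k (ext f) with hgdef
  have hext_mem : ∀ f j (hj : j ∈ L.toFinset), ext f j = f j hj := by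
    intro f j hj
    have hj' : j ∈ L := List.mem_toFinset.1 hj
    simp [hextdef, hj']
  have hext_bd : ∀ f, f ∈ F → ∀ j, ext f j ≤ j := by
    intro f hf j
    by_cases hj : j ∈ L.toFinset
    · rw [hext_mem f j hj]
      have := Finset.mem_pi.1 hf j hj
      rw [Finset.mem_range] at this
      omega
    · have hj' : j ∉ L := fun hh => hj (List.mem_toFinset.2 hh)
      simp [hextdef, hj']
  have hset : Bstar n k = ↑(F.image g) := by
    ext ω
    simp only [Bstar, Set.mem_setOf_eq, Finset.coe_image, Set.mem_image, Finset.mem_coe]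
    constructor
    · rintro ⟨t, ht, rfl⟩
      refine ⟨fun j _ => t j, Finset.mem_pi.2 fun j hj => Finset.mem_range.2 (by
        have := ht j; omega), ?_⟩
      rw [hgdef]
      simp only
      rw [BstarProd_eq, BstarProd_eq]
      congr 1
      apply List.map_congr_left
      intro j hj
      exact tfac_congr (hext_mem (fun j _ => t j) j (List.mem_toFinset.2 hj))
    · rintro ⟨f, hf, rfl⟩
      exact ⟨ext f, hext_bd f hf, rfl⟩
  rw [hset, Set.ncard_coe_finset]
  have hcard : (F.image g).card = F.card := by
    apply Finset.card_image_of_injOn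
    intro f1 hf1 f2 hf2 hg12
    have hb1 : ∀ j ∈ L, ext f1 j ≤ j := fun j _ => hext_bd f1 hf1 j
    have hb2 : ∀ j ∈ L, ext f2 j ≤ j := fun j _ => hext_bd f2 hf2 j
    have heq : (L.map (tfac (ext f1))).prod = (L.map (tfac (ext f2))).prod := by
      rw [← BstarProd_eq, ← BstarProd_eq]
      exact hg12
    have hvals := prod_tfac_inj L (idxL_pairwise n k) hb1 hb2 heq
    funext j hj
    have hjL : j ∈ L := List.mem_toFinset.1 hj
    have := hvals j hjL
    rwa [hext_mem f1 j hj, hext_mem f2 j hj] at this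
  rw [hcard, hFdef, Finset.card_pi]
  simp only [Finset.card_range]
  rw [List.prod_toFinset _ (idxL_nodup n k)]
  have hP := idxL_prod_succ n k h
  have hpos : 0 < 2 ^ k * k.factorial :=
    Nat.mul_pos (Nat.pow_pos (by norm_num)) k.factorial_pos
  have hmul : n.factorial = ((L.map (fun j => j + 1)).prod) * (2 ^ k * k.factorial) := by
    rw [← hP]; ring
  rw [hmul, Nat.mul_div_cancel _ hpos]
end

section
/- In the q-Brauer algebra Br_n(r,q), for 1 ≤ j ≤ k the identity g_{2j+1} · g⁺_{2,2k+1} g⁻_{1,2k} = g⁺_{2,2k+1} g⁻_{1,2k} · g_{2j-1} holds, where g⁺_{l,m} = g_l g_{l+1} ... g_m and g⁻_{l,m} = g_l^{-1} g_{l+1}^{-1} ... g_m^{-1} for l ≤ m. -/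
/-- The `q`-Brauer algebra `Br_n(r, q)` (in the sense of Wenzl): an algebra `A` over a commutative
ring `R` with invertible parameters `q`, `r` and `δ = (r−1)/(q−1)`, with generators
`g_1, …, g_{n-1}` (with inverses) and `e`, subject to the Hecke relations (H) for the `g_i`,
`(E₁)`: `e² = ((r−1)/(q−1)) e`, `(E₂)`: `e g_i = g_i e` for `i > 2`, `e g_1 = g_1 e = q e`,
`e g_2 e = r e`, `e g_2⁻¹ e = q⁻¹ e`, and `(E₃)` involving
`e_{(2)} = e (g_2 g_3 g_1⁻¹ g_2⁻¹) e`. -/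
structure QBrauer (R : Type) [CommRing R] (q r δ : Rˣ) (n : ℕ)
    (A : Type) [Ring A] [Algebra R A] where
  g : ℕ → A
  ginv : ℕ → A
  e : A
  param : ((q : R) - 1) * (δ : R) = (r : R) - 1
  mul_ginv : ∀ i, 1 ≤ i → i < n → g i * ginv i = 1
  ginv_mul : ∀ i, 1 ≤ i → i < n → ginv i * g i = 1
  braid : ∀ i, 1 ≤ i → i + 1 < n → g i * g (i+1) * g i = g (i+1) * g i * g (i+1)
  gcomm : ∀ i j, 1 ≤ i → i + 1 < j → j < n → g i * g j = g j * g i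
  quad : ∀ i, 1 ≤ i → i < n → g i * g i = ((q : R) - 1) • g i + (q : R) • (1 : A)
  esq : e * e = (δ : R) • e
  e_g : ∀ i, 2 < i → i < n → e * g i = g i * e
  e_g1 : e * g 1 = (q : R) • e
  g1_e : g 1 * e = (q : R) • e
  e_g2_e : e * g 2 * e = (r : R) • e
  e_g2inv_e : e * ginv 2 * e = ((q⁻¹ : Rˣ) : R) • e
  E3_left : 4 ≤ n →
    g 2 * g 3 * ginv 1 * ginv 2 * (e * (g 2 * g 3 * ginv 1 * ginv 2) * e)
      = e * (g 2 * g 3 * ginv 1 * ginv 2) * e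
  E3_right : 4 ≤ n →
    (e * (g 2 * g 3 * ginv 1 * ginv 2) * e) * (g 2 * g 3 * ginv 1 * ginv 2)
      = e * (g 2 * g 3 * ginv 1 * ginv 2) * e

variable {R : Type} [CommRing R] {q r δ : Rˣ} {n : ℕ} {A : Type} [Ring A] [Algebra R A]

/-- `g⁺_{l,m} = g_l g_{l+1} ⋯ g_m` (for `l ≤ m`; ascending indices). -/
def gp (b : QBrauer R q r δ n A) (l m : ℕ) : A :=
  ((List.range' l (m + 1 - l)).map b.g).prod

/-- `g⁻_{l,m} = g_l⁻¹ g_{l+1}⁻¹ ⋯ g_m⁻¹` (for `l ≤ m`; ascending indices). -/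
def gm (b : QBrauer R q r δ n A) (l m : ℕ) : A :=
  ((List.range' l (m + 1 - l)).map b.ginv).prod

/-- `g⁺_{m,l} = g_m g_{m-1} ⋯ g_l` (for `m ≥ l`; descending indices). -/
def gpd (b : QBrauer R q r δ n A) (m l : ℕ) : A :=
  (((List.range' l (m + 1 - l)).map b.g).reverse).prod

/-- `g⁻_{m,l} = g_m⁻¹ g_{m-1}⁻¹ ⋯ g_l⁻¹` (for `m ≥ l`; descending indices). -/
def gmd (b : QBrauer R q r δ n A) (m l : ℕ) : A :=
  (((List.range' l (m + 1 - l)).map b.ginv).reverse).prod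

/-- The elements `e_{(k)}`, defined inductively by `e_{(1)} = e` and
`e_{(k+1)} = e g⁺_{2,2k+1} g⁻_{1,2k} e_{(k)}`. -/
def ee (b : QBrauer R q r δ n A) : ℕ → A
  | 0 => 1
  | 1 => b.e
  | (k+2) => b.e * gp b 2 (2*(k+1)+1) * gm b 1 (2*(k+1)) * ee b (k+1)

-- auxiliary lemmas
section Aux
variable (b : QBrauer R q r δ n A)

lemma commute_g_g {i t : ℕ} (hi : 1 ≤ i) (hit : i + 1 < t) (ht : t < n) :
    Commute (b.g t) (b.g i) := (b.gcomm i t hi hit ht).symm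

lemma commute_of_inv {a x x' : A} (hx : x * x' = 1) (hx' : x' * x = 1)
    (h : Commute a x) : Commute a x' := by
  show a * x' = x' * a
  calc a * x' = x' * x * (a * x') := by rw [hx', one_mul]
    _ = x' * (x * a * x') := by noncomm_ring
    _ = x' * (a * x * x') := by rw [← h.eq]
    _ = x' * a := by rw [mul_assoc a, hx, mul_one]

lemma braid_inv_abstract {x y x' y' : A}
    (hxx : x * x' = 1) (hx'x : x' * x = 1) (hyy : y * y' = 1) (hy'y : y' * y = 1)
    (hb : x * y * x = y * x * y) :
    y * (x' * y') = (x' * y') * x := by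
  have h1 : x * y * x' = y' * (x * y) := by
    have h2 : y' * (x * y * x) * x' = y' * (y * x * y) * x' := by rw [hb]
    calc x * y * x' = y' * y * (x * y) * x' := by rw [hy'y, one_mul]
      _ = y' * (y * x * y) * x' := by noncomm_ring
      _ = y' * (x * y * x) * x' := by rw [hb]
      _ = y' * (x * y) * (x * x') := by noncomm_ring
      _ = y' * (x * y) := by rw [hxx, mul_one]
  calc y * (x' * y') = x' * x * y * x' * y' := by rw [hx'x]; noncomm_ring
    _ = x' * (x * y * x') * y' := by noncomm_ring
    _ = x' * (y' * (x * y)) * y' := by rw [h1]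
    _ = x' * y' * x * (y * y') := by noncomm_ring
    _ = (x' * y') * x := by rw [hyy, mul_one]

lemma gp_shift {l i m : ℕ} (hl : 1 ≤ l) (hli : l ≤ i) (him : i + 1 ≤ m) (hm : m < n) :
    b.g (i + 1) * gp b l m = gp b l m * b.g i := by
  have hsplit : List.range' l (m + 1 - l)
      = (List.range' l (i - l) ++ List.range' i 2) ++ List.range' (i + 2) (m - 1 - i) := by
    rw [show List.range' i 2 = List.range' (l + (i - l)) 2 by congr 1; omega,
      List.range'_append_1,
      show List.range' (i + 2) (m - 1 - i) = List.range' (l + (i - l + 2)) (m - 1 - i) by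
        congr 1; omega,
      List.range'_append_1]
    congr 1; omega
  have hmid : List.range' i 2 = [i, i + 1] := rfl
  have hc1 : Commute (b.g (i + 1)) (((List.range' l (i - l)).map b.g).prod) := by
    apply Commute.list_prod_right
    intro y hy
    simp only [List.mem_map, List.mem_range'_1] at hy
    obtain ⟨t, ⟨ht1, ht2⟩, rfl⟩ := hy
    exact commute_g_g b (le_trans hl ht1) (by omega) (by omega)
  have hc2 : Commute (b.g i) (((List.range' (i + 2) (m - 1 - i)).map b.g).prod) := by
    apply Commute.list_prod_right
    intro y hy
    simp only [List.mem_map, List.mem_range'_1] at hy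
    obtain ⟨t, ⟨ht1, ht2⟩, rfl⟩ := hy
    exact b.gcomm i t (le_trans hl hli) (by omega) (by omega)
  have hbr : b.g (i + 1) * (b.g i * b.g (i + 1)) = (b.g i * b.g (i + 1)) * b.g i := by
    rw [← mul_assoc, ← b.braid i (le_trans hl hli) (by omega)]
  unfold gp
  rw [hsplit, List.map_append, List.map_append, List.prod_append, List.prod_append, hmid]
  simp only [List.map_cons, List.map_nil, List.prod_cons, List.prod_nil, mul_one]
  calc b.g (i+1) * (((List.range' l (i-l)).map b.g).prod * (b.g i * b.g (i+1))
        * ((List.range' (i+2) (m-1-i)).map b.g).prod)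
      = (b.g (i+1) * ((List.range' l (i-l)).map b.g).prod) * (b.g i * b.g (i+1))
        * ((List.range' (i+2) (m-1-i)).map b.g).prod := by noncomm_ring
    _ = ((List.range' l (i-l)).map b.g).prod * (b.g (i+1) * (b.g i * b.g (i+1)))
        * ((List.range' (i+2) (m-1-i)).map b.g).prod := by rw [hc1.eq]; noncomm_ring
    _ = ((List.range' l (i-l)).map b.g).prod * (b.g i * b.g (i+1))
        * (b.g i * ((List.range' (i+2) (m-1-i)).map b.g).prod) := by rw [hbr]; noncomm_ring
    _ = ((List.range' l (i-l)).map b.g).prod * (b.g i * b.g (i+1))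
        * ((List.range' (i+2) (m-1-i)).map b.g).prod * b.g i := by rw [hc2.eq]; noncomm_ring

lemma gm_shift {l i m : ℕ} (hl : 1 ≤ l) (hli : l ≤ i) (him : i + 1 ≤ m) (hm : m < n) :
    b.g (i + 1) * gm b l m = gm b l m * b.g i := by
  have hsplit : List.range' l (m + 1 - l)
      = (List.range' l (i - l) ++ List.range' i 2) ++ List.range' (i + 2) (m - 1 - i) := by
    rw [show List.range' i 2 = List.range' (l + (i - l)) 2 by congr 1; omega,
      List.range'_append_1,
      show List.range' (i + 2) (m - 1 - i) = List.range' (l + (i - l + 2)) (m - 1 - i) by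
        congr 1; omega,
      List.range'_append_1]
    congr 1; omega
  have hmid : List.range' i 2 = [i, i + 1] := rfl
  have hc1 : Commute (b.g (i + 1)) (((List.range' l (i - l)).map b.ginv).prod) := by
    apply Commute.list_prod_right
    intro y hy
    simp only [List.mem_map, List.mem_range'_1] at hy
    obtain ⟨t, ⟨ht1, ht2⟩, rfl⟩ := hy
    exact commute_of_inv (b.mul_ginv t (le_trans hl ht1) (by omega))
      (b.ginv_mul t (le_trans hl ht1) (by omega))
      (commute_g_g b (le_trans hl ht1) (by omega) (by omega))
  have hc2 : Commute (b.g i) (((List.range' (i + 2) (m - 1 - i)).map b.ginv).prod) := by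
    apply Commute.list_prod_right
    intro y hy
    simp only [List.mem_map, List.mem_range'_1] at hy
    obtain ⟨t, ⟨ht1, ht2⟩, rfl⟩ := hy
    exact commute_of_inv (b.mul_ginv t (by omega) (by omega))
      (b.ginv_mul t (by omega) (by omega))
      (b.gcomm i t (le_trans hl hli) (by omega) (by omega))
  have hbr : b.g (i + 1) * (b.ginv i * b.ginv (i + 1)) = (b.ginv i * b.ginv (i + 1)) * b.g i :=
    braid_inv_abstract (b.mul_ginv i (le_trans hl hli) (by omega))
      (b.ginv_mul i (le_trans hl hli) (by omega))
      (b.mul_ginv (i+1) (by omega) (by omega)) (b.ginv_mul (i+1) (by omega) (by omega))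
      (b.braid i (le_trans hl hli) (by omega))
  unfold gm
  rw [hsplit, List.map_append, List.map_append, List.prod_append, List.prod_append, hmid]
  simp only [List.map_cons, List.map_nil, List.prod_cons, List.prod_nil, mul_one]
  calc b.g (i+1) * (((List.range' l (i-l)).map b.ginv).prod * (b.ginv i * b.ginv (i+1))
        * ((List.range' (i+2) (m-1-i)).map b.ginv).prod)
      = (b.g (i+1) * ((List.range' l (i-l)).map b.ginv).prod) * (b.ginv i * b.ginv (i+1))
        * ((List.range' (i+2) (m-1-i)).map b.ginv).prod := by noncomm_ring
    _ = ((List.range' l (i-l)).map b.ginv).prod * (b.g (i+1) * (b.ginv i * b.ginv (i+1)))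
        * ((List.range' (i+2) (m-1-i)).map b.ginv).prod := by rw [hc1.eq]; noncomm_ring
    _ = ((List.range' l (i-l)).map b.ginv).prod * (b.ginv i * b.ginv (i+1))
        * (b.g i * ((List.range' (i+2) (m-1-i)).map b.ginv).prod) := by rw [hbr]; noncomm_ring
    _ = ((List.range' l (i-l)).map b.ginv).prod * (b.ginv i * b.ginv (i+1))
        * ((List.range' (i+2) (m-1-i)).map b.ginv).prod * b.g i := by rw [hc2.eq]; noncomm_ring

end Aux

/-- Lemma 3.3(a): for `1 ≤ j ≤ k`,
`g_{2j+1} ⋅ g⁺_{2,2k+1} g⁻_{1,2k} = g⁺_{2,2k+1} g⁻_{1,2k} ⋅ g_{2j-1}`. -/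
theorem g_conj_identity (b : QBrauer R q r δ n A) (j k : ℕ)
    (hj : 1 ≤ j) (hjk : j ≤ k) (hk : 2*k + 1 < n) :
    b.g (2*j+1) * (gp b 2 (2*k+1) * gm b 1 (2*k))
      = (gp b 2 (2*k+1) * gm b 1 (2*k)) * b.g (2*j-1) := by
  have h1 : b.g (2*j+1) * gp b 2 (2*k+1) = gp b 2 (2*k+1) * b.g (2*j) :=
    gp_shift b (by omega) (by omega) (by omega) (by omega)
  have h2 : b.g (2*j) * gm b 1 (2*k) = gm b 1 (2*k) * b.g (2*j-1) := by
    have := gm_shift b (l := 1) (i := 2*j-1) (m := 2*k) (by omega) (by omega) (by omega) (by omega)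
    rwa [show 2*j-1+1 = 2*j by omega] at this
  rw [← mul_assoc, h1, mul_assoc, h2, mul_assoc]
end

section
/- In the q-Brauer algebra Br_n(r,q), the element e_{(k+1)} admits the alternative expression e_{(k+1)} = e_{(k)} · g⁻_{2k,1} g⁺_{2k+1,2} · e, where g⁻_{2k,1} = g_{2k}^{-1} g_{2k-1}^{-1}...g_1^{-1} and g⁺_{2k+1,2} = g_{2k+1} g_{2k}...g_2. -/
variable {R : Type} [CommRing R] {q r δ : Rˣ} {n : ℕ} {A : Type} [Ring A] [Algebra R A]

section Infra
variable (b : QBrauer R q r δ n A)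

/-! ### Basic cancellation and commutation helpers -/

lemma gg' {i : ℕ} (h1 : 1 ≤ i) (h2 : i < n) (x : A) : b.g i * (b.ginv i * x) = x := by
  rw [← mul_assoc, b.mul_ginv i h1 h2, one_mul]

lemma gig' {i : ℕ} (h1 : 1 ≤ i) (h2 : i < n) (x : A) : b.ginv i * (b.g i * x) = x := by
  rw [← mul_assoc, b.ginv_mul i h1 h2, one_mul]

lemma comm_pull {x y : A} (h : Commute x y) (z : A) : x * (y * z) = y * (x * z) := by
  rw [← mul_assoc, h.eq, mul_assoc]

lemma comm_ginv_of_comm_g {x : A} {j : ℕ} (h1 : 1 ≤ j) (h2 : j < n)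
    (hc : Commute x (b.g j)) : Commute x (b.ginv j) := by
  show x * b.ginv j = b.ginv j * x
  calc x * b.ginv j
      = b.ginv j * (b.g j * (x * b.ginv j)) := (gig' b h1 h2 _).symm
    _ = b.ginv j * (x * (b.g j * b.ginv j)) := by rw [comm_pull hc.symm]
    _ = b.ginv j * x := by rw [b.mul_ginv j h1 h2, mul_one]

lemma comm_gg {i j : ℕ} (hi : 1 ≤ i) (hj : 1 ≤ j) (hin : i < n) (hjn : j < n)
    (hd : i + 2 ≤ j ∨ j + 2 ≤ i) : Commute (b.g i) (b.g j) := by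
  rcases hd with h | h
  · exact b.gcomm i j hi (by omega) hjn
  · exact (b.gcomm j i hj (by omega) hin).symm

lemma comm_e_g' {i : ℕ} (h : 3 ≤ i) (h2 : i < n) : Commute b.e (b.g i) :=
  b.e_g i (by omega) h2

lemma comm_e_g1 : Commute b.e (b.g 1) := by
  show b.e * b.g 1 = b.g 1 * b.e
  rw [b.e_g1, b.g1_e]

lemma comm_e_ginv' {i : ℕ} (h : 3 ≤ i) (h2 : i < n) : Commute b.e (b.ginv i) :=
  comm_ginv_of_comm_g b (by omega) h2 (comm_e_g' b h h2)

lemma comm_e_ginv1 (h2 : 1 < n) : Commute b.e (b.ginv 1) :=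
  comm_ginv_of_comm_g b (by omega) h2 (comm_e_g1 b)

/-! ### Scalar helpers -/

lemma qinv_q : ((q⁻¹ : Rˣ) : R) * (q : R) = 1 := by
  rw [← Units.val_mul, inv_mul_cancel, Units.val_one]

lemma q_qinv : (q : R) * ((q⁻¹ : Rˣ) : R) = 1 := by
  rw [← Units.val_mul, mul_inv_cancel, Units.val_one]

/-- right multiplication eigenrelation transfers to the inverse -/
lemma smul_right_inv {x : A} {i : ℕ} (h1 : 1 ≤ i) (h2 : i < n) {c : Rˣ}
    (h : x * b.g i = (c : R) • x) : x * b.ginv i = ((c⁻¹ : Rˣ) : R) • x := by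
  have hx : x = (c : R) • (x * b.ginv i) := by
    conv_lhs => rw [← mul_one x, ← b.mul_ginv i h1 h2, ← mul_assoc, h, smul_mul_assoc]
  calc x * b.ginv i = (((c⁻¹ : Rˣ) : R) * (c : R)) • (x * b.ginv i) := by
        rw [← Units.val_mul, inv_mul_cancel, Units.val_one, one_smul]
    _ = ((c⁻¹ : Rˣ) : R) • ((c : R) • (x * b.ginv i)) := by rw [mul_smul]
    _ = ((c⁻¹ : Rˣ) : R) • x := by rw [← hx]

lemma smul_left_inv {x : A} {i : ℕ} (h1 : 1 ≤ i) (h2 : i < n) {c : Rˣ}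
    (h : b.g i * x = (c : R) • x) : b.ginv i * x = ((c⁻¹ : Rˣ) : R) • x := by
  have hx : x = (c : R) • (b.ginv i * x) := by
    conv_lhs => rw [← one_mul x, ← b.ginv_mul i h1 h2, mul_assoc, h, mul_smul_comm]
  calc b.ginv i * x = (((c⁻¹ : Rˣ) : R) * (c : R)) • (b.ginv i * x) := by
        rw [← Units.val_mul, inv_mul_cancel, Units.val_one, one_smul]
    _ = ((c⁻¹ : Rˣ) : R) • ((c : R) • (b.ginv i * x)) := by rw [mul_smul]
    _ = ((c⁻¹ : Rˣ) : R) • x := by rw [← hx]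

lemma ginv_expand {i : ℕ} (h1 : 1 ≤ i) (h2 : i < n) :
    b.ginv i = ((q⁻¹ : Rˣ) : R) • b.g i - (((q⁻¹ : Rˣ) : R) * ((q : R) - 1)) • (1 : A) := by
  set c : R := ((q⁻¹ : Rˣ) : R) with hc
  have key : b.g i * (c • b.g i - (c * ((q : R) - 1)) • (1 : A)) = 1 := by
    rw [mul_sub, mul_smul_comm, mul_smul_comm, mul_one, b.quad i h1 h2, smul_add,
      smul_smul, smul_smul, mul_comm c ((q:R) - 1)]
    rw [add_sub_cancel_left, mul_comm c (q:R), q_qinv, one_smul]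
  calc b.ginv i = b.ginv i * (b.g i * (c • b.g i - (c * ((q : R) - 1)) • (1 : A))) := by
        rw [key, mul_one]
    _ = c • b.g i - (c * ((q : R) - 1)) • (1 : A) := by
        rw [← mul_assoc, b.ginv_mul i h1 h2, one_mul]

/-- substitute `ginv i` in the middle of a product -/
lemma mul_ginv_mul {i : ℕ} (h1 : 1 ≤ i) (h2 : i < n) (x y : A) :
    x * b.ginv i * y = ((q⁻¹ : Rˣ) : R) • (x * b.g i * y)
      - (((q⁻¹ : Rˣ) : R) * ((q : R) - 1)) • (x * y) := by
  rw [ginv_expand b h1 h2, mul_sub, sub_mul, mul_smul_comm, smul_mul_assoc,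
    mul_smul_comm, smul_mul_assoc, mul_one]

end Infra

section Words
variable (b : QBrauer R q r δ n A)

/-! ### Splitting lemmas for the words `gp, gm, gpd, gmd` -/

lemma gp_empty {l m : ℕ} (h : m + 1 ≤ l) : gp b l m = 1 := by
  unfold gp; rw [Nat.sub_eq_zero_of_le h]; rfl

lemma gm_empty {l m : ℕ} (h : m + 1 ≤ l) : gm b l m = 1 := by
  unfold gm; rw [Nat.sub_eq_zero_of_le h]; rfl

lemma gpd_empty {l m : ℕ} (h : m + 1 ≤ l) : gpd b m l = 1 := by
  unfold gpd; rw [Nat.sub_eq_zero_of_le h]; rfl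

lemma gmd_empty {l m : ℕ} (h : m + 1 ≤ l) : gmd b m l = 1 := by
  unfold gmd; rw [Nat.sub_eq_zero_of_le h]; rfl

lemma range'_concat' (l m : ℕ) (h : l ≤ m + 1) :
    List.range' l (m + 2 - l) = List.range' l (m + 1 - l) ++ [m + 1] := by
  have h1 : m + 2 - l = (m + 1 - l) + 1 := by omega
  rw [h1]
  have := List.range'_concat (step := 1) (s := l) (n := m + 1 - l)
  simpa [show l + (m + 1 - l) = m + 1 by omega] using this

lemma range'_cons' (l m : ℕ) (h : l ≤ m) :
    List.range' l (m + 1 - l) = l :: List.range' (l + 1) (m - l) := by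
  have h1 : m + 1 - l = (m - l) + 1 := by omega
  rw [h1]
  have := List.range'_succ (step := 1) (s := l) (n := m - l)
  simpa using this

lemma gp_concat {l m : ℕ} (h : l ≤ m + 1) : gp b l (m + 1) = gp b l m * b.g (m + 1) := by
  unfold gp; rw [range'_concat' l m h, List.map_append, List.prod_append]; simp

lemma gp_cons {l m : ℕ} (h : l ≤ m) : gp b l m = b.g l * gp b (l + 1) m := by
  unfold gp
  rw [range'_cons' l m h, List.map_cons, List.prod_cons]
  have : m + 1 - (l + 1) = m - l := by omega
  rw [this]

lemma gm_concat {l m : ℕ} (h : l ≤ m + 1) : gm b l (m + 1) = gm b l m * b.ginv (m + 1) := by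
  unfold gm; rw [range'_concat' l m h, List.map_append, List.prod_append]; simp

lemma gm_cons {l m : ℕ} (h : l ≤ m) : gm b l m = b.ginv l * gm b (l + 1) m := by
  unfold gm
  rw [range'_cons' l m h, List.map_cons, List.prod_cons]
  have : m + 1 - (l + 1) = m - l := by omega
  rw [this]

lemma gpd_concat {l m : ℕ} (h : l ≤ m + 1) : gpd b (m + 1) l = b.g (m + 1) * gpd b m l := by
  unfold gpd
  rw [range'_concat' l m h, List.map_append, List.reverse_append, List.prod_append]; simp

lemma gpd_cons {l m : ℕ} (h : l ≤ m) : gpd b m l = gpd b m (l + 1) * b.g l := by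
  unfold gpd
  rw [range'_cons' l m h, List.map_cons, List.reverse_cons, List.prod_append]
  have : m + 1 - (l + 1) = m - l := by omega
  rw [this]; simp

lemma gmd_concat {l m : ℕ} (h : l ≤ m + 1) : gmd b (m + 1) l = b.ginv (m + 1) * gmd b m l := by
  unfold gmd
  rw [range'_concat' l m h, List.map_append, List.reverse_append, List.prod_append]; simp

lemma gmd_cons {l m : ℕ} (h : l ≤ m) : gmd b m l = gmd b m (l + 1) * b.ginv l := by
  unfold gmd
  rw [range'_cons' l m h, List.map_cons, List.reverse_cons, List.prod_append]
  have : m + 1 - (l + 1) = m - l := by omega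
  rw [this]; simp

/-! ### Commutation with words -/

lemma comm_gp {x : A} (l m : ℕ) (h : ∀ j, l ≤ j → j ≤ m → Commute x (b.g j)) :
    Commute x (gp b l m) := by
  unfold gp
  apply Commute.list_prod_right
  intro y hy
  simp only [List.mem_map, List.mem_range'_1] at hy
  obtain ⟨j, ⟨hj1, hj2⟩, rfl⟩ := hy
  exact h j hj1 (by omega)

lemma comm_gm {x : A} (l m : ℕ) (h : ∀ j, l ≤ j → j ≤ m → Commute x (b.ginv j)) :
    Commute x (gm b l m) := by
  unfold gm
  apply Commute.list_prod_right
  intro y hy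
  simp only [List.mem_map, List.mem_range'_1] at hy
  obtain ⟨j, ⟨hj1, hj2⟩, rfl⟩ := hy
  exact h j hj1 (by omega)

lemma comm_gpd {x : A} (l m : ℕ) (h : ∀ j, l ≤ j → j ≤ m → Commute x (b.g j)) :
    Commute x (gpd b m l) := by
  unfold gpd
  apply Commute.list_prod_right
  intro y hy
  simp only [List.mem_reverse, List.mem_map, List.mem_range'_1] at hy
  obtain ⟨j, ⟨hj1, hj2⟩, rfl⟩ := hy
  exact h j hj1 (by omega)

lemma comm_gmd {x : A} (l m : ℕ) (h : ∀ j, l ≤ j → j ≤ m → Commute x (b.ginv j)) :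
    Commute x (gmd b m l) := by
  unfold gmd
  apply Commute.list_prod_right
  intro y hy
  simp only [List.mem_reverse, List.mem_map, List.mem_range'_1] at hy
  obtain ⟨j, ⟨hj1, hj2⟩, rfl⟩ := hy
  exact h j hj1 (by omega)

/-- `g i` commutes with `gp l m` when `i` is out of contact range. -/
lemma comm_g_gp {i l m : ℕ} (hi : 1 ≤ i) (hin : i < n) (hl : 1 ≤ l) (hmn : m < n)
    (hd : i + 2 ≤ l ∨ m + 2 ≤ i) : Commute (b.g i) (gp b l m) :=
  comm_gp b l m (fun j hj1 hj2 => comm_gg b hi (by omega) hin (by omega) (by omega))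

lemma comm_g_gm {i l m : ℕ} (hi : 1 ≤ i) (hin : i < n) (hl : 1 ≤ l) (hmn : m < n)
    (hd : i + 2 ≤ l ∨ m + 2 ≤ i) : Commute (b.g i) (gm b l m) :=
  comm_gm b l m (fun j hj1 hj2 =>
    comm_ginv_of_comm_g b (by omega) (by omega)
      (comm_gg b hi (by omega) hin (by omega) (by omega)))

lemma comm_g_gpd {i l m : ℕ} (hi : 1 ≤ i) (hin : i < n) (hl : 1 ≤ l) (hmn : m < n)
    (hd : i + 2 ≤ l ∨ m + 2 ≤ i) : Commute (b.g i) (gpd b m l) :=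
  comm_gpd b l m (fun j hj1 hj2 => comm_gg b hi (by omega) hin (by omega) (by omega))

lemma comm_g_gmd {i l m : ℕ} (hi : 1 ≤ i) (hin : i < n) (hl : 1 ≤ l) (hmn : m < n)
    (hd : i + 2 ≤ l ∨ m + 2 ≤ i) : Commute (b.g i) (gmd b m l) :=
  comm_gmd b l m (fun j hj1 hj2 =>
    comm_ginv_of_comm_g b (by omega) (by omega)
      (comm_gg b hi (by omega) hin (by omega) (by omega)))

lemma comm_e_gp {l m : ℕ} (hl : 3 ≤ l) (hmn : m < n) : Commute b.e (gp b l m) :=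
  comm_gp b l m (fun j hj1 hj2 => comm_e_g' b (by omega) (by omega))

lemma comm_e_gm {l m : ℕ} (hl : 3 ≤ l) (hmn : m < n) : Commute b.e (gm b l m) :=
  comm_gm b l m (fun j hj1 hj2 => comm_e_ginv' b (by omega) (by omega))

lemma comm_e_gpd {l m : ℕ} (hl : 3 ≤ l) (hmn : m < n) : Commute b.e (gpd b m l) :=
  comm_gpd b l m (fun j hj1 hj2 => comm_e_g' b (by omega) (by omega))

lemma comm_e_gmd {l m : ℕ} (hl : 3 ≤ l) (hmn : m < n) : Commute b.e (gmd b m l) :=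
  comm_gmd b l m (fun j hj1 hj2 => comm_e_ginv' b (by omega) (by omega))

end Words

section Conj
variable (b : QBrauer R q r δ n A)

/-- general tool: pull a semi-conjugation through a product -/
lemma sconj_pull {x y z : A} (h : x * y = y * z) (w : A) : x * (y * w) = y * (z * w) := by
  rw [← mul_assoc, h, mul_assoc]

lemma braid' {i : ℕ} (h1 : 1 ≤ i) (h2 : i + 1 < n) :
    b.g i * (b.g (i+1) * b.g i) = b.g (i+1) * (b.g i * b.g (i+1)) := by
  have := b.braid i h1 h2; simp only [mul_assoc] at this; exact this

lemma conj1 {i : ℕ} (h1 : 1 ≤ i) (h2 : i + 1 < n) :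
    b.g i * (b.g (i+1) * b.ginv i) = b.ginv (i+1) * (b.g i * b.g (i+1)) := by
  calc b.g i * (b.g (i+1) * b.ginv i)
      = b.ginv (i+1) * (b.g (i+1) * (b.g i * (b.g (i+1) * b.ginv i))) :=
        (gig' b (by omega) h2 _).symm
    _ = b.ginv (i+1) * (b.g (i+1) * (b.g i * b.g (i+1)) * b.ginv i) := by
        simp only [mul_assoc]
    _ = b.ginv (i+1) * (b.g i * (b.g (i+1) * b.g i) * b.ginv i) := by
        rw [← braid' b h1 h2]
    _ = b.ginv (i+1) * (b.g i * (b.g (i+1) * (b.g i * b.ginv i))) := by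
        simp only [mul_assoc]
    _ = b.ginv (i+1) * (b.g i * b.g (i+1)) := by
        rw [b.mul_ginv i h1 (by omega), mul_one]

lemma conj2' {i : ℕ} (h1 : 1 ≤ i) (h2 : i + 1 < n) :
    b.ginv i * (b.g (i+1) * b.g i) = b.g (i+1) * (b.g i * b.ginv (i+1)) := by
  calc b.ginv i * (b.g (i+1) * b.g i)
      = b.ginv i * (b.g (i+1) * (b.g i * (b.g (i+1) * b.ginv (i+1)))) := by
        rw [b.mul_ginv (i+1) (by omega) h2, mul_one]
    _ = b.ginv i * (b.g (i+1) * (b.g i * b.g (i+1)) * b.ginv (i+1)) := by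
        simp only [mul_assoc]
    _ = b.ginv i * (b.g i * (b.g (i+1) * b.g i) * b.ginv (i+1)) := by
        rw [← braid' b h1 h2]
    _ = b.ginv i * (b.g i * ((b.g (i+1) * b.g i) * b.ginv (i+1))) := by
        simp only [mul_assoc]
    _ = b.g (i+1) * (b.g i * b.ginv (i+1)) := by
        rw [gig' b h1 (by omega), mul_assoc]

lemma conj3 {i : ℕ} (h1 : 1 ≤ i) (h2 : i + 1 < n) :
    b.g (i+1) * (b.ginv i * b.ginv (i+1)) = b.ginv i * (b.ginv (i+1) * b.g i) := by
  calc b.g (i+1) * (b.ginv i * b.ginv (i+1))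
      = b.ginv i * (b.g i * (b.g (i+1) * (b.ginv i * b.ginv (i+1)))) :=
        (gig' b h1 (by omega) _).symm
    _ = b.ginv i * (b.g i * (b.g (i+1) * b.ginv i) * b.ginv (i+1)) := by
        simp only [mul_assoc]
    _ = b.ginv i * (b.ginv (i+1) * (b.g i * b.g (i+1)) * b.ginv (i+1)) := by
        rw [conj1 b h1 h2]
    _ = b.ginv i * (b.ginv (i+1) * (b.g i * (b.g (i+1) * b.ginv (i+1)))) := by
        simp only [mul_assoc]
    _ = b.ginv i * (b.ginv (i+1) * b.g i) := by
        rw [b.mul_ginv (i+1) (by omega) h2, mul_one]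

lemma conj4 {i : ℕ} (h1 : 1 ≤ i) (h2 : i + 1 < n) :
    b.ginv (i+1) * (b.ginv i * b.g (i+1)) = b.g i * (b.ginv (i+1) * b.ginv i) := by
  calc b.ginv (i+1) * (b.ginv i * b.g (i+1))
      = b.ginv (i+1) * (b.ginv i * (b.g (i+1) * (b.g i * b.ginv i))) := by
        rw [b.mul_ginv i h1 (by omega), mul_one]
    _ = b.ginv (i+1) * (b.ginv i * (b.g (i+1) * b.g i) * b.ginv i) := by
        simp only [mul_assoc]
    _ = b.ginv (i+1) * (b.g (i+1) * (b.g i * b.ginv (i+1)) * b.ginv i) := by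
        rw [conj2' b h1 h2]
    _ = b.ginv (i+1) * (b.g (i+1) * (b.g i * (b.ginv (i+1) * b.ginv i))) := by
        simp only [mul_assoc]
    _ = b.g i * (b.ginv (i+1) * b.ginv i) := by
        rw [gig' b (by omega) h2]

/-! ### Conjugation of a generator through the long words -/

lemma g_gp_conj : ∀ m j l : ℕ, 1 ≤ l → l + 1 ≤ j → j ≤ m → m < n →
    b.g j * gp b l m = gp b l m * b.g (j - 1) := by
  intro m
  induction m using Nat.strong_induction_on with
  | _ m ih =>
    intro j l hl hj1 hj2 hmn
    obtain ⟨m', rfl⟩ : ∃ m', m = m' + 1 := ⟨m - 1, by omega⟩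
    by_cases hcase : j ≤ m'
    · rw [gp_concat b (by omega), ← mul_assoc, ih m' (by omega) j l hl hj1 hcase (by omega),
        mul_assoc,
        (comm_gg b (i := j - 1) (j := m' + 1) (by omega) (by omega) (by omega) (by omega)
          (by omega)).eq,
        ← mul_assoc]
    · have hj : j = m' + 1 := by omega
      subst hj
      obtain ⟨t, rfl⟩ : ∃ t, m' = t + 1 := ⟨m' - 1, by omega⟩
      have hred : t + 1 + 1 - 1 = t + 1 := by omega
      rw [hred, gp_concat b (m := t + 1) (by omega), gp_concat b (m := t) (by omega)]
      have hc : Commute (b.g (t+2)) (gp b l t) := by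
        rcases Nat.lt_or_ge l (t + 1) with hlt | hge
        · exact comm_g_gp b (by omega) (by omega) hl (by omega) (by omega)
        · rw [gp_empty b (by omega)]; exact Commute.one_right _
      simp only [← mul_assoc]
      rw [show b.g (t+1+1) * gp b l t = gp b l t * b.g (t+1+1) from hc.eq]
      simp only [mul_assoc]
      rw [← braid' b (by omega) (by omega)]

/-- pull an equation of triple products through a continuation -/
lemma assoc_pull3 {a1 a2 a3 b1 b2 b3 : A} (h : a1 * (a2 * a3) = b1 * (b2 * b3)) (x : A) :
    a1 * (a2 * (a3 * x)) = b1 * (b2 * (b3 * x)) := by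
  have := congrArg (· * x) h
  simpa only [mul_assoc] using this

lemma g_gm_conj : ∀ m j l : ℕ, 1 ≤ l → l + 1 ≤ j → j ≤ m → m < n →
    b.g j * gm b l m = gm b l m * b.g (j - 1) := by
  intro m
  induction m using Nat.strong_induction_on with
  | _ m ih =>
    intro j l hl hj1 hj2 hmn
    obtain ⟨m', rfl⟩ : ∃ m', m = m' + 1 := ⟨m - 1, by omega⟩
    by_cases hcase : j ≤ m'
    · rw [gm_concat b (by omega), ← mul_assoc, ih m' (by omega) j l hl hj1 hcase (by omega),
        mul_assoc,
        (comm_ginv_of_comm_g b (by omega) (by omega)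
          (comm_gg b (i := j - 1) (j := m' + 1) (by omega) (by omega) (by omega) (by omega)
            (by omega))).eq,
        ← mul_assoc]
    · have hj : j = m' + 1 := by omega
      subst hj
      obtain ⟨t, rfl⟩ : ∃ t, m' = t + 1 := ⟨m' - 1, by omega⟩
      have hred : t + 1 + 1 - 1 = t + 1 := by omega
      rw [hred, gm_concat b (m := t + 1) (by omega), gm_concat b (m := t) (by omega)]
      have hc : Commute (b.g (t+2)) (gm b l t) := by
        rcases Nat.lt_or_ge l (t + 1) with hlt | hge
        · exact comm_g_gm b (by omega) (by omega) hl (by omega) (by omega)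
        · rw [gm_empty b (by omega)]; exact Commute.one_right _
      simp only [mul_assoc]
      rw [comm_pull hc, conj3 b (by omega) (by omega)]

lemma gpd_g_conj : ∀ m j l : ℕ, 1 ≤ l → l + 1 ≤ j → j ≤ m → m < n →
    gpd b m l * b.g j = b.g (j - 1) * gpd b m l := by
  intro m
  induction m using Nat.strong_induction_on with
  | _ m ih =>
    intro j l hl hj1 hj2 hmn
    obtain ⟨m', rfl⟩ : ∃ m', m = m' + 1 := ⟨m - 1, by omega⟩
    by_cases hcase : j ≤ m'
    · rw [gpd_concat b (by omega), mul_assoc, ih m' (by omega) j l hl hj1 hcase (by omega),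
        ← mul_assoc,
        (comm_gg b (i := m' + 1) (j := j - 1) (by omega) (by omega) (by omega) (by omega)
          (by omega)).eq,
        mul_assoc]
    · have hj : j = m' + 1 := by omega
      subst hj
      obtain ⟨t, rfl⟩ : ∃ t, m' = t + 1 := ⟨m' - 1, by omega⟩
      have hred : t + 1 + 1 - 1 = t + 1 := by omega
      rw [hred, gpd_concat b (m := t + 1) (by omega), gpd_concat b (m := t) (by omega)]
      have hc : Commute (b.g (t+2)) (gpd b t l) := by
        rcases Nat.lt_or_ge l (t + 1) with hlt | hge
        · exact comm_g_gpd b (by omega) (by omega) hl (by omega) (by omega)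
        · rw [gpd_empty b (by omega)]; exact Commute.one_right _
      simp only [mul_assoc]
      rw [hc.symm.eq, assoc_pull3 (braid' b (by omega) (by omega)).symm]

lemma gmd_g_conj : ∀ m j l : ℕ, 1 ≤ l → l + 1 ≤ j → j ≤ m → m < n →
    gmd b m l * b.g j = b.g (j - 1) * gmd b m l := by
  intro m
  induction m using Nat.strong_induction_on with
  | _ m ih =>
    intro j l hl hj1 hj2 hmn
    obtain ⟨m', rfl⟩ : ∃ m', m = m' + 1 := ⟨m - 1, by omega⟩
    by_cases hcase : j ≤ m'
    · rw [gmd_concat b (by omega), mul_assoc, ih m' (by omega) j l hl hj1 hcase (by omega),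
        ← mul_assoc,
        ← (comm_ginv_of_comm_g b (by omega) (by omega)
            (comm_gg b (i := j - 1) (j := m' + 1) (by omega) (by omega) (by omega) (by omega)
              (by omega))).eq,
        mul_assoc]
    · have hj : j = m' + 1 := by omega
      subst hj
      obtain ⟨t, rfl⟩ : ∃ t, m' = t + 1 := ⟨m' - 1, by omega⟩
      have hred : t + 1 + 1 - 1 = t + 1 := by omega
      rw [hred, gmd_concat b (m := t + 1) (by omega), gmd_concat b (m := t) (by omega)]
      have hc : Commute (b.g (t+2)) (gmd b t l) := by
        rcases Nat.lt_or_ge l (t + 1) with hlt | hge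
        · exact comm_g_gmd b (by omega) (by omega) hl (by omega) (by omega)
        · rw [gmd_empty b (by omega)]; exact Commute.one_right _
      simp only [mul_assoc]
      rw [hc.symm.eq, assoc_pull3 (conj4 b (by omega) (by omega))]

end Conj

section Composite
variable (b : QBrauer R q r δ n A)

/-- the ascending word `A_m = g⁺_{2,2m+1} g⁻_{1,2m}` -/
def Aw (m : ℕ) : A := gp b 2 (2*m+1) * gm b 1 (2*m)

/-- the descending word `B_m = g⁻_{2m,1} g⁺_{2m+1,2}` -/
def Bw (m : ℕ) : A := gmd b (2*m) 1 * gpd b (2*m+1) 2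

/-- the cabled crossing `X_m = g_{2m+2} g_{2m+3} g⁻_{2m+1} g⁻_{2m+2}` -/
def Xw (m : ℕ) : A := b.g (2*m+2) * (b.g (2*m+3) * (b.ginv (2*m+1) * b.ginv (2*m+2)))

/-- the other cabled crossing `Y_m = g⁻_{2m+2} g⁻_{2m+1} g_{2m+3} g_{2m+2}` -/
def Yw (m : ℕ) : A := b.ginv (2*m+2) * (b.ginv (2*m+1) * (b.g (2*m+3) * b.g (2*m+2)))

/-- partial products `X_1 X_2 ⋯ X_{m-1}` -/
def XP1 : ℕ → A
  | 0 => 1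
  | 1 => 1
  | (m+1) => XP1 m * Xw b m

lemma Aw_zero : Aw b 0 = 1 := by
  unfold Aw; rw [gp_empty b (by omega), gm_empty b (by omega), mul_one]

lemma Bw_zero : Bw b 0 = 1 := by
  unfold Bw; rw [gmd_empty b (by omega), gpd_empty b (by omega), mul_one]

lemma Aw_one : Aw b 1 = Xw b 0 := by
  unfold Aw Xw
  rw [show 2*1+1 = 3 by norm_num, show 2*1 = 2 by norm_num]
  rw [gp_cons b (by omega), gp_concat b (m := 2) (by omega), gp_empty b (l := 3) (by omega),
    gm_cons b (by omega), gm_concat b (m := 1) (by omega), gm_empty b (l := 2) (by omega)]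
  simp [mul_assoc]

lemma ee_succ (k : ℕ) : ee b (k+1) = b.e * (Aw b k * ee b k) := by
  match k with
  | 0 => rw [Aw_zero]; simp [ee]
  | (k+1) =>
    show b.e * gp b 2 (2*(k+1)+1) * gm b 1 (2*(k+1)) * ee b (k+1) = _
    unfold Aw
    simp only [mul_assoc]

lemma Aw_succ {m : ℕ} (h : 2*m+3 < n) : Aw b (m+1) = Aw b m * Xw b m := by
  unfold Aw Xw
  have h1 : 2*(m+1)+1 = (2*m+1) + 1 + 1 := by ring
  have h2 : 2*(m+1) = (2*m) + 1 + 1 := by ring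
  rw [h1, h2, gp_concat b (by omega), gp_concat b (by omega),
    gm_concat b (by omega), gm_concat b (by omega)]
  have hc2 : Commute (b.g (2*m+1+1)) (gm b 1 (2*m)) := by
    rcases Nat.eq_zero_or_pos m with rfl | hm
    · rw [gm_empty b (by omega)]; exact Commute.one_right _
    · exact comm_g_gm b (by omega) (by omega) (by omega) (by omega) (by omega)
  have hc3 : Commute (b.g (2*m+1+1+1)) (gm b 1 (2*m)) := by
    rcases Nat.eq_zero_or_pos m with rfl | hm
    · rw [gm_empty b (by omega)]; exact Commute.one_right _
    · exact comm_g_gm b (by omega) (by omega) (by omega) (by omega) (by omega)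
  simp only [mul_assoc]
  rw [comm_pull hc3, comm_pull hc2]

lemma Bw_succ {m : ℕ} (h : 2*m+3 < n) : Bw b (m+1) = Yw b m * Bw b m := by
  unfold Bw Yw
  have h1 : 2*(m+1)+1 = (2*m+1) + 1 + 1 := by ring
  have h2 : 2*(m+1) = (2*m) + 1 + 1 := by ring
  rw [h1, h2, gmd_concat b (by omega), gmd_concat b (by omega),
    gpd_concat b (by omega), gpd_concat b (by omega)]
  have hc2 : Commute (b.g (2*m+1+1)) (gmd b (2*m) 1) := by
    rcases Nat.eq_zero_or_pos m with rfl | hm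
    · rw [gmd_empty b (by omega)]; exact Commute.one_right _
    · exact comm_g_gmd b (by omega) (by omega) (by omega) (by omega) (by omega)
  have hc3 : Commute (b.g (2*m+1+1+1)) (gmd b (2*m) 1) := by
    rcases Nat.eq_zero_or_pos m with rfl | hm
    · rw [gmd_empty b (by omega)]; exact Commute.one_right _
    · exact comm_g_gmd b (by omega) (by omega) (by omega) (by omega) (by omega)
  simp only [mul_assoc]
  rw [comm_pull hc3.symm, comm_pull hc2.symm]

lemma Aw_eq_XP1 : ∀ m : ℕ, 1 ≤ m → 2*m+1 < n → Aw b m = Aw b 1 * XP1 b m := by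
  intro m
  induction m with
  | zero => omega
  | succ m ih =>
    intro _ hn
    rcases Nat.eq_zero_or_pos m with rfl | hm
    · show Aw b 1 = Aw b 1 * XP1 b 1
      rw [show XP1 b 1 = 1 from rfl, mul_one]
    · have hXP : XP1 b (m+1) = XP1 b m * Xw b m := by
        obtain ⟨t, rfl⟩ : ∃ t, m = t + 1 := ⟨m - 1, by omega⟩
        rfl
      rw [Aw_succ b (by omega), ih hm (by omega), hXP, mul_assoc]

lemma comm_e_Xw {i : ℕ} (hi : 1 ≤ i) (hn : 2*i+3 < n) : Commute b.e (Xw b i) := by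
  unfold Xw
  exact ((comm_e_g' b (by omega) (by omega)).mul_right
    ((comm_e_g' b (by omega) (by omega)).mul_right
      ((comm_e_ginv' b (by omega) (by omega)).mul_right
        (comm_e_ginv' b (by omega) (by omega)))))

lemma comm_e_XP1 : ∀ m : ℕ, 2*m+1 < n → Commute b.e (XP1 b m) := by
  intro m
  induction m with
  | zero => intro _; exact Commute.one_right _
  | succ m ih =>
    intro hn
    rcases Nat.eq_zero_or_pos m with rfl | hm
    · exact Commute.one_right _
    · have hXP : XP1 b (m+1) = XP1 b m * Xw b m := by
        obtain ⟨t, rfl⟩ : ∃ t, m = t + 1 := ⟨m - 1, by omega⟩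
        rfl
      rw [hXP]
      exact (ih (by omega)).mul_right (comm_e_Xw b hm (by omega))

/-- `g` commutes with `ee k` when the index is at least `2k+1` -/
lemma comm_g_ee : ∀ k, ∀ {i : ℕ}, 1 ≤ k → 2*k+1 ≤ i → i < n → Commute (b.g i) (ee b k) := by
  intro k
  induction k with
  | zero => omega
  | succ k ih =>
    intro i _ hik hin
    rcases Nat.eq_zero_or_pos k with rfl | hk
    · show Commute (b.g i) (ee b 1)
      exact (comm_e_g' b (by omega) hin).symm
    · rw [ee_succ b k]
      refine ((comm_e_g' b (by omega) hin).symm).mul_right ?_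
      refine Commute.mul_right ?_ (ih hk (by omega) hin)
      unfold Aw
      refine Commute.mul_right ?_ ?_
      · exact comm_g_gp b (by omega) hin (by omega) (by omega) (by omega)
      · exact comm_g_gm b (by omega) hin (by omega) (by omega) (by omega)

lemma comm_ginv_ee (k : ℕ) {i : ℕ} (hk : 1 ≤ k) (hik : 2*k+1 ≤ i) (hin : i < n) :
    Commute (b.ginv i) (ee b k) :=
  (comm_ginv_of_comm_g b (by omega) hin (comm_g_ee b k hk hik hin).symm).symm

end Composite

section ConjComposite
variable (b : QBrauer R q r δ n A)

/-- conjugating a generator through `A_m` shifts its index down by 2 -/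
lemma g_Aw_conj {J m : ℕ} (hJ : 1 ≤ J) (hJm : J + 2 ≤ 2*m+1) (hn : 2*m+1 < n) :
    b.g (J+2) * Aw b m = Aw b m * b.g J := by
  unfold Aw
  rw [← mul_assoc, g_gp_conj b (2*m+1) (J+2) 2 (by omega) (by omega) (by omega) (by omega)]
  have h1 : J + 2 - 1 = J + 1 := by omega
  rw [h1, mul_assoc, g_gm_conj b (2*m) (J+1) 1 (by omega) (by omega) (by omega) (by omega)]
  have h2 : J + 1 - 1 = J := by omega
  rw [h2, mul_assoc]

lemma ginv_Aw_conj {J m : ℕ} (hJ : 1 ≤ J) (hJm : J + 2 ≤ 2*m+1) (hn : 2*m+1 < n) :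
    b.ginv (J+2) * Aw b m = Aw b m * b.ginv J := by
  calc b.ginv (J+2) * Aw b m
      = b.ginv (J+2) * (Aw b m * (b.g J * b.ginv J)) := by
        rw [b.mul_ginv J hJ (by omega), mul_one]
    _ = b.ginv (J+2) * ((Aw b m * b.g J) * b.ginv J) := by simp only [mul_assoc]
    _ = b.ginv (J+2) * ((b.g (J+2) * Aw b m) * b.ginv J) := by
        rw [← g_Aw_conj b hJ hJm hn]
    _ = (b.ginv (J+2) * (b.g (J+2) * (Aw b m * b.ginv J))) := by simp only [mul_assoc]
    _ = Aw b m * b.ginv J := gig' b (by omega) (by omega) _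

/-- conjugating a generator through `B_m` shifts its index down by 2 -/
lemma Bw_g_conj {J m : ℕ} (hJ : 1 ≤ J) (hJm : J + 2 ≤ 2*m+1) (hn : 2*m+1 < n) :
    Bw b m * b.g (J+2) = b.g J * Bw b m := by
  unfold Bw
  rw [mul_assoc, gpd_g_conj b (2*m+1) (J+2) 2 (by omega) (by omega) (by omega) (by omega)]
  have h1 : J + 2 - 1 = J + 1 := by omega
  rw [h1, ← mul_assoc, gmd_g_conj b (2*m) (J+1) 1 (by omega) (by omega) (by omega) (by omega)]
  have h2 : J + 1 - 1 = J := by omega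
  rw [h2, mul_assoc]

/-- conjugating a cabled crossing through `A_m` shifts it down -/
lemma Xw_Aw_conj {i m : ℕ} (hi : 1 ≤ i) (him : 2*i+3 ≤ 2*m+1) (hn : 2*m+1 < n) :
    Xw b i * Aw b m = Aw b m * Xw b (i-1) := by
  obtain ⟨t, rfl⟩ : ∃ t, i = t + 1 := ⟨i - 1, by omega⟩
  have hred : t + 1 - 1 = t := by omega
  rw [hred]
  unfold Xw
  simp only [mul_assoc]
  have e1 : 2*(t+1)+2 = (2*t+2) + 2 := by ring
  have e2 : 2*(t+1)+3 = (2*t+3) + 2 := by ring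
  have e3 : 2*(t+1)+1 = (2*t+1) + 2 := by ring
  rw [e1, e2, e3,
    ginv_Aw_conj b (J := 2*t+2) (by omega) (by omega) hn,
    sconj_pull (ginv_Aw_conj b (J := 2*t+1) (by omega) (by omega) hn),
    sconj_pull (g_Aw_conj b (J := 2*t+3) (by omega) (by omega) hn),
    sconj_pull (g_Aw_conj b (J := 2*t+2) (by omega) (by omega) hn)]

end ConjComposite

section E3Master
variable (b : QBrauer R q r δ n A)

lemma mul_eq_pull {x y z : A} (h : x * y = z) (w : A) : x * (y * w) = z * w := by
  rw [← mul_assoc, h]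

lemma E3_left' (h4 : 4 ≤ n) :
    Xw b 0 * (b.e * (Xw b 0 * b.e)) = b.e * (Xw b 0 * b.e) := by
  have h := b.E3_left h4
  unfold Xw
  norm_num
  simp only [mul_assoc] at h ⊢
  exact h

lemma E3_left_c (h4 : 4 ≤ n) (x : A) :
    Xw b 0 * (b.e * (Xw b 0 * (b.e * x))) = b.e * (Xw b 0 * (b.e * x)) := by
  have := congrArg (· * x) (E3_left' b h4)
  simpa only [mul_assoc] using this

lemma e_g2_e_c (x : A) : b.e * (b.g 2 * (b.e * x)) = (r : R) • (b.e * x) := by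
  have := congrArg (· * x) b.e_g2_e
  simpa only [mul_assoc, smul_mul_assoc] using this

/-- the basic instance of generalized (E3): `X_0` is absorbed by `e_(k)`, `k ≥ 2`. -/
lemma E3L0 (k : ℕ) (hk : 2 ≤ k) (hn : 2*k ≤ n) : Xw b 0 * ee b k = ee b k := by
  obtain ⟨s, rfl⟩ : ∃ s, k = s + 2 := ⟨k - 2, by omega⟩
  rw [ee_succ b (s+1), Aw_eq_XP1 b (s+1) (by omega) (by omega), ee_succ b s, Aw_one]
  simp only [mul_assoc]
  rw [comm_pull (comm_e_XP1 b (s+1) (by omega)).symm]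
  exact E3_left_c b (by omega) _

lemma comm_g_Aw {i m : ℕ} (hi : 2*m+3 ≤ i) (hin : i < n) : Commute (b.g i) (Aw b m) := by
  unfold Aw
  refine Commute.mul_right ?_ ?_
  · rcases Nat.eq_zero_or_pos m with rfl | hm
    · rw [gp_empty b (by omega)]; exact Commute.one_right _
    · exact comm_g_gp b (by omega) hin (by omega) (by omega) (by omega)
  · rcases Nat.eq_zero_or_pos m with rfl | hm
    · rw [gm_empty b (by omega)]; exact Commute.one_right _
    · exact comm_g_gm b (by omega) hin (by omega) (by omega) (by omega)

lemma comm_ginv_Aw {i m : ℕ} (hi : 2*m+3 ≤ i) (hin : i < n) : Commute (b.ginv i) (Aw b m) :=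
  (comm_ginv_of_comm_g b (by omega) hin (comm_g_Aw b hi hin).symm).symm

/-- key braid-word identity: `X_m g_{2m+4} = (g⁻_{2m+4} g⁻_{2m+3} g_{2m+2} g_{2m+3} g_{2m+4}) X_m` -/
lemma keyword {m : ℕ} (hn : 2*m+4 < n) :
    Xw b m * b.g (2*m+4)
      = b.ginv (2*m+4) * (b.ginv (2*m+3) * (b.g (2*m+2) * (b.g (2*m+3) *
          (b.g (2*m+4) * Xw b m)))) := by
  unfold Xw
  symm
  calc b.ginv (2*m+4) * (b.ginv (2*m+3) * (b.g (2*m+2) * (b.g (2*m+3) *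
          (b.g (2*m+4) * (b.g (2*m+2) * (b.g (2*m+3) * (b.ginv (2*m+1) * b.ginv (2*m+2))))))))
      = b.ginv (2*m+4) * (b.ginv (2*m+3) * (b.g (2*m+2) * (b.g (2*m+3) *
          (b.g (2*m+2) * (b.g (2*m+4) * (b.g (2*m+3) * (b.ginv (2*m+1) * b.ginv (2*m+2)))))))) := by
        rw [comm_pull (comm_gg b (i := 2*m+2) (j := 2*m+4) (by omega) (by omega) (by omega)
          (by omega) (by omega)).symm]
    _ = b.ginv (2*m+4) * (b.ginv (2*m+3) * (b.g (2*m+3) * (b.g (2*m+2) * (b.g (2*m+3) *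
          (b.g (2*m+4) * (b.g (2*m+3) * (b.ginv (2*m+1) * b.ginv (2*m+2)))))))) := by
        rw [assoc_pull3 (braid' b (i := 2*m+2) (by omega) (by omega))]
    _ = b.ginv (2*m+4) * (b.g (2*m+2) * (b.g (2*m+3) *
          (b.g (2*m+4) * (b.g (2*m+3) * (b.ginv (2*m+1) * b.ginv (2*m+2)))))) := by
        rw [gig' b (by omega) (by omega)]
    _ = b.ginv (2*m+4) * (b.g (2*m+2) * (b.g (2*m+4) * (b.g (2*m+3) *
          (b.g (2*m+4) * (b.ginv (2*m+1) * b.ginv (2*m+2)))))) := by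
        rw [assoc_pull3 (braid' b (i := 2*m+3) (by omega) (by omega))]
    _ = b.ginv (2*m+4) * (b.g (2*m+4) * (b.g (2*m+2) * (b.g (2*m+3) *
          (b.g (2*m+4) * (b.ginv (2*m+1) * b.ginv (2*m+2)))))) := by
        rw [comm_pull (comm_gg b (i := 2*m+2) (j := 2*m+4) (by omega) (by omega) (by omega)
          (by omega) (by omega))]
    _ = b.g (2*m+2) * (b.g (2*m+3) * (b.g (2*m+4) * (b.ginv (2*m+1) * b.ginv (2*m+2)))) := by
        rw [gig' b (by omega) (by omega)]
    _ = b.g (2*m+2) * (b.g (2*m+3) * (b.ginv (2*m+1) * (b.ginv (2*m+2) * b.g (2*m+4)))) := by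
        rw [comm_pull (comm_ginv_of_comm_g b (j := 2*m+1) (by omega) (by omega)
            (comm_gg b (i := 2*m+4) (j := 2*m+1) (by omega) (by omega) (by omega) (by omega)
              (by omega))),
          (comm_ginv_of_comm_g b (j := 2*m+2) (by omega) (by omega)
            (comm_gg b (i := 2*m+4) (j := 2*m+2) (by omega) (by omega) (by omega) (by omega)
              (by omega))).eq]
    _ = b.g (2*m+2) * (b.g (2*m+3) * (b.ginv (2*m+1) * b.ginv (2*m+2))) * b.g (2*m+4) := by
        simp only [mul_assoc]

/-- The master induction: `e A_{j-1} g_{2j} g⁺_{2j+1,2k} e_(k) = r g⁺_{2j+1,2k} e_(k)`. -/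
lemma master (k : ℕ) (hk : 1 ≤ k) (hn : 2*k < n)
    (hE : ∀ i, i + 2 ≤ k → Xw b i * ee b k = ee b k) :
    ∀ j, 1 ≤ j → j ≤ k →
      b.e * (Aw b (j-1) * (b.g (2*j) * (gp b (2*j+1) (2*k) * ee b k)))
        = (r : R) • (gp b (2*j+1) (2*k) * ee b k) := by
  intro j
  induction j with
  | zero => omega
  | succ j ih =>
    intro _ hjk
    simp only [Nat.add_sub_cancel]
    rcases Nat.eq_zero_or_pos j with rfl | hj
    · -- base case j = 1
      rw [show 2*(0+1) = 2 by norm_num, show 2*(0+1)+1 = 3 by norm_num, Aw_zero, one_mul]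
      obtain ⟨m, rfl⟩ : ∃ m, k = m + 1 := ⟨k - 1, by omega⟩
      rw [ee_succ b m]
      have hcomm : Commute b.e (gp b 3 (2*(m+1))) := comm_e_gp b (by omega) (by omega)
      rw [comm_pull hcomm.symm, e_g2_e_c b, comm_pull hcomm]
    · -- inductive step
      obtain ⟨t, rfl⟩ : ∃ t, j = t + 1 := ⟨j - 1, by omega⟩
      rw [Aw_succ b (m := t) (by omega), show 2*(t+1+1) = 2*t+4 by ring,
        show 2*t+4+1 = 2*t+5 by ring]
      simp only [mul_assoc]
      rw [mul_eq_pull (keyword b (m := t) (by omega))]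
      simp only [mul_assoc]
      have hXgp : Commute (Xw b t) (gp b (2*t+5) (2*k)) := by
        unfold Xw
        refine Commute.mul_left (comm_g_gp b (by omega) (by omega) (by omega) hn (by omega)) ?_
        refine Commute.mul_left (comm_g_gp b (by omega) (by omega) (by omega) hn (by omega)) ?_
        refine Commute.mul_left ?_ ?_
        · exact (comm_ginv_of_comm_g b (by omega) (by omega)
            (comm_g_gp b (by omega) (by omega) (by omega) hn (by omega)).symm).symm
        · exact (comm_ginv_of_comm_g b (by omega) (by omega)
            (comm_g_gp b (by omega) (by omega) (by omega) hn (by omega)).symm).symm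
      rw [comm_pull hXgp, hE t (by omega)]
      rw [comm_pull (comm_ginv_Aw b (i := 2*t+4) (by omega) (by omega)).symm]
      rw [comm_pull (comm_ginv_Aw b (i := 2*t+3) (by omega) (by omega)).symm]
      rw [comm_pull (comm_e_ginv' b (i := 2*t+4) (by omega) (by omega))]
      rw [comm_pull (comm_e_ginv' b (i := 2*t+3) (by omega) (by omega))]
      have hfold : ∀ x : A, b.g (2*t+3) * (b.g (2*t+4) * (gp b (2*t+5) (2*k) * x))
          = gp b (2*t+3) (2*k) * x := by
        intro x
        rw [gp_cons b (l := 2*t+3) (by omega), gp_cons b (l := 2*t+4) (by omega)]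
        simp only [mul_assoc]
      rw [hfold]
      have hIH := ih (by omega) (by omega)
      rw [show t+1-1 = t by omega, show 2*(t+1) = 2*t+2 by ring,
        show 2*t+2+1 = 2*t+3 by ring] at hIH
      rw [hIH, mul_smul_comm, mul_smul_comm, ← hfold (ee b k),
        gig' b (by omega) (by omega), gig' b (by omega) (by omega)]

end E3Master

section MainLemmas
variable (b : QBrauer R q r δ n A)

lemma ginv_mul_expand {i : ℕ} (h1 : 1 ≤ i) (h2 : i < n) (x : A) :
    b.ginv i * x = ((q⁻¹ : Rˣ) : R) • (b.g i * x)
      - (((q⁻¹ : Rˣ) : R) * ((q : R) - 1)) • x := by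
  rw [ginv_expand b h1 h2, sub_mul, smul_mul_assoc, smul_mul_assoc, one_mul]

lemma e_ginv1 (hn : 1 < n) : b.e * b.ginv 1 = ((q⁻¹ : Rˣ) : R) • b.e :=
  smul_right_inv b (by omega) hn b.e_g1

lemma ginv1_e (hn : 1 < n) : b.ginv 1 * b.e = ((q⁻¹ : Rˣ) : R) • b.e :=
  smul_left_inv b (by omega) hn b.g1_e

lemma e_g2_e' : b.e * (b.g 2 * b.e) = (r : R) • b.e := by
  have := b.e_g2_e; rw [mul_assoc] at this; exact this

/-- `M'r(k)`: `e A_{k-1} g_{2k} e_(k) = r e_(k)` -/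
lemma Mprime (k : ℕ) (hk : 1 ≤ k) (hn : 2*k < n)
    (hE : ∀ i, i + 2 ≤ k → Xw b i * ee b k = ee b k) :
    b.e * (Aw b (k-1) * (b.g (2*k) * ee b k)) = (r : R) • ee b k := by
  have h := master b k hk hn hE k hk le_rfl
  rw [gp_empty b (by omega)] at h
  simpa using h

/-- base case `G(1)`: `e_(2) = e_(1) B_1 e` -/
lemma G1 (hn : 4 ≤ n) : ee b 2 = ee b 1 * Bw b 1 * b.e := by
  have hBw : Bw b 1 = b.ginv 2 * (b.ginv 1 * (b.g 3 * b.g 2)) := by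
    unfold Bw
    rw [show 2*1 = 2 by norm_num, show 2*1+1 = 3 by norm_num,
      gmd_concat b (m := 1) (by omega), gmd_concat b (m := 0) (by omega),
      gmd_empty b (by omega),
      gpd_concat b (m := 2) (by omega), gpd_concat b (m := 1) (by omega),
      gpd_empty b (by omega)]
    simp only [mul_one, mul_assoc]
  rw [ee_succ b 1, Aw_one, hBw]
  show b.e * (Xw b 0 * b.e) = b.e * (b.ginv 2 * (b.ginv 1 * (b.g 3 * b.g 2))) * b.e
  unfold Xw
  norm_num
  simp only [mul_assoc]
  have h31 : Commute (b.g 3) (b.ginv 1) :=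
    comm_ginv_of_comm_g b (by omega) (by omega)
      (comm_gg b (i := 3) (j := 1) (by omega) (by omega) (by omega) (by omega) (by omega))
  rw [comm_pull h31]
  rw [ginv_mul_expand b (by omega) (by omega) b.e,
    ginv_mul_expand b (i := 2) (by omega) (by omega) (b.ginv 1 * (b.g 3 * (b.g 2 * b.e)))]
  simp only [mul_sub, mul_smul_comm]
  congr 1
  -- remaining: the `c₂` terms
  congr 1
  calc b.e * (b.g 2 * (b.ginv 1 * (b.g 3 * b.e)))
      = b.e * (b.g 2 * (b.ginv 1 * (b.e * b.g 3))) := by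
        rw [(comm_e_g' b (i := 3) (by omega) (by omega)).eq]
    _ = b.e * (b.g 2 * (((q⁻¹ : Rˣ) : R) • (b.e * b.g 3))) := by
        rw [← mul_assoc (b.ginv 1), ginv1_e b (by omega), smul_mul_assoc]
    _ = ((q⁻¹ : Rˣ) : R) • (b.e * (b.g 2 * (b.e * b.g 3))) := by
        simp only [mul_smul_comm]
    _ = ((q⁻¹ : Rˣ) : R) • ((r : R) • (b.e * b.g 3)) := by rw [e_g2_e_c b]
    _ = ((q⁻¹ : Rˣ) : R) • ((r : R) • (b.g 3 * b.e)) := by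
        rw [(comm_e_g' b (i := 3) (by omega) (by omega)).eq]
    _ = b.e * (b.ginv 1 * (b.g 3 * (b.g 2 * b.e))) := by
        rw [← mul_assoc b.e, e_ginv1 b (by omega), smul_mul_assoc,
          comm_pull (comm_e_g' b (i := 3) (by omega) (by omega)), e_g2_e']
        simp only [mul_smul_comm]

end MainLemmas

section Crux
variable (b : QBrauer R q r δ n A)

/-- The crux identity: `e A_k X_k e_(k+1) = e A_k Y_k e_(k+1)`. -/
lemma crux (k : ℕ) (hk : 1 ≤ k) (hn : 2*k+4 ≤ n)
    (hG : ee b (k+1) = ee b k * Bw b k * b.e)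
    (hL1l_inv : b.ginv (2*k+1) * ee b (k+1) = ((q⁻¹ : Rˣ) : R) • ee b (k+1))
    (hL1r_inv : ee b (k+1) * b.ginv (2*k+1) = ((q⁻¹ : Rˣ) : R) • ee b (k+1))
    (hMr : b.e * (Aw b k * (b.g (2*k+2) * ee b (k+1))) = (r : R) • ee b (k+1)) :
    b.e * (Aw b k * (Xw b k * ee b (k+1))) = b.e * (Aw b k * (Yw b k * ee b (k+1))) := by
  have hG' : ee b (k+1) = ee b k * (Bw b k * b.e) := by rw [hG, mul_assoc]
  have hfold1 : ∀ x : A, b.e * (Aw b k * (ee b k * x)) = ee b (k+1) * x := by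
    intro x; rw [ee_succ b k]; simp only [mul_assoc]
  have hcomm_h_ee : Commute (b.g (2*k+2)) (ee b k) :=
    comm_g_ee b k hk (by omega) (by omega)
  have hcomm_f_ee : Commute (b.ginv (2*k+1)) (ee b k) :=
    comm_ginv_ee b k hk (by omega) (by omega)
  have hcomm_t_eeK : Commute (b.g (2*k+3)) (ee b (k+1)) :=
    comm_g_ee b (k+1) (by omega) (by omega) (by omega)
  have hL1r_inv' : ∀ x : A, ee b (k+1) * (b.ginv (2*k+1) * x)
      = ((q⁻¹ : Rˣ) : R) • (ee b (k+1) * x) := by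
    intro x; rw [← mul_assoc, hL1r_inv, smul_mul_assoc]
  -- the inner collision: `e A_k f⁻ h e_(k+1) = q⁻¹ r • e_(k+1)`
  have hinner : b.e * (Aw b k * (b.ginv (2*k+1) * (b.g (2*k+2) * ee b (k+1))))
      = (((q⁻¹ : Rˣ) : R) * (r : R)) • ee b (k+1) := by
    conv_lhs => rw [hG']
    rw [comm_pull hcomm_h_ee, comm_pull hcomm_f_ee, hfold1, hL1r_inv',
      ← hfold1, ← comm_pull hcomm_h_ee, ← hG', hMr, smul_smul]
  -- value of the second term of the `X` side
  have hA : b.e * (Aw b k * (b.g (2*k+2) * (b.g (2*k+3) * (b.ginv (2*k+1) * ee b (k+1)))))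
      = (((q⁻¹ : Rˣ) : R) * (r : R)) • (ee b (k+1) * b.g (2*k+3)) := by
    rw [hL1l_inv]
    simp only [mul_smul_comm]
    rw [hcomm_t_eeK.eq]
    have hcollect : b.e * (Aw b k * (b.g (2*k+2) * (ee b (k+1) * b.g (2*k+3))))
        = (b.e * (Aw b k * (b.g (2*k+2) * ee b (k+1)))) * b.g (2*k+3) := by
      simp only [mul_assoc]
    rw [hcollect, hMr, smul_mul_assoc, smul_smul]
  -- value of the second term of the `Y` side
  have hB : b.e * (Aw b k * (b.ginv (2*k+1) * (b.g (2*k+3) * (b.g (2*k+2) * ee b (k+1)))))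
      = (((q⁻¹ : Rˣ) : R) * (r : R)) • (ee b (k+1) * b.g (2*k+3)) := by
    have hft : Commute (b.ginv (2*k+1)) (b.g (2*k+3)) :=
      (comm_ginv_of_comm_g b (by omega) (by omega)
        (comm_gg b (i := 2*k+3) (j := 2*k+1) (by omega) (by omega) (by omega) (by omega)
          (by omega))).symm
    rw [comm_pull hft, comm_pull (comm_g_Aw b (i := 2*k+3) (by omega) (by omega)).symm,
      comm_pull (comm_e_g' b (i := 2*k+3) (by omega) (by omega)), hinner,
      mul_smul_comm, hcomm_t_eeK.eq]
  -- now expand `ginv (2k+2)` on both sides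
  unfold Xw Yw
  simp only [mul_assoc]
  rw [ginv_mul_expand b (i := 2*k+2) (by omega) (by omega) (ee b (k+1)),
    ginv_mul_expand b (i := 2*k+2) (by omega) (by omega)
      (b.ginv (2*k+1) * (b.g (2*k+3) * (b.g (2*k+2) * ee b (k+1))))]
  simp only [mul_sub, mul_smul_comm]
  have hft2 : Commute (b.g (2*k+3)) (b.ginv (2*k+1)) :=
    comm_ginv_of_comm_g b (by omega) (by omega)
      (comm_gg b (i := 2*k+3) (j := 2*k+1) (by omega) (by omega) (by omega) (by omega)
        (by omega))
  rw [comm_pull hft2, hA, hB]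

end Crux

section Big
variable (b : QBrauer R q r δ n A)

lemma mul_mul_pull {x y u v : A} (h : x * y = u * v) (w : A) :
    x * (y * w) = u * (v * w) := by
  rw [← mul_assoc, h, mul_assoc]

/-- The joint induction: eigenrelations, generalized (E3) absorption, and the
two-sided description of `e_(k+1)`. -/
theorem bigStep : ∀ k : ℕ,
    (1 ≤ k → 2*k ≤ n → b.g (2*k-1) * ee b k = (q : R) • ee b k) ∧
    (1 ≤ k → 2*k ≤ n → ee b k * b.g (2*k-1) = (q : R) • ee b k) ∧
    (∀ i, i + 2 ≤ k → 2*k ≤ n → Xw b i * ee b k = ee b k) ∧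
    (2*k+2 ≤ n → ee b (k+1) = ee b k * Bw b k * b.e) := by
  intro k
  induction k with
  | zero =>
    refine ⟨fun h _ => absurd h (by omega), fun h _ => absurd h (by omega),
      fun i hi _ => absurd hi (by omega), fun _ => ?_⟩
    have h1 : ee b 1 = b.e := rfl
    have h0 : ee b 0 = 1 := rfl
    rw [h1, h0, Bw_zero, mul_one, one_mul]
  | succ k ih =>
    obtain ⟨ihL, ihR, ihE, ihG⟩ := ih
    have L1l : 1 ≤ k+1 → 2*(k+1) ≤ n →
        b.g (2*(k+1)-1) * ee b (k+1) = (q : R) • ee b (k+1) := by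
      intro _ hn
      rw [show 2*(k+1)-1 = 2*k+1 by omega]
      rcases Nat.eq_zero_or_pos k with rfl | hk
      · rw [show 2*0+1 = 1 by norm_num]
        exact b.g1_e
      · obtain ⟨s, rfl⟩ : ∃ s, k = s + 1 := ⟨k - 1, by omega⟩
        rw [ee_succ b (s+1),
          comm_pull (comm_e_g' b (i := 2*(s+1)+1) (by omega) (by omega)).symm,
          show 2*(s+1)+1 = (2*s+1)+2 by ring,
          mul_mul_pull (g_Aw_conj b (J := 2*s+1) (by omega) (by omega) (by omega))]
        have hIHl := ihL (by omega) (by omega)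
        rw [show 2*(s+1)-1 = 2*s+1 by omega] at hIHl
        rw [hIHl]
        simp only [mul_smul_comm]
    have L1r : 1 ≤ k+1 → 2*(k+1) ≤ n →
        ee b (k+1) * b.g (2*(k+1)-1) = (q : R) • ee b (k+1) := by
      intro _ hn
      rw [show 2*(k+1)-1 = 2*k+1 by omega]
      rcases Nat.eq_zero_or_pos k with rfl | hk
      · rw [show 2*0+1 = 1 by norm_num]
        exact b.e_g1
      · obtain ⟨s, rfl⟩ : ∃ s, k = s + 1 := ⟨k - 1, by omega⟩
        rw [ihG (by omega)]
        simp only [mul_assoc]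
        rw [(comm_e_g' b (i := 2*(s+1)+1) (by omega) (by omega)).eq,
          show 2*(s+1)+1 = (2*s+1)+2 by ring,
          mul_mul_pull (Bw_g_conj b (J := 2*s+1) (by omega) (by omega) (by omega))]
        have hIHr := ihR (by omega) (by omega)
        rw [show 2*(s+1)-1 = 2*s+1 by omega] at hIHr
        rw [← mul_assoc, hIHr, smul_mul_assoc]
    have E3 : ∀ i, i + 2 ≤ k+1 → 2*(k+1) ≤ n → Xw b i * ee b (k+1) = ee b (k+1) := by
      intro i hi hn
      rcases Nat.eq_zero_or_pos i with rfl | hipos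
      · exact E3L0 b (k+1) (by omega) hn
      · rw [ee_succ b k, comm_pull (comm_e_Xw b hipos (by omega)).symm,
          mul_mul_pull (Xw_Aw_conj b hipos (by omega) (by omega)),
          ihE (i-1) (by omega) (by omega), ← ee_succ b k]
    refine ⟨L1l, L1r, E3, ?_⟩
    intro hn
    rcases Nat.eq_zero_or_pos k with rfl | hk
    · exact G1 b (by omega)
    · have hGk := ihG (by omega)
      have hL1l := L1l (by omega) (by omega)
      have hL1r := L1r (by omega) (by omega)
      rw [show 2*(k+1)-1 = 2*k+1 by omega] at hL1l hL1r
      have hL1l_inv := smul_left_inv b (i := 2*k+1) (by omega) (by omega) hL1l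
      have hL1r_inv := smul_right_inv b (i := 2*k+1) (by omega) (by omega) hL1r
      have hMr : b.e * (Aw b k * (b.g (2*k+2) * ee b (k+1))) = (r : R) • ee b (k+1) := by
        have h := Mprime b (k+1) (by omega) (by omega)
          (fun i hi => E3 i (by omega) (by omega))
        rw [show (k+1)-1 = k by omega, show 2*(k+1) = 2*k+2 by ring] at h
        exact h
      have hcrux := crux b k hk (by omega) hGk hL1l_inv hL1r_inv hMr
      have hGk' : ee b k * (Bw b k * b.e) = ee b (k+1) := by
        rw [hGk]; exact (mul_assoc _ _ _).symm
      have hYee : Commute (Yw b k) (ee b k) := by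
        unfold Yw
        refine Commute.mul_left (comm_ginv_ee b k hk (by omega) (by omega)) ?_
        refine Commute.mul_left (comm_ginv_ee b k hk (by omega) (by omega)) ?_
        exact Commute.mul_left (comm_g_ee b k hk (by omega) (by omega))
          (comm_g_ee b k hk (by omega) (by omega))
      rw [ee_succ b (k+1), Aw_succ b (m := k) (by omega)]
      simp only [mul_assoc]
      rw [hcrux, Bw_succ b (m := k) (by omega)]
      conv_rhs => rw [ee_succ b k]
      simp only [mul_assoc]
      conv_rhs => rw [comm_pull hYee.symm]
      rw [hGk']

end Big

/-- Lemma 3.3(c): `e_{(k+1)} = e_{(k)} ⋅ g⁻_{2k,1} g⁺_{2k+1,2} ⋅ e`. -/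
theorem ee_succ_alt (b : QBrauer R q r δ n A) (k : ℕ) (hk : 2*(k+1) ≤ n) :
    ee b (k+1) = ee b k * (gmd b (2*k) 1 * gpd b (2*k+1) 2) * b.e := by
  have h := (bigStep b k).2.2.2 (by omega)
  unfold Bw at h
  exact h
end

section
/- In the q-Brauer algebra Br_n(r,q), the element e_{(2)} satisfies e_{(2)} = e g_2^{-1} g_1^{-1} g_3 g_2 e, i.e., e(g_2 g_3 g_1^{-1} g_2^{-1})e = e(g_2^{-1} g_1^{-1} g_3 g_2)e. -/
variable {R : Type} [CommRing R] {q r δ : Rˣ} {n : ℕ} {A : Type} [Ring A] [Algebra R A]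

/-- `e_{(2)} = e g_2⁻¹ g_1⁻¹ g_3 g_2 e`, i.e.
`e (g_2 g_3 g_1⁻¹ g_2⁻¹) e = e (g_2⁻¹ g_1⁻¹ g_3 g_2) e`. -/
theorem ee_two_alt (b : QBrauer R q r δ n A) (hn : 4 ≤ n) :
    ee b 2 = b.e * b.ginv 2 * b.ginv 1 * b.g 3 * b.g 2 * b.e := by
  have h1n : (1:ℕ) < n := by omega
  have h2n : (2:ℕ) < n := by omega
  have h3n : (3:ℕ) < n := by omega
  set E := b.e with hE
  set G2 := b.g 2 with hG2
  set G3 := b.g 3 with hG3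
  set H1 := b.ginv 1 with hH1
  set H2 := b.ginv 2 with hH2
  have hm1 : b.g 1 * H1 = 1 := b.mul_ginv 1 (by omega) h1n
  have him1 : H1 * b.g 1 = 1 := b.ginv_mul 1 (by omega) h1n
  have hm2 : G2 * H2 = 1 := b.mul_ginv 2 (by omega) h2n
  have hg2 : G2 = ((q:R) - 1) • (1:A) + (q:R) • H2 := by
    have hq : G2 * G2 = ((q:R) - 1) • G2 + (q:R) • (1:A) := b.quad 2 (by omega) h2n
    calc G2 = G2 * G2 * H2 := by rw [mul_assoc, hm2, mul_one]
    _ = (((q:R) - 1) • G2 + (q:R) • (1:A)) * H2 := by rw [hq]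
    _ = ((q:R) - 1) • (1:A) + (q:R) • H2 := by
        rw [add_mul, smul_mul_assoc, smul_mul_assoc, hm2, one_mul]
  have hq1 : ∀ x y : A, ((q:R)) • x = ((q:R)) • y → x = y := by
    intro x y hxy
    have := congrArg (fun z => ((q⁻¹ : Rˣ) : R) • z) hxy
    simpa [smul_smul, q.inv_mul] using this
  have hqq : (q:R) * ((q⁻¹ : Rˣ) : R) = 1 := q.mul_inv
  have eh1 : E * H1 = ((q⁻¹ : Rˣ) : R) • E := by
    apply hq1
    rw [smul_smul, hqq, one_smul, ← smul_mul_assoc, ← b.e_g1, mul_assoc, hm1, mul_one]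
  have h1e : H1 * E = ((q⁻¹ : Rˣ) : R) • E := by
    apply hq1
    rw [smul_smul, hqq, one_smul, ← mul_smul_comm, ← b.g1_e, ← mul_assoc, him1, one_mul]
  have eg3 : E * G3 = G3 * E := b.e_g 3 (by omega) h3n
  have eh2e : E * H2 * E = ((q⁻¹ : Rˣ) : R) • E := b.e_g2inv_e
  have h31 : G3 * H1 = H1 * G3 := by
    have hc : b.g 1 * G3 = G3 * b.g 1 := b.gcomm 1 3 (by omega) (by omega) h3n
    calc G3 * H1 = H1 * b.g 1 * G3 * H1 := by rw [him1, one_mul]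
    _ = H1 * (G3 * (b.g 1 * H1)) := by rw [mul_assoc H1, hc, mul_assoc H1, mul_assoc G3]
    _ = H1 * G3 := by rw [hm1, mul_one]
  have keyA : E * (G3 * (H1 * (H2 * E)))
      = ((q⁻¹ : Rˣ) : R) • (((q⁻¹ : Rˣ) : R) • (G3 * E)) := by
    calc E * (G3 * (H1 * (H2 * E)))
        = (E * G3) * (H1 * (H2 * E)) := by rw [mul_assoc]
    _ = G3 * (E * H1) * (H2 * E) := by
        rw [eg3, mul_assoc G3, ← mul_assoc E H1, ← mul_assoc G3]
    _ = ((q⁻¹ : Rˣ) : R) • (G3 * (E * H2 * E)) := by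
        rw [eh1, mul_smul_comm, smul_mul_assoc, mul_assoc G3, ← mul_assoc E H2]
    _ = ((q⁻¹ : Rˣ) : R) • (((q⁻¹ : Rˣ) : R) • (G3 * E)) := by
        rw [eh2e, mul_smul_comm]
  have keyB : E * (H2 * (H1 * (G3 * E)))
      = ((q⁻¹ : Rˣ) : R) • (((q⁻¹ : Rˣ) : R) • (G3 * E)) := by
    have h1 : H1 * (G3 * E) = G3 * (H1 * E) := by rw [← mul_assoc, ← h31, mul_assoc]
    rw [h1, h1e, mul_smul_comm, mul_smul_comm, mul_smul_comm]
    congr 1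
    calc E * (H2 * (G3 * E)) = E * (H2 * (E * G3)) := by rw [← eg3]
    _ = (E * H2 * E) * G3 := by rw [← mul_assoc H2, ← mul_assoc E, ← mul_assoc E H2]
    _ = ((q⁻¹ : Rˣ) : R) • (G3 * E) := by rw [eh2e, smul_mul_assoc, eg3]
  show E * gp b 2 (2*(0+1)+1) * gm b 1 (2*(0+1)) * ee b 1 = E * H2 * H1 * G3 * G2 * E
  have hgp : gp b 2 (2*(0+1)+1) = G2 * (G3 * 1) := by norm_num [gp, List.range'] <;> rfl
  have hgm : gm b 1 (2*(0+1)) = H1 * (H2 * 1) := by norm_num [gm, List.range'] <;> rfl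
  rw [hgp, hgm]
  show E * (G2 * (G3 * 1)) * (H1 * (H2 * 1)) * E = E * H2 * H1 * G3 * G2 * E
  rw [mul_one, mul_one, hg2]
  simp only [add_mul, mul_add, smul_mul_assoc, mul_smul_comm, one_mul, mul_one, mul_assoc]
  rw [keyA, keyB]
  congr 1
  rw [← mul_assoc G3 H1, h31, mul_assoc]
end

section
/- In the q-Brauer algebra, for j ≤ k the elements e_{(j)} and e_{(k)} commute and satisfy e_{(j)} e_{(k)} = e_{(k)} e_{(j)} = ((r−1)/(q−1))^j e_{(k)}. -/
section GroupPart
variable {G : Type*} [Group G]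

lemma conjA {x y : G} (h : x*y*x = y*x*y) : x⁻¹*(y*x) = y*(x*y⁻¹) := by
  refine mul_right_cancel (b := y) ?_
  calc x⁻¹*(y*x)*y = x⁻¹*(y*x*y) := by group
    _ = x⁻¹*(x*y*x) := by rw [← h]
    _ = y*(x*y⁻¹)*y := by group

lemma conjB {x y : G} (h : x*y*x = y*x*y) : x*(y*x⁻¹) = y⁻¹*(x*y) := by
  refine mul_right_cancel (b := x) ?_
  calc x*(y*x⁻¹)*x = x*y := by group
    _ = y⁻¹*(y*x*y) := by group
    _ = y⁻¹*(x*y*x) := by rw [← h]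
    _ = y⁻¹*(x*y)*x := by group

lemma shift1 (a b c d : G)
    (hab : a*b*a = b*a*b) (hbc : b*c*b = c*b*c) (hcd : c*d*c = d*c*d)
    (hac : a*c = c*a) (had : a*d = d*a) (hbd : b*d = d*b) :
    (b*a⁻¹*c*b⁻¹) * (d*c*b*a) = (d*c*b*a) * (c*b⁻¹*d*c⁻¹) := by
  have cad : Commute a d := had
  have cbd : Commute b d := hbd
  have cac : Commute a c := hac
  have hbcb : b⁻¹*(c*b) = c*(b*c⁻¹) := conjA hbc
  have core1 : b*(a⁻¹*(c*(b*a))) = c*(b*(a*(c*b⁻¹))) := by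
    refine mul_right_cancel (b := b) ?_
    calc b*(a⁻¹*(c*(b*a)))*b = b*(a⁻¹*(c*(b*a*b))) := by group
      _ = b*(a⁻¹*(c*(a*b*a))) := by rw [← hab]
      _ = b*(a⁻¹*((c*a)*(b*a))) := by group
      _ = b*(a⁻¹*((a*c)*(b*a))) := by rw [← hac]
      _ = (b*c*b)*a := by group
      _ = (c*b*c)*a := by rw [hbc]
      _ = c*(b*(c*a)) := by group
      _ = c*(b*(a*c)) := by rw [← hac]
      _ = c*(b*(a*(c*b⁻¹)))*b := by group
  calc (b*a⁻¹*c*b⁻¹) * (d*c*b*a)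
      = b*(a⁻¹*(c*((b⁻¹*d)*(c*(b*a))))) := by group
    _ = b*(a⁻¹*(c*((d*b⁻¹)*(c*(b*a))))) := by rw [cbd.inv_left.eq]
    _ = b*(a⁻¹*(c*(d*((b⁻¹*(c*b))*a)))) := by group
    _ = b*(a⁻¹*(c*(d*((c*(b*c⁻¹))*a)))) := by rw [hbcb]
    _ = b*(a⁻¹*((c*d*c)*(b*(c⁻¹*a)))) := by group
    _ = b*(a⁻¹*((d*c*d)*(b*(c⁻¹*a)))) := by rw [hcd]
    _ = b*((a⁻¹*d)*(c*(d*(b*(c⁻¹*a))))) := by group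
    _ = b*((d*a⁻¹)*(c*(d*(b*(c⁻¹*a))))) := by rw [cad.inv_left.eq]
    _ = (b*d)*(a⁻¹*(c*(d*(b*(c⁻¹*a))))) := by group
    _ = (d*b)*(a⁻¹*(c*(d*(b*(c⁻¹*a))))) := by rw [hbd]
    _ = d*(b*(a⁻¹*(c*(d*(b*((c⁻¹*a))))))) := by group
    _ = d*(b*(a⁻¹*(c*(d*(b*((a*c⁻¹))))))) := by rw [← cac.inv_right.eq]
    _ = d*(b*(a⁻¹*(c*((d*b)*(a*c⁻¹))))) := by group
    _ = d*(b*(a⁻¹*(c*((b*d)*(a*c⁻¹))))) := by rw [hbd]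
    _ = d*(b*(a⁻¹*(c*(b*((d*a)*c⁻¹))))) := by group
    _ = d*(b*(a⁻¹*(c*(b*((a*d)*c⁻¹))))) := by rw [had]
    _ = d*((b*(a⁻¹*(c*(b*a))))*(d*c⁻¹)) := by group
    _ = d*((c*(b*(a*(c*b⁻¹))))*(d*c⁻¹)) := by rw [core1]
    _ = (d*c*b*a) * (c*b⁻¹*d*c⁻¹) := by group

lemma shift2 (b c d f : G)
    (hbc : b*c*b = c*b*c) (hcd : c*d*c = d*c*d) (hdf : d*f*d = f*d*f)
    (hbd : b*d = d*b) (hbf : b*f = f*b) (hcf : c*f = f*c) :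
    (b*c*d*f) * (c*b⁻¹*d*c⁻¹) = (d*c⁻¹*f*d⁻¹) * (b*c*d*f) := by
  have cbd : Commute b d := hbd
  have cbf : Commute b f := hbf
  have ccf : Commute c f := hcf
  calc (b*c*d*f) * (c*b⁻¹*d*c⁻¹)
      = b*(c*(d*((f*c)*(b⁻¹*(d*c⁻¹))))) := by group
    _ = b*(c*(d*((c*f)*(b⁻¹*(d*c⁻¹))))) := by rw [hcf]
    _ = b*(c*(d*(c*((f*b⁻¹)*(d*c⁻¹))))) := by group
    _ = b*(c*(d*(c*((b⁻¹*f)*(d*c⁻¹))))) := by rw [← cbf.inv_left.eq]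
    _ = b*((c*d*c)*(b⁻¹*(f*(d*c⁻¹)))) := by group
    _ = b*((d*c*d)*(b⁻¹*(f*(d*c⁻¹)))) := by rw [hcd]
    _ = (b*d)*(c*((d*b⁻¹)*(f*(d*c⁻¹)))) := by group
    _ = (d*b)*(c*((b⁻¹*d)*(f*(d*c⁻¹)))) := by rw [hbd, ← cbd.inv_left.eq]
    _ = d*((b*(c*b⁻¹))*(d*(f*(d*c⁻¹)))) := by group
    _ = d*((c⁻¹*(b*c))*(d*(f*(d*c⁻¹)))) := by rw [conjB hbc]
    _ = d*(c⁻¹*(b*(c*((d*f*d)*c⁻¹)))) := by group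
    _ = d*(c⁻¹*(b*(c*((f*d*f)*c⁻¹)))) := by rw [hdf]
    _ = d*(c⁻¹*(b*(c*(f*(d*(f*c⁻¹)))))) := by group
    _ = d*(c⁻¹*(b*(c*(f*(d*(c⁻¹*f)))))) := by rw [ccf.inv_left.eq]
    _ = d*(c⁻¹*(b*((c*f)*(d*(c⁻¹*f))))) := by group
    _ = d*(c⁻¹*(b*((f*c)*(d*(c⁻¹*f))))) := by rw [← hcf]
    _ = d*(c⁻¹*((b*f)*(c*(d*(c⁻¹*f))))) := by group
    _ = d*(c⁻¹*((f*b)*(c*(d*(c⁻¹*f))))) := by rw [hbf]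
    _ = d*(c⁻¹*(f*(b*((c*(d*c⁻¹))*f)))) := by group
    _ = d*(c⁻¹*(f*(b*((d⁻¹*(c*d))*f)))) := by rw [conjA hcd.symm]
    _ = d*(c⁻¹*(f*((b*d⁻¹)*(c*(d*f))))) := by group
    _ = d*(c⁻¹*(f*((d⁻¹*b)*(c*(d*f))))) := by rw [cbd.inv_right.eq]
    _ = (d*c⁻¹*f*d⁻¹) * (b*c*d*f) := by group


/-- Braid relation for the "pair swap" elements `t = b c a⁻¹ b⁻¹`. -/
lemma tbraid (a b c d f : G)
    (hab : a*b*a = b*a*b) (hbc : b*c*b = c*b*c) (hcd : c*d*c = d*c*d) (hdf : d*f*d = f*d*f)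
    (hac : a*c = c*a) (had : a*d = d*a) (haf : a*f = f*a)
    (hbd : b*d = d*b) (hbf : b*f = f*b) (hcf : c*f = f*c) :
    (b*c*a⁻¹*b⁻¹) * (d*f*c⁻¹*d⁻¹) * (b*c*a⁻¹*b⁻¹)
      = (d*f*c⁻¹*d⁻¹) * (b*c*a⁻¹*b⁻¹) * (d*f*c⁻¹*d⁻¹) := by
  have cac : Commute a c := hac
  have cad : Commute a d := had
  have caf : Commute a f := haf
  have cbd : Commute b d := hbd
  have cbf : Commute b f := hbf
  have ccf : Commute c f := hcf
  set A := d*c*b*a with hA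
  set B := b*c*d*f with hB
  have h1 : (b*a⁻¹*c*b⁻¹) * A = A * (c*b⁻¹*d*c⁻¹) := shift1 a b c d hab hbc hcd hac had hbd
  have h2 : B * (c*b⁻¹*d*c⁻¹) = (d*c⁻¹*f*d⁻¹) * B := shift2 b c d f hbc hcd hdf hbd hbf hcf
  have hu : b*c*a⁻¹*b⁻¹ = b*a⁻¹*c*b⁻¹ := by
    calc b*c*a⁻¹*b⁻¹ = b*((c*a⁻¹)*b⁻¹) := by group
      _ = b*((a⁻¹*c)*b⁻¹) := by rw [← cac.inv_left.eq]
      _ = b*a⁻¹*c*b⁻¹ := by group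
  have hv : d*f*c⁻¹*d⁻¹ = d*c⁻¹*f*d⁻¹ := by
    calc d*f*c⁻¹*d⁻¹ = d*((f*c⁻¹)*d⁻¹) := by group
      _ = d*((c⁻¹*f)*d⁻¹) := by rw [ccf.inv_left.eq]
      _ = d*c⁻¹*f*d⁻¹ := by group
  have huv : (b*c*a⁻¹*b⁻¹) * (d*f*c⁻¹*d⁻¹) = B * A⁻¹ := by
    calc (b*c*a⁻¹*b⁻¹) * (d*f*c⁻¹*d⁻¹)
        = b*(c*(a⁻¹*((b⁻¹*(d*f))*(c⁻¹*d⁻¹)))) := by group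
      _ = b*(c*(a⁻¹*(((d*f)*b⁻¹)*(c⁻¹*d⁻¹)))) := by rw [(cbd.mul_right cbf).inv_left.eq]
      _ = b*(c*((a⁻¹*(d*f))*(b⁻¹*(c⁻¹*d⁻¹)))) := by group
      _ = b*(c*(((d*f)*a⁻¹)*(b⁻¹*(c⁻¹*d⁻¹)))) := by rw [(cad.mul_right caf).inv_left.eq]
      _ = B * A⁻¹ := by rw [hA, hB]; group
  have h1' : A⁻¹ * (b*a⁻¹*c*b⁻¹) = (c*b⁻¹*d*c⁻¹) * A⁻¹ := by
    calc A⁻¹ * (b*a⁻¹*c*b⁻¹) = A⁻¹*((b*a⁻¹*c*b⁻¹)*A)*A⁻¹ := by group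
      _ = A⁻¹*(A*(c*b⁻¹*d*c⁻¹))*A⁻¹ := by rw [h1]
      _ = (c*b⁻¹*d*c⁻¹) * A⁻¹ := by group
  calc (b*c*a⁻¹*b⁻¹) * (d*f*c⁻¹*d⁻¹) * (b*c*a⁻¹*b⁻¹)
      = ((b*c*a⁻¹*b⁻¹) * (d*f*c⁻¹*d⁻¹)) * (b*c*a⁻¹*b⁻¹) := by group
    _ = (B*A⁻¹) * (b*a⁻¹*c*b⁻¹) := by rw [huv, hu]
    _ = B*(A⁻¹*(b*a⁻¹*c*b⁻¹)) := by group
    _ = B*((c*b⁻¹*d*c⁻¹)*A⁻¹) := by rw [h1']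
    _ = (B*(c*b⁻¹*d*c⁻¹))*A⁻¹ := by group
    _ = ((d*c⁻¹*f*d⁻¹)*B)*A⁻¹ := by rw [h2]
    _ = (d*c⁻¹*f*d⁻¹)*(B*A⁻¹) := by group
    _ = (d*c⁻¹*f*d⁻¹)*((b*c*a⁻¹*b⁻¹) * (d*f*c⁻¹*d⁻¹)) := by rw [huv]
    _ = (d*f*c⁻¹*d⁻¹) * (b*c*a⁻¹*b⁻¹) * (d*f*c⁻¹*d⁻¹) := by rw [← hv]; group

end GroupPart



variable {R : Type} [CommRing R] {q r δ : Rˣ} {n : ℕ} {A : Type} [Ring A] [Algebra R A]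

section QBAux

variable {R : Type} [CommRing R] {q r δ : Rˣ} {n : ℕ} {A : Type} [Ring A] [Algebra R A]

/-- pass a commuting element through an inverse -/
lemma commute_inv_left' {M : Type*} [Monoid M] {g gi x : M} (hg : g * gi = 1) (hg' : gi * g = 1)
    (h : Commute g x) : Commute gi x := by
  have h' : x * g = g * x := h.symm.eq
  show gi * x = x * gi
  calc gi * x = gi * (x * (g * gi)) := by rw [hg, mul_one]
    _ = gi * ((x * g) * gi) := by rw [mul_assoc]
    _ = gi * ((g * x) * gi) := by rw [h']
    _ = (gi * g) * (x * gi) := by simp only [mul_assoc]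
    _ = x * gi := by rw [hg', one_mul]

namespace QBrauer

variable (b : QBrauer R q r δ n A)

/-- `t_i = g_{2i+2} g_{2i+3} g⁻_{2i+1} g⁻_{2i+2}`. -/
def tt (i : ℕ) : A :=
  b.g (2*i+2) * b.g (2*i+3) * b.ginv (2*i+1) * b.ginv (2*i+2)

/-- product `t_s t_{s+1} ⋯ t_{s+j-1}`. -/
def cp (s j : ℕ) : A := ((List.range' s j).map b.tt).prod

lemma comm_gg {i j : ℕ} (h1 : 1 ≤ i) (h2 : i+1 < j) (h3 : j < n) :
    Commute (b.g i) (b.g j) := b.gcomm i j h1 h2 h3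

lemma comm_ig {i j : ℕ} (h1 : 1 ≤ i) (h2 : i+1 < j) (h3 : j < n) :
    Commute (b.ginv i) (b.g j) :=
  commute_inv_left' (b.mul_ginv i h1 (by omega)) (b.ginv_mul i h1 (by omega)) (b.comm_gg h1 h2 h3)

lemma comm_gi {i j : ℕ} (h1 : 1 ≤ i) (h2 : i+1 < j) (h3 : j < n) :
    Commute (b.g i) (b.ginv j) :=
  (commute_inv_left' (b.mul_ginv j (by omega) h3) (b.ginv_mul j (by omega) h3)
    (b.comm_gg h1 h2 h3).symm).symm

lemma comm_ii {i j : ℕ} (h1 : 1 ≤ i) (h2 : i+1 < j) (h3 : j < n) :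
    Commute (b.ginv i) (b.ginv j) :=
  (commute_inv_left' (b.mul_ginv j (by omega) h3) (b.ginv_mul j (by omega) h3)
    (b.comm_ig h1 h2 h3).symm).symm

lemma comm_e_g {i : ℕ} (h : 2 < i) (hn : i < n) : Commute b.e (b.g i) := b.e_g i h hn

lemma comm_e_ginv {i : ℕ} (h : 2 < i) (hn : i < n) : Commute b.e (b.ginv i) :=
  (commute_inv_left' (b.mul_ginv i (by omega) hn) (b.ginv_mul i (by omega) hn)
    (b.comm_e_g h hn).symm).symm

lemma comm_e_tt {i : ℕ} (h1 : 1 ≤ i) (hn : 2*i+3 < n) : Commute b.e (b.tt i) := by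
  unfold tt
  exact ((((b.comm_e_g (by omega) (by omega)).mul_right
    (b.comm_e_g (by omega) (by omega))).mul_right
    (b.comm_e_ginv (by omega) (by omega))).mul_right
    (b.comm_e_ginv (by omega) (by omega)))

/-- `t_i` commutes with `g_y` and `ginv_y` for distant low `y`. -/
lemma comm_tt_g {i y : ℕ} (hy1 : 1 ≤ y) (hy2 : y + 2 ≤ 2*i+1) (hn : 2*i+3 < n) :
    Commute (b.tt i) (b.g y) := by
  unfold tt
  exact ((((b.comm_gg hy1 (by omega) (by omega)).symm.mul_left
    (b.comm_gg hy1 (by omega) (by omega)).symm).mul_left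
    (b.comm_gi hy1 (by omega) (by omega)).symm).mul_left
    (b.comm_gi hy1 (by omega) (by omega)).symm)

lemma comm_tt_ginv {i y : ℕ} (hy1 : 1 ≤ y) (hy2 : y + 2 ≤ 2*i+1) (hn : 2*i+3 < n) :
    Commute (b.tt i) (b.ginv y) := by
  unfold tt
  exact ((((b.comm_ig hy1 (by omega) (by omega)).symm.mul_left
    (b.comm_ig hy1 (by omega) (by omega)).symm).mul_left
    (b.comm_ii hy1 (by omega) (by omega)).symm).mul_left
    (b.comm_ii hy1 (by omega) (by omega)).symm)

lemma comm_tt_tt {i l : ℕ} (h : l+2 ≤ i) (hn : 2*i+3 < n) :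
    Commute (b.tt i) (b.tt l) := by
  conv_rhs => rw [tt]
  exact (((b.comm_tt_g (by omega) (by omega) hn).mul_right
    (b.comm_tt_g (by omega) (by omega) hn)).mul_right
    (b.comm_tt_ginv (by omega) (by omega) hn)).mul_right
    (b.comm_tt_ginv (by omega) (by omega) hn)

lemma comm_e_cp {s j : ℕ} (hs : 1 ≤ s) (hn : 2*(s+j)+1 < n) : Commute b.e (b.cp s j) := by
  refine Commute.list_prod_right _ _ ?_
  intro x hx
  rcases List.mem_map.1 hx with ⟨l, hl, rfl⟩
  rcases List.mem_range'.1 hl with ⟨k, hk, rfl⟩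
  exact b.comm_e_tt (by omega) (by omega)

/-- `t_i` commutes with `cp s j` when `s ≥ i+2`. -/
lemma comm_tt_cp_high {i s j : ℕ} (h : i + 2 ≤ s) (hn : 2*(s+j)+1 < n) :
    Commute (b.tt i) (b.cp s j) := by
  refine Commute.list_prod_right _ _ ?_
  intro x hx
  rcases List.mem_map.1 hx with ⟨l, hl, rfl⟩
  rcases List.mem_range'.1 hl with ⟨k, hk, rfl⟩
  exact (b.comm_tt_tt (by omega) (by omega)).symm

/-- `t_i` commutes with `cp s j` when `s + j + 1 ≤ i`. -/
lemma comm_tt_cp_low {i s j : ℕ} (h : s + j + 1 ≤ i) (hn : 2*i+3 < n) :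
    Commute (b.tt i) (b.cp s j) := by
  refine Commute.list_prod_right _ _ ?_
  intro x hx
  rcases List.mem_map.1 hx with ⟨l, hl, rfl⟩
  rcases List.mem_range'.1 hl with ⟨k, hk, rfl⟩
  exact b.comm_tt_tt (by omega) (by omega)

lemma cp_zero (s : ℕ) : b.cp s 0 = 1 := rfl

lemma cp_succ (s j : ℕ) : b.cp s (j+1) = b.tt s * b.cp (s+1) j := by
  simp [cp, List.range'_succ]

lemma cp_concat (s j : ℕ) : b.cp s (j+1) = b.cp s j * b.tt (s+j) := by
  simp only [cp]
  rw [List.range'_1_concat, List.map_append, List.prod_append]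
  simp

lemma cp_split (s j1 j2 : ℕ) : b.cp s (j1+j2) = b.cp s j1 * b.cp (s+j1) j2 := by
  simp only [cp]
  rw [← List.range'_append_1 (s := s) (m := j1) (n := j2),
    List.map_append, List.prod_append]


lemma gp_base : gp b 2 3 = b.g 2 * b.g 3 := by
  have h : List.range' 2 (3+1-2) = [2,3] := rfl
  simp [gp, h]

lemma gm_base : gm b 1 2 = b.ginv 1 * b.ginv 2 := by
  have h : List.range' 1 (2+1-1) = [1,2] := rfl
  simp [gm, h]

lemma gp_step (j : ℕ) : gp b 2 (2*j+3) = gp b 2 (2*j+1) * (b.g (2*j+2) * b.g (2*j+3)) := by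
  simp only [gp]
  have e1 : 2*j+3+1-2 = (2*j) + 2 := by omega
  have e2 : 2*j+1+1-2 = 2*j := by omega
  rw [e1, e2, ← List.range'_append_1 (s := 2) (m := 2*j) (n := 2), List.map_append, List.prod_append]
  have h : List.range' (2+2*j) 2 = [2*j+2, 2*j+3] := by
    rw [List.range'_succ, List.range'_succ, List.range'_zero]
    simp; omega
  rw [h]; simp

lemma gm_step (j : ℕ) : gm b 1 (2*j+2) = gm b 1 (2*j) * (b.ginv (2*j+1) * b.ginv (2*j+2)) := by
  simp only [gm]
  have e1 : 2*j+2+1-1 = (2*j) + 2 := by omega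
  have e2 : 2*j+1-1 = 2*j := by omega
  rw [e1, e2, ← List.range'_append_1 (s := 1) (m := 2*j) (n := 2), List.map_append, List.prod_append]
  have h : List.range' (1+2*j) 2 = [2*j+1, 2*j+2] := by
    rw [List.range'_succ, List.range'_succ, List.range'_zero]
    simp; omega
  rw [h]; simp

/-- `g⁺_{2,2j+1} g⁻_{1,2j} = t_0 t_1 ⋯ t_{j-1}`. -/
lemma cdecomp : ∀ j : ℕ, 1 ≤ j → 2*j+1 < n →
    gp b 2 (2*j+1) * gm b 1 (2*j) = b.cp 0 j := by
  intro j h1 hn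
  induction j, h1 using Nat.le_induction with
  | base =>
      show gp b 2 3 * gm b 1 2 = _
      rw [b.gp_base, b.gm_base]
      have h : b.cp 0 1 = b.tt 0 := by simp [cp, tt]
      rw [h]; simp [tt, mul_assoc]
  | succ j hj ih =>
      have hn' : 2*j+1 < n := by omega
      have e1 : 2*(j+1)+1 = 2*j+3 := by omega
      have e2 : 2*(j+1) = 2*j+2 := by omega
      rw [e1, e2, b.gp_step j, b.gm_step j]
      have hcomm : Commute (b.g (2*j+2) * b.g (2*j+3)) (gm b 1 (2*j)) := by
        simp only [gm]
        refine Commute.list_prod_right _ _ ?_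
        intro x hx
        rcases List.mem_map.1 hx with ⟨l, hl, rfl⟩
        rcases List.mem_range'.1 hl with ⟨k, hk, rfl⟩
        have hk' : k < 2*j := by omega
        exact ((b.comm_ig (by omega) (by omega) (by omega)).symm.mul_left
          (b.comm_ig (by omega) (by omega) (by omega)).symm)
      calc gp b 2 (2*j+1) * (b.g (2*j+2) * b.g (2*j+3)) *
            (gm b 1 (2*j) * (b.ginv (2*j+1) * b.ginv (2*j+2)))
          = gp b 2 (2*j+1) * ((b.g (2*j+2) * b.g (2*j+3)) *
              gm b 1 (2*j) * (b.ginv (2*j+1) * b.ginv (2*j+2))) := by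
            simp only [mul_assoc]
        _ = gp b 2 (2*j+1) * (gm b 1 (2*j) * (b.g (2*j+2) * b.g (2*j+3)) *
              (b.ginv (2*j+1) * b.ginv (2*j+2))) := by rw [hcomm.eq]
        _ = (gp b 2 (2*j+1) * gm b 1 (2*j)) *
              ((b.g (2*j+2) * b.g (2*j+3)) * (b.ginv (2*j+1) * b.ginv (2*j+2))) := by
            simp only [mul_assoc]
        _ = b.cp 0 j * b.tt j := by
            rw [ih hn']
            congr 1
            simp [tt, mul_assoc]
        _ = b.cp 0 (j+1) := by rw [b.cp_concat 0 j]; simp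



lemma ee_two_add (m : ℕ) :
    ee b (m+2) = b.e * gp b 2 (2*(m+1)+1) * gm b 1 (2*(m+1)) * ee b (m+1) := rfl

/-- canonical form `e_{(m+2)} = e ⬝ (t_0 ⋯ t_m) ⬝ e_{(m+1)}`. -/
lemma ee_cp (m : ℕ) (hn : 2*(m+1)+1 < n) :
    ee b (m+2) = b.e * (b.cp 0 (m+1) * ee b (m+1)) := by
  rw [b.ee_two_add m, ← b.cdecomp (m+1) (by omega) hn]
  simp only [mul_assoc]

lemma ee_head (k : ℕ) (h : 1 ≤ k) : ∃ w : A, ee b k = b.e * w := by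
  match k, h with
  | 1, _ => exact ⟨1, by simp [ee]⟩
  | (m+2), _ =>
      exact ⟨gp b 2 (2*(m+1)+1) * (gm b 1 (2*(m+1)) * ee b (m+1)), by
        rw [b.ee_two_add m]; simp only [mul_assoc]⟩

lemma e_mul_ee (k : ℕ) (h : 1 ≤ k) : b.e * ee b k = (δ : R) • ee b k := by
  obtain ⟨w, hw⟩ := b.ee_head k h
  rw [hw, ← mul_assoc, b.esq, smul_mul_assoc]

lemma ee_mul_e : ∀ k : ℕ, 1 ≤ k → ee b k * b.e = (δ : R) • ee b k := by
  intro k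
  induction k using Nat.strong_induction_on with
  | _ k ih =>
    intro hk
    match k, hk with
    | 1, _ => exact b.esq
    | (m+2), _ =>
        rw [b.ee_two_add m, mul_assoc, mul_assoc, mul_assoc,
          ih (m+1) (by omega) (by omega), mul_smul_comm, mul_smul_comm, mul_smul_comm]
        simp only [mul_assoc]

/-- braid relation for the `t_i`. -/
lemma tt_braid (i : ℕ) (hn : 2*i+5 < n) :
    b.tt i * b.tt (i+1) * b.tt i = b.tt (i+1) * b.tt i * b.tt (i+1) := by
  have h1 : (1:ℕ) ≤ 2*i+1 := by omega
  let ua : Aˣ := ⟨b.g (2*i+1), b.ginv (2*i+1), b.mul_ginv _ (by omega) (by omega),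
    b.ginv_mul _ (by omega) (by omega)⟩
  let ub : Aˣ := ⟨b.g (2*i+2), b.ginv (2*i+2), b.mul_ginv _ (by omega) (by omega),
    b.ginv_mul _ (by omega) (by omega)⟩
  let uc : Aˣ := ⟨b.g (2*i+3), b.ginv (2*i+3), b.mul_ginv _ (by omega) (by omega),
    b.ginv_mul _ (by omega) (by omega)⟩
  let ud : Aˣ := ⟨b.g (2*i+4), b.ginv (2*i+4), b.mul_ginv _ (by omega) (by omega),
    b.ginv_mul _ (by omega) (by omega)⟩
  let uf : Aˣ := ⟨b.g (2*i+5), b.ginv (2*i+5), b.mul_ginv _ (by omega) (by omega),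
    b.ginv_mul _ (by omega) (by omega)⟩
  have hab : ua*ub*ua = ub*ua*ub := Units.ext (b.braid (2*i+1) (by omega) (by omega))
  have hbc : ub*uc*ub = uc*ub*uc := Units.ext (b.braid (2*i+2) (by omega) (by omega))
  have hcd : uc*ud*uc = ud*uc*ud := Units.ext (b.braid (2*i+3) (by omega) (by omega))
  have hdf : ud*uf*ud = uf*ud*uf := Units.ext (b.braid (2*i+4) (by omega) (by omega))
  have hac : ua*uc = uc*ua := Units.ext (b.gcomm (2*i+1) (2*i+3) (by omega) (by omega) (by omega))
  have had : ua*ud = ud*ua := Units.ext (b.gcomm (2*i+1) (2*i+4) (by omega) (by omega) (by omega))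
  have haf : ua*uf = uf*ua := Units.ext (b.gcomm (2*i+1) (2*i+5) (by omega) (by omega) (by omega))
  have hbd : ub*ud = ud*ub := Units.ext (b.gcomm (2*i+2) (2*i+4) (by omega) (by omega) (by omega))
  have hbf : ub*uf = uf*ub := Units.ext (b.gcomm (2*i+2) (2*i+5) (by omega) (by omega) (by omega))
  have hcf : uc*uf = uf*uc := Units.ext (b.gcomm (2*i+3) (2*i+5) (by omega) (by omega) (by omega))
  have H := tbraid ua ub uc ud uf hab hbc hcd hdf hac had haf hbd hbf hcf
  have H' := congrArg Units.val H
  simp only [tt]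
  exact H'


lemma tt_zero : b.tt 0 = b.g 2 * b.g 3 * b.ginv 1 * b.ginv 2 := rfl

lemma ee_shape (m : ℕ) (hn : 2*(m+2) ≤ n) :
    ∃ w : A, ee b (m+2) = b.e * b.tt 0 * b.e * w := by
  obtain ⟨w', hw'⟩ := b.ee_head (m+1) (by omega)
  have hc : Commute b.e (b.cp 1 m) := b.comm_e_cp (by omega) (by omega)
  refine ⟨b.cp 1 m * w', ?_⟩
  rw [b.ee_cp m (by omega), b.cp_succ 0 m]
  simp only [Nat.zero_add]
  rw [hw']
  simp only [mul_assoc]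
  rw [← mul_assoc (b.cp 1 m) b.e, ← hc.eq, mul_assoc]

/-- left absorption of the `t_i` by `e_{(k)}`: the key lemma. -/
lemma tt_absorb : ∀ i k : ℕ, i+2 ≤ k → 2*k ≤ n → b.tt i * ee b k = ee b k := by
  intro i
  induction i with
  | zero =>
      intro k hk hn
      obtain ⟨m, rfl⟩ : ∃ m, k = m+2 := ⟨k-2, by omega⟩
      obtain ⟨w, hw⟩ := b.ee_shape m hn
      have E3' : b.tt 0 * (b.e * b.tt 0 * b.e) = b.e * b.tt 0 * b.e := by
        rw [b.tt_zero]; exact b.E3_left (by omega)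
      rw [hw, ← mul_assoc, E3']
  | succ i ih =>
      intro k hk hn
      obtain ⟨m, rfl⟩ : ∃ m, k = m+2 := ⟨k-2, by omega⟩
      have him : i+1 ≤ m := by omega
      rw [b.ee_cp m (by omega)]
      have hsplit : b.cp 0 (m+1) = b.cp 0 i * (b.tt i * (b.tt (i+1) * b.cp (i+2) (m-1-i))) := by
        have e1 : m+1 = i + (2 + (m-1-i)) := by omega
        rw [e1, b.cp_split 0 i _]
        simp only [Nat.zero_add]
        rw [b.cp_split i 2 _, b.cp_succ i 1, b.cp_succ (i+1) 0, b.cp_zero]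
        simp only [mul_one, mul_assoc]
      rw [hsplit]
      have c1 : Commute (b.tt (i+1)) b.e := (b.comm_e_tt (by omega) (by omega)).symm
      have c2 : Commute (b.tt (i+1)) (b.cp 0 i) := b.comm_tt_cp_low (by omega) (by omega)
      have c3 : Commute (b.tt i) (b.cp (i+2) (m-1-i)) := b.comm_tt_cp_high (by omega) (by omega)
      simp only [mul_assoc]
      rw [c1.left_comm, c2.left_comm, ← mul_assoc (b.tt (i+1)) (b.tt i),
        ← mul_assoc (b.tt (i+1) * b.tt i) (b.tt (i+1)), ← b.tt_braid i (by omega),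
        mul_assoc, mul_assoc, c3.left_comm, ih (m+1) (by omega) (by omega)]

/-- absorption of `t_0 ⋯ t_{j-1}` by `e_{(k)}`. -/
lemma cp_absorb : ∀ j k : ℕ, j+1 ≤ k → 2*k ≤ n → b.cp 0 j * ee b k = ee b k := by
  intro j
  induction j with
  | zero => intro k _ _; rw [b.cp_zero, one_mul]
  | succ j ih =>
      intro k hk hn
      rw [b.cp_concat 0 j]
      simp only [Nat.zero_add]
      rw [mul_assoc, b.tt_absorb j k (by omega) hn, ih k (by omega) hn]


lemma eD (j k : ℕ) (h1 : 1 ≤ j) (hjk : j < k) (hn : 2*k ≤ n) :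
    b.e * (gp b 2 (2*j+1) * (gm b 1 (2*j) * ee b k)) = (δ : R) • ee b k := by
  rw [← mul_assoc (gp b 2 (2*j+1)), b.cdecomp j h1 (by omega), b.cp_absorb j k (by omega) hn,
    b.e_mul_ee k (by omega)]

lemma ee_left : ∀ j k : ℕ, j ≤ k → 2*k ≤ n → ee b j * ee b k = ((δ : R)^j) • ee b k := by
  intro j
  induction j using Nat.strong_induction_on with
  | _ j ihj =>
    intro k hj hn
    match j, hj with
    | 0, _ => simp [ee]
    | 1, _ => rw [pow_one]; exact b.e_mul_ee k (by omega)
    | (m+2), _ =>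
        rw [b.ee_two_add m]
        simp only [mul_assoc]
        rw [ihj (m+1) (by omega) k (by omega) hn]
        simp only [mul_smul_comm]
        rw [b.eD (m+1) k (by omega) (by omega) hn, smul_smul, ← pow_succ]

lemma ee_right : ∀ k j : ℕ, j ≤ k → 2*k ≤ n → ee b k * ee b j = ((δ : R)^j) • ee b k := by
  intro k
  induction k using Nat.strong_induction_on with
  | _ k ihk =>
    intro j hj hn
    rcases eq_or_lt_of_le hj with rfl | hlt
    · exact b.ee_left j j le_rfl hn
    · obtain ⟨m, rfl⟩ : ∃ m, k = m+1 := ⟨k-1, by omega⟩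
      cases m with
      | zero =>
          obtain rfl : j = 0 := by omega
          simp [ee]
      | succ m' =>
          rw [b.ee_two_add m']
          simp only [mul_assoc]
          rw [ihk (m'+1) (by omega) j (by omega) (by omega)]
          simp only [mul_smul_comm]

end QBrauer

end QBAux

/-- Lemma 3.2(d): for `j ≤ k`, `e_{(j)} e_{(k)} = e_{(k)} e_{(j)} = ((r−1)/(q−1))^j e_{(k)}`. -/
theorem ee_mul_ee (b : QBrauer R q r δ n A) (j k : ℕ) (hjk : j ≤ k) (hk : 2*k ≤ n) :
    ee b j * ee b k = ((δ : R) ^ j) • ee b k ∧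
    ee b k * ee b j = ((δ : R) ^ j) • ee b k :=
  ⟨QBrauer.ee_left b j k hjk hk, QBrauer.ee_right b k j hjk hk⟩
end

section
/- In the q-Brauer algebra, for 1 ≤ j ≤ k one has e_{(j)} g_{2j} e_{(k)} = r ((r−1)/(q−1))^{j−1} e_{(k)}. -/
variable {R : Type} [CommRing R] {q r δ : Rˣ} {n : ℕ} {A : Type} [Ring A] [Algebra R A]

namespace QBP

private lemma canl {u ui x y : A} (h : ui * u = 1) (hxy : u * x = u * y) : x = y := by
  have h2 := congrArg (ui * ·) hxy
  simpa [← mul_assoc, h] using h2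

private lemma canr {u ui x y : A} (h : u * ui = 1) (hxy : x * u = y * u) : x = y := by
  have h2 := congrArg (· * ui) hxy
  simpa [mul_assoc, h] using h2

private lemma lswap {u v : A} (h : u * v = v * u) (x : A) : u * (v * x) = v * (u * x) := by
  rw [← mul_assoc, h, mul_assoc]

private lemma lswap' {u v w : A} (h : u * v = w * u) (x : A) : u * (v * x) = w * (u * x) := by
  rw [← mul_assoc, h, mul_assoc]

private lemma ctx3 {a1 a2 a3 b1 b2 b3 : A} (h : a1 * (a2 * a3) = b1 * (b2 * b3)) (x : A) :
    a1 * (a2 * (a3 * x)) = b1 * (b2 * (b3 * x)) := by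
  have h2 := congrArg (· * x) h
  simpa [mul_assoc] using h2

private lemma shift_inv {u a ai c ci : A} (ha : a * ai = 1) (hc : ci * c = 1)
    (h : u * a = c * u) : u * ai = ci * u := by
  calc u * ai = (ci * c) * (u * ai) := by rw [hc, one_mul]
  _ = ci * ((c * u) * ai) := by rw [mul_assoc, ← mul_assoc c u ai]
  _ = ci * ((u * a) * ai) := by rw [h]
  _ = ci * u := by rw [mul_assoc, ha, mul_one]

private lemma usmul_cancel {u : Rˣ} {x y : A} (h : (u:R) • x = y) :
    x = ((u⁻¹ : Rˣ):R) • y := by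
  rw [← h, smul_smul, Units.inv_mul, one_smul]

end QBP

namespace QBP

variable (b : QBrauer R q r δ n A)

private lemma comm_conj {u v vi : A} (hv : v * vi = 1) (hvi : vi * v = 1)
    (h : u * v = v * u) : u * vi = vi * u := by
  calc u * vi = (vi*v)*(u*vi) := by rw [hvi, one_mul]
  _ = vi*((v*u)*vi) := by rw [mul_assoc, ← mul_assoc v u vi]
  _ = vi*((u*v)*vi) := by rw [← h]
  _ = vi*u := by rw [mul_assoc u v vi, hv, mul_one]

section basic
variable {b}

/-- e commutes with ginv i for i > 2 -/
lemma e_gi (i : ℕ) (h2 : 2 < i) (hn : i < n) : b.e * b.ginv i = b.ginv i * b.e :=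
  comm_conj (b.mul_ginv i (by omega) hn) (b.ginv_mul i (by omega) hn) (b.e_g i h2 hn)

/-- g i comm ginv j, |i-j|>=2, i<j -/
lemma c_gv (i j : ℕ) (h1 : 1 ≤ i) (hij : i+1 < j) (hj : j < n) :
    b.g i * b.ginv j = b.ginv j * b.g i :=
  comm_conj (b.mul_ginv j (by omega) hj) (b.ginv_mul j (by omega) hj) (b.gcomm i j h1 hij hj)

lemma c_vg (i j : ℕ) (h1 : 1 ≤ i) (hij : i+1 < j) (hj : j < n) :
    b.ginv i * b.g j = b.g j * b.ginv i := by
  have := comm_conj (b.mul_ginv i h1 (by omega)) (b.ginv_mul i h1 (by omega))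
    (b.gcomm i j h1 hij hj).symm
  exact this.symm

lemma c_vv (i j : ℕ) (h1 : 1 ≤ i) (hij : i+1 < j) (hj : j < n) :
    b.ginv i * b.ginv j = b.ginv j * b.ginv i :=
  comm_conj (b.mul_ginv j (by omega) hj) (b.ginv_mul j (by omega) hj) (c_vg i j h1 hij hj)

lemma e_ginv1 (hn : 1 < n) : b.e * b.ginv 1 = ((q⁻¹:Rˣ):R) • b.e := by
  have h1 : b.e * b.g 1 * b.ginv 1 = ((q:R) • b.e) * b.ginv 1 := by rw [b.e_g1]
  rw [mul_assoc, b.mul_ginv 1 le_rfl hn, mul_one, smul_mul_assoc] at h1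
  exact QBP.usmul_cancel h1.symm

lemma ginv1_e (hn : 1 < n) : b.ginv 1 * b.e = ((q⁻¹:Rˣ):R) • b.e := by
  have h1 : b.ginv 1 * (b.g 1 * b.e) = b.ginv 1 * ((q:R) • b.e) := by rw [b.g1_e]
  rw [← mul_assoc, b.ginv_mul 1 le_rfl hn, one_mul, mul_smul_comm] at h1
  exact QBP.usmul_cancel h1.symm

/-- g i = (q-1)•1 + q•ginv i -/
lemma g_eq (i : ℕ) (h1 : 1 ≤ i) (hn : i < n) :
    b.g i = ((q:R)-1) • (1:A) + (q:R) • b.ginv i := by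
  have h := congrArg (· * b.ginv i) (b.quad i h1 hn)
  simp only [add_mul, smul_mul_assoc, one_mul, mul_assoc, b.mul_ginv i h1 hn, mul_one] at h
  simpa [smul_smul] using h

lemma ginv_eq (i : ℕ) (h1 : 1 ≤ i) (hn : i < n) :
    b.ginv i = ((q⁻¹:Rˣ):R) • b.g i - (((q⁻¹:Rˣ):R) * ((q:R)-1)) • (1:A) := by
  have h := g_eq (b := b) i h1 hn
  have h2 : (q:R) • b.ginv i = b.g i - ((q:R)-1) • (1:A) := by
    rw [h]; abel
  have h3 := QBP.usmul_cancel h2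
  rw [h3, smul_sub, smul_smul]

end basic
end QBP

namespace QBP
variable {b : QBrauer R q r δ n A}

private lemma mcr {u v : A} (h : u * v = 1) (a : A) : a * u * v = a := by
  rw [mul_assoc, h, mul_one]

/-- g i * g (i+1) * ginv i = ginv (i+1) * g i * g (i+1) (right-assoc form) -/
lemma V1 (i : ℕ) (h1 : 1 ≤ i) (hn : i+1 < n) :
    b.g i * (b.g (i+1) * b.ginv i) = b.ginv (i+1) * (b.g i * b.g (i+1)) := by
  have gi := b.mul_ginv i h1 (by omega)
  have ig := b.ginv_mul i h1 (by omega)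
  have gi1 := b.mul_ginv (i+1) (by omega) hn
  have ig1 := b.ginv_mul (i+1) (by omega) hn
  have hb := b.braid i h1 hn
  refine QBP.canl ig1 ?_
  refine QBP.canr gi ?_
  simp only [← mul_assoc, mcr gi, mcr ig, mcr gi1, mcr ig1, gi, ig, gi1, ig1,
    one_mul, mul_one]
  first | exact hb | exact hb.symm

/-- ginv i * ginv (i+1) * g i = g (i+1) * ginv i * ginv (i+1) -/
lemma V2 (i : ℕ) (h1 : 1 ≤ i) (hn : i+1 < n) :
    b.ginv i * (b.ginv (i+1) * b.g i) = b.g (i+1) * (b.ginv i * b.ginv (i+1)) := by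
  have gi := b.mul_ginv i h1 (by omega)
  have ig := b.ginv_mul i h1 (by omega)
  have gi1 := b.mul_ginv (i+1) (by omega) hn
  have ig1 := b.ginv_mul (i+1) (by omega) hn
  have hb := b.braid i h1 hn
  refine QBP.canl ig ?_
  refine QBP.canl ig1 ?_
  refine QBP.canr gi1 ?_
  refine QBP.canr gi ?_
  simp only [← mul_assoc, mcr gi, mcr ig, mcr gi1, mcr ig1, gi, ig, gi1, ig1,
    one_mul, mul_one]
  first | exact hb | exact hb.symm

/-- ginv (i+1) * ginv i * g (i+1) = g i * ginv (i+1) * ginv i -/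
lemma V4 (i : ℕ) (h1 : 1 ≤ i) (hn : i+1 < n) :
    b.ginv (i+1) * (b.ginv i * b.g (i+1)) = b.g i * (b.ginv (i+1) * b.ginv i) := by
  have gi := b.mul_ginv i h1 (by omega)
  have ig := b.ginv_mul i h1 (by omega)
  have gi1 := b.mul_ginv (i+1) (by omega) hn
  have ig1 := b.ginv_mul (i+1) (by omega) hn
  have hb := b.braid i h1 hn
  refine QBP.canl ig1 ?_
  refine QBP.canl ig ?_
  refine QBP.canr gi ?_
  refine QBP.canr gi1 ?_
  simp only [← mul_assoc, mcr gi, mcr ig, mcr gi1, mcr ig1, gi, ig, gi1, ig1,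
    one_mul, mul_one]
  first | exact hb | exact hb.symm

/-- braid in right-assoc ctx form -/
lemma braid_ctx (i : ℕ) (h1 : 1 ≤ i) (hn : i+1 < n) (x : A) :
    b.g i * (b.g (i+1) * (b.g i * x)) = b.g (i+1) * (b.g i * (b.g (i+1) * x)) := by
  refine QBP.ctx3 ?_ x
  have hb := b.braid i h1 hn
  simpa [mul_assoc] using hb

section scalars

lemma Ee (x : A) : b.e * (b.e * x) = (δ:R) • (b.e * x) := by
  rw [← mul_assoc, b.esq, smul_mul_assoc]

lemma Eg1c (x : A) : b.e * (b.g 1 * x) = (q:R) • (b.e * x) := by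
  rw [← mul_assoc, b.e_g1, smul_mul_assoc]

lemma G1ec (x : A) : b.g 1 * (b.e * x) = (q:R) • (b.e * x) := by
  rw [← mul_assoc, b.g1_e, smul_mul_assoc]

lemma Eg1ic (hn : 1 < n) (x : A) : b.e * (b.ginv 1 * x) = ((q⁻¹:Rˣ):R) • (b.e * x) := by
  rw [← mul_assoc, e_ginv1 hn, smul_mul_assoc]

lemma G1iec (hn : 1 < n) (x : A) : b.ginv 1 * (b.e * x) = ((q⁻¹:Rˣ):R) • (b.e * x) := by
  rw [← mul_assoc, ginv1_e hn, smul_mul_assoc]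

lemma Eg2Ec (x : A) : b.e * (b.g 2 * (b.e * x)) = (r:R) • (b.e * x) := by
  calc b.e * (b.g 2 * (b.e * x)) = (b.e * b.g 2 * b.e) * x := by
        rw [mul_assoc, mul_assoc]
  _ = (r:R) • (b.e * x) := by rw [b.e_g2_e, smul_mul_assoc]

lemma Eg2iEc (x : A) : b.e * (b.ginv 2 * (b.e * x)) = ((q⁻¹:Rˣ):R) • (b.e * x) := by
  calc b.e * (b.ginv 2 * (b.e * x)) = (b.e * b.ginv 2 * b.e) * x := by
        rw [mul_assoc, mul_assoc]
  _ = ((q⁻¹:Rˣ):R) • (b.e * x) := by rw [b.e_g2inv_e, smul_mul_assoc]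

lemma Egc (i : ℕ) (h2 : 2 < i) (hn : i < n) (x : A) :
    b.e * (b.g i * x) = b.g i * (b.e * x) := QBP.lswap (b.e_g i h2 hn) x

lemma Egic (i : ℕ) (h2 : 2 < i) (hn : i < n) (x : A) :
    b.e * (b.ginv i * x) = b.ginv i * (b.e * x) := QBP.lswap (e_gi i h2 hn) x

end scalars

section quadctx

lemma gsq_ctx (i : ℕ) (h1 : 1 ≤ i) (hn : i < n) (x : A) :
    b.g i * (b.g i * x) = ((q:R)-1) • (b.g i * x) + (q:R) • x := by
  have h := congrArg (· * x) (b.quad i h1 hn)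
  simpa [mul_assoc, add_mul, smul_mul_assoc] using h

lemma g_exp_ctx (i : ℕ) (h1 : 1 ≤ i) (hn : i < n) (x : A) :
    b.g i * x = ((q:R)-1) • x + (q:R) • (b.ginv i * x) := by
  have h := congrArg (· * x) (g_eq (b := b) i h1 hn)
  simpa [add_mul, smul_mul_assoc] using h

lemma ginv_exp_ctx (i : ℕ) (h1 : 1 ≤ i) (hn : i < n) (x : A) :
    b.ginv i * x = ((q⁻¹:Rˣ):R) • (b.g i * x) - (((q⁻¹:Rˣ):R) * ((q:R)-1)) • x := by
  have h := congrArg (· * x) (ginv_eq (b := b) i h1 hn)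
  simpa [sub_mul, smul_mul_assoc] using h

lemma ginvsq_ctx (i : ℕ) (h1 : 1 ≤ i) (hn : i < n) (x : A) :
    b.ginv i * (b.ginv i * x)
      = ((q⁻¹:Rˣ):R) • x - (((q⁻¹:Rˣ):R) * ((q:R)-1)) • (b.ginv i * x) := by
  rw [ginv_exp_ctx i h1 hn (b.ginv i * x), ← mul_assoc, b.mul_ginv i h1 hn, one_mul]

end quadctx
end QBP

namespace QBP

def wA (b : QBrauer R q r δ n A) : A := b.g 2 * (b.g 3 * (b.ginv 1 * b.ginv 2))
def wAinv (b : QBrauer R q r δ n A) : A := b.g 2 * (b.g 1 * (b.ginv 3 * b.ginv 2))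
def wT (b : QBrauer R q r δ n A) : A := b.g 4 * (b.g 5 * (b.ginv 3 * b.ginv 4))
def wTb (b : QBrauer R q r δ n A) : A := b.ginv 4 * (b.ginv 3 * (b.g 5 * b.g 4))
def wAb (b : QBrauer R q r δ n A) : A := b.ginv 2 * (b.ginv 1 * (b.g 3 * b.g 2))
def wA2 (b : QBrauer R q r δ n A) : A :=
  b.g 2 * (b.g 3 * (b.g 4 * (b.g 5 * (b.ginv 1 * (b.ginv 2 * (b.ginv 3 * b.ginv 4))))))
def wA2b (b : QBrauer R q r δ n A) : A := wTb b * wAb b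

variable {b : QBrauer R q r δ n A}

lemma wA_mul (x : A) : wA b * x = b.g 2 * (b.g 3 * (b.ginv 1 * (b.ginv 2 * x))) := by
  simp [wA, mul_assoc]

lemma wA2_mul (x : A) :
    wA2 b * x = b.g 2 * (b.g 3 * (b.g 4 * (b.g 5 *
      (b.ginv 1 * (b.ginv 2 * (b.ginv 3 * (b.ginv 4 * x))))))) := by
  simp [wA2, mul_assoc]

lemma wT_mul (x : A) : wT b * x = b.g 4 * (b.g 5 * (b.ginv 3 * (b.ginv 4 * x))) := by
  simp [wT, mul_assoc]

lemma wTb_mul (x : A) : wTb b * x = b.ginv 4 * (b.ginv 3 * (b.g 5 * (b.g 4 * x))) := by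
  simp [wTb, mul_assoc]

lemma wAb_mul (x : A) : wAb b * x = b.ginv 2 * (b.ginv 1 * (b.g 3 * (b.g 2 * x))) := by
  simp [wAb, mul_assoc]

lemma ee2_eq : ee b 2 = b.e * (wA b * b.e) := by
  show b.e * gp b 2 (2*(0+1)+1) * gm b 1 (2*(0+1)) * ee b 1 = _
  simp [ee, gp, gm, wA, List.range', mul_assoc]

end QBP
namespace QBP
variable {b : QBrauer R q r δ n A}

private lemma icl {u v : A} (h : u * v = 1) (x : A) : u * (v * x) = x := by
  rw [← mul_assoc, h, one_mul]

lemma E3L' (h4 : 4 ≤ n) : wA b * ee b 2 = ee b 2 := by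
  have h := b.E3_left h4
  rw [ee2_eq]
  show wA b * (b.e * (wA b * b.e)) = b.e * (wA b * b.e)
  calc wA b * (b.e * (wA b * b.e))
      = b.g 2 * b.g 3 * b.ginv 1 * b.ginv 2 *
        (b.e * (b.g 2 * b.g 3 * b.ginv 1 * b.ginv 2) * b.e) := by simp [wA, mul_assoc]
  _ = b.e * (b.g 2 * b.g 3 * b.ginv 1 * b.ginv 2) * b.e := h
  _ = b.e * (wA b * b.e) := by simp [wA, mul_assoc]

lemma E3R' (h4 : 4 ≤ n) : ee b 2 * wA b = ee b 2 := by
  have h := b.E3_right h4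
  rw [ee2_eq]
  calc b.e * (wA b * b.e) * wA b
      = b.e * (b.g 2 * b.g 3 * b.ginv 1 * b.ginv 2) * b.e *
        (b.g 2 * b.g 3 * b.ginv 1 * b.ginv 2) := by simp [wA, mul_assoc]
  _ = b.e * (b.g 2 * b.g 3 * b.ginv 1 * b.ginv 2) * b.e := h
  _ = b.e * (wA b * b.e) := by simp [wA, mul_assoc]

lemma e_ee2 : b.e * ee b 2 = (δ:R) • ee b 2 := by
  rw [ee2_eq]; exact Ee _

lemma ee2_e : ee b 2 * b.e = (δ:R) • ee b 2 := by
  rw [ee2_eq, mul_assoc, mul_assoc, b.esq, mul_smul_comm, mul_smul_comm]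

lemma ee2_g1 : ee b 2 * b.g 1 = (q:R) • ee b 2 := by
  rw [ee2_eq, mul_assoc, mul_assoc, b.e_g1, mul_smul_comm, mul_smul_comm]

lemma g1_ee2 : b.g 1 * ee b 2 = (q:R) • ee b 2 := by
  rw [ee2_eq, G1ec]

lemma wA_wAinv (h4 : 4 ≤ n) : wA b * wAinv b = 1 := by
  rw [wA_mul, wAinv]
  rw [icl (b.ginv_mul 2 (by omega) (by omega))]
  rw [icl (b.ginv_mul 1 (by omega) (by omega))]
  rw [icl (b.mul_ginv 3 (by omega) (by omega))]
  exact b.mul_ginv 2 (by omega) (by omega)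

lemma g3_a1 (h4 : 4 ≤ n) : b.g 3 * wA b = wA b * b.g 1 := by
  calc b.g 3 * wA b = b.g 3 * (b.g 2 * (b.g 3 * (b.ginv 1 * b.ginv 2))) := by rw [wA]
  _ = b.g 2 * (b.g 3 * (b.g 2 * (b.ginv 1 * b.ginv 2))) :=
      (braid_ctx 2 (by omega) (by omega) _).symm
  _ = b.g 2 * (b.g 3 * (b.ginv 1 * (b.ginv 2 * b.g 1))) := by
      rw [← V2 1 (by omega) (by omega)]
  _ = wA b * b.g 1 := by simp [wA, mul_assoc]

lemma g3_ee2 (h4 : 4 ≤ n) : b.g 3 * ee b 2 = (q:R) • ee b 2 := by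
  rw [← E3L' h4, ← mul_assoc, g3_a1 h4, mul_assoc, g1_ee2, mul_smul_comm, E3L' h4]

lemma ee2_g3 (h4 : 4 ≤ n) : ee b 2 * b.g 3 = (q:R) • ee b 2 := by
  refine QBP.canr (wA_wAinv (b := b) h4) ?_
  rw [mul_assoc, g3_a1 h4, ← mul_assoc, E3R' h4, smul_mul_assoc, E3R' h4, ee2_g1]

lemma ee2_g3i (h4 : 4 ≤ n) : ee b 2 * b.ginv 3 = ((q⁻¹:Rˣ):R) • ee b 2 := by
  have h1 : (q:R) • (ee b 2 * b.ginv 3) = ee b 2 := by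
    rw [← smul_mul_assoc, ← ee2_g3 (b := b) h4, mcr (b.mul_ginv 3 (by omega) (by omega))]
  exact QBP.usmul_cancel h1

lemma g3i_ee2 (h4 : 4 ≤ n) : b.ginv 3 * ee b 2 = ((q⁻¹:Rˣ):R) • ee b 2 := by
  have h1 : (q:R) • (b.ginv 3 * ee b 2) = ee b 2 := by
    rw [← mul_smul_comm, ← g3_ee2 (b := b) h4, icl (b.ginv_mul 3 (by omega) (by omega))]
  exact QBP.usmul_cancel h1

lemma ee2_sq (h4 : 4 ≤ n) : ee b 2 * ee b 2 = ((δ:R)*(δ:R)) • ee b 2 := by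
  calc ee b 2 * ee b 2 = b.e*(wA b*(b.e*(b.e*(wA b*b.e)))) := by
        rw [ee2_eq]; simp [mul_assoc]
  _ = b.e*(wA b*((δ:R)•(b.e*(wA b*b.e)))) := by rw [Ee]
  _ = (δ:R)•(b.e*(wA b*(b.e*(wA b*b.e)))) := by rw [mul_smul_comm, mul_smul_comm]
  _ = (δ:R)•(ee b 2*(wA b*b.e)) := by rw [ee2_eq]; simp [mul_assoc]
  _ = (δ:R)•((ee b 2*wA b)*b.e) := by rw [mul_assoc]
  _ = (δ:R)•(ee b 2*b.e) := by rw [E3R' h4]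
  _ = ((δ:R)*(δ:R))•ee b 2 := by rw [ee2_e, smul_smul]

lemma ee2_gj (j : ℕ) (h5 : 5 ≤ j) (hj : j < n) : ee b 2 * b.g j = b.g j * ee b 2 := by
  have ce := b.e_g j (by omega) hj
  have c2 := b.gcomm 2 j (by omega) (by omega) hj
  have c3 := b.gcomm 3 j (by omega) (by omega) hj
  have cv1 := c_vg (b := b) 1 j (by omega) (by omega) hj
  have cv2 := c_vg (b := b) 2 j (by omega) (by omega) hj
  calc ee b 2 * b.g j
      = b.e*(b.g 2*(b.g 3*(b.ginv 1*(b.ginv 2*(b.e*b.g j))))) := by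
        rw [ee2_eq]; simp [wA, mul_assoc]
  _ = b.e*(b.g 2*(b.g 3*(b.ginv 1*(b.ginv 2*(b.g j*b.e))))) := by rw [ce]
  _ = b.g j * ee b 2 := by
      rw [QBP.lswap cv2, QBP.lswap cv1, QBP.lswap c3, QBP.lswap c2, ← mul_assoc, ce,
        mul_assoc, ee2_eq]
      simp [wA, mul_assoc]

end QBP

namespace QBP
variable {b : QBrauer R q r δ n A}

/-- specialized braid context at (3,4) with clean numerals -/
lemma hbr34 (h5 : 5 ≤ n) (y : A) :
    b.g 3*(b.g 4*(b.g 3*y)) = b.g 4*(b.g 3*(b.g 4*y)) := by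
  have h := braid_ctx (b:=b) 3 (by omega) (by omega) y
  norm_num at h; exact h

lemma hbr23 (h4 : 4 ≤ n) (y : A) :
    b.g 2*(b.g 3*(b.g 2*y)) = b.g 3*(b.g 2*(b.g 3*y)) := by
  have h := braid_ctx (b:=b) 2 (by omega) (by omega) y
  norm_num at h; exact h

lemma hbr45 (h6 : 6 ≤ n) (y : A) :
    b.g 4*(b.g 5*(b.g 4*y)) = b.g 5*(b.g 4*(b.g 5*y)) := by
  have h := braid_ctx (b:=b) 4 (by omega) (by omega) y
  norm_num at h; exact h

lemma hbr12 (h3 : 3 ≤ n) (y : A) :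
    b.g 1*(b.g 2*(b.g 1*y)) = b.g 2*(b.g 1*(b.g 2*y)) := by
  have h := braid_ctx (b:=b) 1 (by omega) (by omega) y
  norm_num at h; exact h

lemma s1 (h4 : 4 ≤ n) (x : A) :
    b.e*(b.g 2*(b.g 3*(b.ginv 2*(b.e*x)))) = (r:R)•(b.e*x) := by
  have h3n : 3 < n := by omega
  have hV1 : b.g 2 * (b.g 3 * b.ginv 2) = b.ginv 3 * (b.g 2 * b.g 3) := by
    have h := V1 (b := b) 2 (by omega) (by omega); norm_num at h; exact h
  rw [QBP.ctx3 hV1 (b.e*x)]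
  rw [← QBP.lswap (b.e_g 3 (by omega) h3n) x]
  rw [Egic 3 (by omega) h3n]
  rw [Eg2Ec]
  rw [mul_smul_comm]
  rw [QBP.lswap (b.e_g 3 (by omega) h3n) x]
  rw [icl (b.ginv_mul 3 (by omega) h3n)]

lemma E1c (h5 : 5 ≤ n) (x : A) :
    b.e*(b.g 2*(b.g 3*(b.g 4*(b.g 3*(b.ginv 2*(b.e*x))))))
      = (r:R)•(b.g 4*(b.g 4*(b.e*x))) := by
  have h4n : 4 < n := by omega
  have c24 := b.gcomm 2 4 (by omega) (by omega) h4n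
  have cv24 := c_vg (b := b) 2 4 (by omega) (by omega) h4n
  rw [hbr34 h5]
  rw [← QBP.lswap cv24]
  rw [← QBP.lswap (b.e_g 4 (by omega) h4n) x]
  rw [QBP.lswap c24]
  rw [Egc 4 (by omega) h4n]
  rw [s1 (by omega)]
  rw [mul_smul_comm]

lemma E2c (h5 : 5 ≤ n) (x : A) :
    b.e*(b.g 2*(b.g 3*(b.g 4*(b.g 3*(b.ginv 1*(b.ginv 2*(b.e*x)))))))
      = b.g 4*(b.e*(b.g 2*(b.g 3*(b.ginv 1*(b.ginv 2*(b.e*(b.g 4*x))))))) := by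
  have h4n : 4 < n := by omega
  have h3n : 3 < n := by omega
  have c24 := b.gcomm 2 4 (by omega) (by omega) h4n
  have cv13 := c_vg (b := b) 1 3 (by omega) (by omega) h3n
  have cv14 := c_vg (b := b) 1 4 (by omega) (by omega) h4n
  have cv24 := c_vg (b := b) 2 4 (by omega) (by omega) h4n
  rw [← QBP.lswap cv13]
  rw [← QBP.lswap cv14]
  rw [← QBP.lswap cv13]
  rw [hbr34 h5]
  rw [← QBP.lswap cv24]
  rw [← QBP.lswap (b.e_g 4 (by omega) h4n) x]
  rw [QBP.lswap cv14]
  rw [QBP.lswap c24]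
  rw [Egc 4 (by omega) h4n]
  rw [QBP.lswap cv13]

end QBP

namespace QBP
variable {b : QBrauer R q r δ n A}

/-- The key contraction: `e a₁ g₄ e_{(2)} = r e_{(2)}`. -/
lemma Dlem (h5 : 5 ≤ n) : b.e * (wA b * (b.g 4 * ee b 2)) = (r:R) • ee b 2 := by
  have h4 : 4 ≤ n := by omega
  have h4n : 4 < n := by omega
  have hqi : ((q⁻¹:Rˣ):R) * (q:R) = 1 := q.inv_mul
  set qi : R := ((q⁻¹:Rˣ):R) with hqidef
  set t : R := qi * ((q:R)-1) with htdef
  set D : A := b.e * (wA b * (b.g 4 * ee b 2)) with hDdef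
  have cv14 := c_vg (b := b) 1 4 (by omega) (by omega) h4n
  have cv24 := c_vg (b := b) 2 4 (by omega) (by omega) h4n
  have cv13 := c_vg (b := b) 1 3 (by omega) (by omega) (by omega)
  have hw : D = b.e*(b.g 2*(b.g 3*(b.g 4*(b.g 3*(b.ginv 1*(b.ginv 1*(b.ginv 2*(b.e*(wA b*b.e))))))))) := by
    rw [hDdef, ← E3L' h4, ee2_eq]
    rw [wA_mul (b.g 4 * (wA b * (b.e * (wA b * b.e))))]
    rw [wA_mul (b.e * (wA b * b.e))]
    rw [QBP.lswap cv24]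
    rw [QBP.lswap cv14]
    rw [icl (b.ginv_mul 2 (by omega) (by omega))]
    rw [QBP.lswap cv13]
  have hsplit : D = qi•(b.e*(b.g 2*(b.g 3*(b.g 4*(b.g 3*(b.ginv 2*(b.e*(wA b*b.e))))))))
      - t•(b.e*(b.g 2*(b.g 3*(b.g 4*(b.g 3*(b.ginv 1*(b.ginv 2*(b.e*(wA b*b.e))))))))) := by
    rw [hw, ginvsq_ctx 1 (by omega) (by omega)]
    simp only [mul_sub, mul_smul_comm]
    match_scalars <;> ring
  have hT1 : b.e*(b.g 2*(b.g 3*(b.g 4*(b.g 3*(b.ginv 2*(b.e*(wA b*b.e)))))))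
      = (r:R)•(b.g 4*(b.g 4*(ee b 2))) := by
    rw [E1c h5 (wA b * b.e), ← ee2_eq]
  have hT2 : b.e*(b.g 2*(b.g 3*(b.g 4*(b.g 3*(b.ginv 1*(b.ginv 2*(b.e*(wA b*b.e))))))))
      = b.g 4 * D := by
    rw [E2c h5 (wA b * b.e)]
    rw [hDdef, ee2_eq, wA_mul (b.g 4 * (b.e * (wA b * b.e)))]
    rw [Egc 4 (by omega) h4n (wA b * b.e)]
  have hkey : D = (qi*(r:R))•(b.g 4*(b.g 4*ee b 2)) - t•(b.g 4*D) := by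
    nth_rewrite 1 [hsplit]
    rw [hT1, hT2, smul_smul]
  have hsum : D + t•(b.g 4*D) = (qi*(r:R))•(b.g 4*(b.g 4*ee b 2)) := by
    nth_rewrite 1 [hkey]
    abel
  have hP : ((1:A) + t•b.g 4) * D = ((1:A) + t•b.g 4)*((r:R)•ee b 2) := by
    have lhs1 : ((1:A) + t•b.g 4)*D = D + t•(b.g 4*D) := by
      rw [add_mul, one_mul, smul_mul_assoc]
    have rhs1 : ((1:A) + t•b.g 4)*((r:R)•ee b 2)
        = (r:R)•ee b 2 + (t*(r:R))•(b.g 4*ee b 2) := by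
      rw [add_mul, one_mul, smul_mul_assoc, mul_smul_comm, smul_smul]
    rw [lhs1, rhs1, hsum, gsq_ctx 4 (by omega) h4n]
    rw [smul_add, smul_smul, smul_smul]
    have c1 : qi*(r:R)*((q:R)-1) = t*(r:R) := by rw [htdef]; ring
    have c2 : qi*(r:R)*(q:R) = (r:R) := by
      calc qi*(r:R)*(q:R) = (qi*(q:R))*(r:R) := by ring
      _ = (r:R) := by rw [hqi, one_mul]
    rw [c1, c2]; abel
  -- invertibility of (1 + t g₄)
  set al : R := 1 + t*((q:R)-1) with haldef
  set be : R := -t with hbedef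
  have hQ : (al•(1:A) + be•b.g 4) * ((1:A) + t•b.g 4) = 1 := by
    have hq4 := b.quad 4 (by omega) h4n
    simp only [add_mul, mul_add, smul_mul_assoc, mul_smul_comm, one_mul, mul_one,
      smul_smul, smul_add]
    rw [hq4]
    simp only [smul_add, smul_smul]
    match_scalars
    · simp only [haldef, hbedef, htdef]
      linear_combination (-(qi * ((q:R)-1) * ((q:R)-1))) * hqi
    · simp only [haldef, hbedef, htdef]
      ring
  calc D = ((al•(1:A) + be•b.g 4) * ((1:A) + t•b.g 4))*D := by rw [hQ, one_mul]
  _ = (al•(1:A) + be•b.g 4) * (((1:A) + t•b.g 4)*D) := by rw [mul_assoc]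
  _ = (al•(1:A) + be•b.g 4) * (((1:A) + t•b.g 4)*((r:R)•ee b 2)) := by rw [hP]
  _ = ((al•(1:A) + be•b.g 4) * ((1:A) + t•b.g 4))*((r:R)•ee b 2) := by rw [mul_assoc]
  _ = (r:R)•ee b 2 := by rw [hQ, one_mul]

end QBP

namespace QBP
variable {b : QBrauer R q r δ n A}

lemma e_g2inv_e_ctx' : b.e * (b.ginv 2 * b.e) = ((q⁻¹:Rˣ):R) • b.e := by
  have h := b.e_g2inv_e; rw [mul_assoc] at h; exact h

/-- `e ā₁ e = e a₁ e` -/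
lemma M1 (h4 : 4 ≤ n) : b.e * (wAb b * b.e) = b.e * (wA b * b.e) := by
  have hqi : ((q⁻¹:Rˣ):R) * (q:R) = 1 := q.inv_mul
  have h3n : 3 < n := by omega
  have cv13 := c_vg (b := b) 1 3 (by omega) (by omega) h3n
  rw [wAb_mul b.e, wA_mul b.e]
  rw [QBP.lswap cv13]
  rw [g_exp_ctx 2 (by omega) (by omega) b.e]
  simp only [mul_add, mul_smul_comm]
  -- T1 piece
  rw [ginv1_e (by omega)]
  simp only [mul_smul_comm]
  rw [← b.e_g 3 (by omega) h3n]
  rw [Eg2iEc (x := b.g 3)]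
  -- T2 piece
  rw [ginv_exp_ctx 2 (by omega) (by omega) (b.g 3*(b.ginv 1*(b.ginv 2*b.e)))]
  simp only [mul_sub, mul_smul_comm, smul_sub, smul_add, smul_smul]
  rw [Egc 3 (by omega) h3n]
  rw [Eg1ic (by omega)]
  simp only [mul_smul_comm, smul_smul]
  rw [e_g2inv_e_ctx']
  simp only [mul_smul_comm, smul_smul]
  rw [← b.e_g 3 (by omega) h3n]
  match_scalars
  · linear_combination (-(((q:R)-1)*((q⁻¹:Rˣ):R)^2)) * hqi
  · linear_combination hqi

end QBP

namespace QBP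

def wA2b' (b : QBrauer R q r δ n A) : A :=
  b.ginv 4 * (b.ginv 3 * (b.ginv 2 * (b.ginv 1 * (b.g 5 * (b.g 4 * (b.g 3 * b.g 2))))))

variable {b : QBrauer R q r δ n A}

lemma wA2b'_mul (x : A) : wA2b' b * x =
    b.ginv 4 * (b.ginv 3 * (b.ginv 2 * (b.ginv 1 * (b.g 5 * (b.g 4 * (b.g 3 * (b.g 2 * x))))))) := by
  simp [wA2b', mul_assoc]

section shifts
variable (h6 : 6 ≤ n)
include h6

private lemma c24' : b.g 2 * b.g 4 = b.g 4 * b.g 2 := b.gcomm 2 4 (by omega) (by omega) (by omega)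
private lemma c25' : b.g 2 * b.g 5 = b.g 5 * b.g 2 := b.gcomm 2 5 (by omega) (by omega) (by omega)
private lemma c35' : b.g 3 * b.g 5 = b.g 5 * b.g 3 := b.gcomm 3 5 (by omega) (by omega) (by omega)
private lemma cv13' : b.ginv 1 * b.g 3 = b.g 3 * b.ginv 1 := c_vg 1 3 (by omega) (by omega) (by omega)
private lemma cv14' : b.ginv 1 * b.g 4 = b.g 4 * b.ginv 1 := c_vg 1 4 (by omega) (by omega) (by omega)
private lemma cv15' : b.ginv 1 * b.g 5 = b.g 5 * b.ginv 1 := c_vg 1 5 (by omega) (by omega) (by omega)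
private lemma cv24' : b.ginv 2 * b.g 4 = b.g 4 * b.ginv 2 := c_vg 2 4 (by omega) (by omega) (by omega)
private lemma cv25' : b.ginv 2 * b.g 5 = b.g 5 * b.ginv 2 := c_vg 2 5 (by omega) (by omega) (by omega)
private lemma cg13' : b.g 1 * b.ginv 3 = b.ginv 3 * b.g 1 := c_gv 1 3 (by omega) (by omega) (by omega)
private lemma cg14' : b.g 1 * b.ginv 4 = b.ginv 4 * b.g 1 := c_gv 1 4 (by omega) (by omega) (by omega)
private lemma cg24' : b.g 2 * b.ginv 4 = b.ginv 4 * b.g 2 := c_gv 2 4 (by omega) (by omega) (by omega)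
private lemma hV21' : b.ginv 1 * (b.ginv 2 * b.g 1) = b.g 2 * (b.ginv 1 * b.ginv 2) := by
  have h := V2 (b := b) 1 (by omega) (by omega); norm_num at h; exact h
private lemma hV22' : b.ginv 2 * (b.ginv 3 * b.g 2) = b.g 3 * (b.ginv 2 * b.ginv 3) := by
  have h := V2 (b := b) 2 (by omega) (by omega); norm_num at h; exact h
private lemma hV23' : b.ginv 3 * (b.ginv 4 * b.g 3) = b.g 4 * (b.ginv 3 * b.ginv 4) := by
  have h := V2 (b := b) 3 (by omega) (by omega); norm_num at h; exact h
private lemma hV41' : b.ginv 2 * (b.ginv 1 * b.g 2) = b.g 1 * (b.ginv 2 * b.ginv 1) := by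
  have h := V4 (b := b) 1 (by omega) (by omega); norm_num at h; exact h
private lemma hV42' : b.ginv 3 * (b.ginv 2 * b.g 3) = b.g 2 * (b.ginv 3 * b.ginv 2) := by
  have h := V4 (b := b) 2 (by omega) (by omega); norm_num at h; exact h
private lemma hV43' : b.ginv 4 * (b.ginv 3 * b.g 4) = b.g 3 * (b.ginv 4 * b.ginv 3) := by
  have h := V4 (b := b) 3 (by omega) (by omega); norm_num at h; exact h

lemma a1_t2 : wA b * wT b = wA2 b := by
  rw [wA_mul (wT b), wT]
  rw [QBP.lswap (cv24' h6)]
  rw [QBP.lswap (cv14' h6)]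
  rw [QBP.lswap (cv25' h6)]
  rw [QBP.lswap (cv15' h6)]
  simp [wA2, mul_assoc]

lemma S1 : wA2 b * b.g 1 = b.g 3 * wA2 b := by
  rw [wA2_mul (b.g 1)]
  rw [← (cg14' h6)]
  rw [← QBP.lswap (cg13' h6)]
  rw [QBP.ctx3 (hV21' h6)]
  rw [← QBP.lswap (c25' h6)]
  rw [← QBP.lswap (c24' h6)]
  rw [hbr23 (by omega)]
  simp [wA2, mul_assoc]

lemma S2 : wA2 b * b.g 2 = b.g 4 * wA2 b := by
  rw [wA2_mul (b.g 2)]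
  rw [← (cg24' h6)]
  rw [QBP.ctx3 (hV22' h6)]
  rw [QBP.lswap (cv13' h6)]
  rw [← QBP.lswap (c35' h6)]
  rw [hbr34 (by omega)]
  rw [QBP.lswap (c24' h6)]
  simp [wA2, mul_assoc]

lemma S3 : wA2 b * b.g 3 = b.g 5 * wA2 b := by
  rw [wA2_mul (b.g 3)]
  rw [hV23' h6]
  rw [QBP.lswap (cv24' h6)]
  rw [QBP.lswap (cv14' h6)]
  rw [hbr45 h6]
  rw [QBP.lswap (c35' h6)]
  rw [QBP.lswap (c25' h6)]
  simp [wA2, mul_assoc]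

lemma S1' : wA2 b * b.ginv 1 = b.ginv 3 * wA2 b :=
  QBP.shift_inv (b.mul_ginv 1 (by omega) (by omega)) (b.ginv_mul 3 (by omega) (by omega)) (S1 h6)

lemma S2' : wA2 b * b.ginv 2 = b.ginv 4 * wA2 b :=
  QBP.shift_inv (b.mul_ginv 2 (by omega) (by omega)) (b.ginv_mul 4 (by omega) (by omega)) (S2 h6)

lemma t2_a2 : wT b * wA2 b = wA2 b * wA b := by
  have h : wA2 b * wA b = wT b * wA2 b := by
    rw [wA]
    rw [QBP.lswap' (S2 h6)]
    rw [QBP.lswap' (S3 h6)]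
    rw [QBP.lswap' (S1' h6)]
    rw [← mul_assoc, S2' h6, mul_assoc]
    rw [wT_mul]
  exact h.symm

lemma wA2b_eq : wA2b b = wA2b' b := by
  rw [wA2b, wTb, wAb]
  simp only [mul_assoc]
  rw [← QBP.lswap (cv24' h6)]
  rw [← QBP.lswap (cv14' h6)]
  rw [← QBP.lswap (cv25' h6)]
  rw [← QBP.lswap (cv15' h6)]
  simp [wA2b', mul_assoc]

lemma Sb4 : wA2b' b * b.g 4 = b.g 2 * wA2b' b := by
  rw [wA2b'_mul (b.g 4)]
  rw [(c24' h6)]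
  rw [← hbr34 (by omega)]
  rw [← QBP.lswap (c35' h6)]
  rw [QBP.lswap (cv13' h6)]
  rw [QBP.ctx3 (hV42' h6)]
  rw [← QBP.lswap (cg24' h6)]
  simp [wA2b', mul_assoc]

lemma Sb5 : wA2b' b * b.g 5 = b.g 3 * wA2b' b := by
  rw [wA2b'_mul (b.g 5)]
  rw [(c25' h6)]
  rw [QBP.lswap (c35' h6)]
  rw [← hbr45 h6]
  rw [QBP.lswap (cv14' h6)]
  rw [QBP.lswap (cv24' h6)]
  rw [QBP.ctx3 (hV43' h6)]
  simp [wA2b', mul_assoc]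

lemma Sb3 : wA2b' b * b.g 3 = b.g 1 * wA2b' b := by
  have hb23c : b.g 3 * (b.g 2 * b.g 3) = b.g 2 * (b.g 3 * b.g 2) := by
    have h := b.braid 2 (by omega) (by omega)
    norm_num at h
    simp only [mul_assoc] at h
    exact h.symm
  rw [wA2b'_mul (b.g 3)]
  rw [hb23c]
  rw [← QBP.lswap (c24' h6)]
  rw [← QBP.lswap (c25' h6)]
  rw [QBP.ctx3 (hV41' h6)]
  rw [← QBP.lswap (cg13' h6)]
  rw [← QBP.lswap (cg14' h6)]
  simp [wA2b', mul_assoc]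

lemma Sb3' : wA2b' b * b.ginv 3 = b.ginv 1 * wA2b' b :=
  QBP.shift_inv (b.mul_ginv 3 (by omega) (by omega)) (b.ginv_mul 1 (by omega) (by omega)) (Sb3 h6)

lemma Sb4' : wA2b' b * b.ginv 4 = b.ginv 2 * wA2b' b :=
  QBP.shift_inv (b.mul_ginv 4 (by omega) (by omega)) (b.ginv_mul 2 (by omega) (by omega)) (Sb4 h6)

lemma a2b_t2 : wA2b' b * wT b = wA b * wA2b' b := by
  rw [wT]
  rw [QBP.lswap' (Sb4 h6)]
  rw [QBP.lswap' (Sb5 h6)]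
  rw [QBP.lswap' (Sb3' h6)]
  rw [← mul_assoc, Sb4' h6, mul_assoc]
  rw [wA_mul]

end shifts
end QBP

namespace QBP
variable {b : QBrauer R q r δ n A}

lemma wT_e_swap (h6 : 6 ≤ n) (x : A) : wT b * (b.e * x) = b.e * (wT b * x) := by
  rw [wT_mul (b.e * x), wT_mul x]
  rw [← QBP.lswap (e_gi (b := b) 4 (by omega) (by omega))]
  rw [← QBP.lswap (e_gi (b := b) 3 (by omega) (by omega))]
  rw [← QBP.lswap (b.e_g 5 (by omega) (by omega))]
  rw [← QBP.lswap (b.e_g 4 (by omega) (by omega))]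

lemma wTb_e_swap (h6 : 6 ≤ n) (x : A) : wTb b * (b.e * x) = b.e * (wTb b * x) := by
  rw [wTb_mul (b.e * x), wTb_mul x]
  rw [← QBP.lswap (b.e_g 4 (by omega) (by omega))]
  rw [← QBP.lswap (b.e_g 5 (by omega) (by omega))]
  rw [← QBP.lswap (e_gi (b := b) 3 (by omega) (by omega))]
  rw [← QBP.lswap (e_gi (b := b) 4 (by omega) (by omega))]

lemma e_wT (h6 : 6 ≤ n) : b.e * wT b = wT b * b.e := by
  have h := wT_e_swap (b := b) h6 (1:A)
  simpa using h.symm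

lemma ee2_g4_ee2 (h5 : 5 ≤ n) :
    ee b 2 * (b.g 4 * ee b 2) = ((r:R)*(δ:R)) • ee b 2 := by
  nth_rewrite 1 [ee2_eq]
  simp only [mul_assoc]
  rw [QBP.lswap (b.e_g 4 (by omega) (by omega)), e_ee2]
  simp only [mul_smul_comm]
  rw [Dlem h5, smul_smul, mul_comm (δ:R) (r:R)]

lemma ee2_g4i_ee2 (h5 : 5 ≤ n) :
    ee b 2 * (b.ginv 4 * ee b 2) = (((q⁻¹:Rˣ):R)*(δ:R)) • ee b 2 := by
  rw [ginv_exp_ctx 4 (by omega) (by omega) (ee b 2)]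
  rw [mul_sub, mul_smul_comm, mul_smul_comm, ee2_g4_ee2 h5, ee2_sq (by omega)]
  simp only [smul_smul]
  match_scalars
  linear_combination (-(((q⁻¹:Rˣ):R)*(δ:R))) * b.param

lemma ee2_g4i_ee2_ctx (h5 : 5 ≤ n) (x : A) :
    ee b 2 * (b.ginv 4 * (ee b 2 * x)) = (((q⁻¹:Rˣ):R)*(δ:R)) • (ee b 2 * x) := by
  have h := congrArg (· * x) (ee2_g4i_ee2 (b := b) h5)
  simpa [mul_assoc, smul_mul_assoc] using h

lemma ee2_g3i_ctx (h4 : 4 ≤ n) (x : A) :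
    ee b 2 * (b.ginv 3 * x) = ((q⁻¹:Rˣ):R) • (ee b 2 * x) := by
  have h := congrArg (· * x) (ee2_g3i (b := b) h4)
  simpa [mul_assoc, smul_mul_assoc] using h

lemma ee2_g5 (h6 : 6 ≤ n) : ee b 2 * b.g 5 = b.g 5 * ee b 2 :=
  ee2_gj 5 (by omega) (by omega)

/-- mirror of M1, one level up:  `ee₂ t̄₂ ee₂ = ee₂ t₂ ee₂` -/
lemma RE3 (h6 : 6 ≤ n) : ee b 2 * (wTb b * ee b 2) = ee b 2 * (wT b * ee b 2) := by
  have h4 : 4 ≤ n := by omega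
  have h5 : 5 ≤ n := by omega
  have hqi : ((q⁻¹:Rˣ):R) * (q:R) = 1 := q.inv_mul
  have cv35 := c_vg (b := b) 3 5 (by omega) (by omega) (by omega)
  rw [wTb_mul (ee b 2), wT_mul (ee b 2)]
  rw [QBP.lswap cv35]
  rw [g_exp_ctx 4 (by omega) (by omega) (ee b 2)]
  simp only [mul_add, mul_smul_comm]
  rw [g3i_ee2 h4]
  simp only [mul_smul_comm]
  rw [← ee2_g5 h6]
  rw [ee2_g4i_ee2_ctx h5]
  rw [ginv_exp_ctx 4 (by omega) (by omega) (b.g 5*(b.ginv 3*(b.ginv 4*ee b 2)))]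
  simp only [mul_sub, mul_smul_comm, smul_sub, smul_add, smul_smul]
  rw [QBP.lswap (ee2_g5 h6)]
  rw [ee2_g3i_ctx h4]
  simp only [mul_smul_comm, smul_smul]
  rw [ee2_g4i_ee2 h5]
  simp only [mul_smul_comm, smul_smul]
  rw [← ee2_g5 h6]
  match_scalars
  · linear_combination (-(((q:R)-1)*((q⁻¹:Rˣ):R)^2*(δ:R))) * hqi
  · linear_combination hqi

lemma f2 (h6 : 6 ≤ n) :
    ee b 2 * (wT b * ee b 2) = (δ:R)•(b.e*(wA2 b*ee b 2)) := by
  calc ee b 2 * (wT b * ee b 2)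
      = (δ:R)•(b.e*(wA b*(b.e*(wT b*(wA b*b.e))))) := by
        rw [ee2_eq]; simp only [mul_assoc]
        rw [wT_e_swap h6, Ee]; simp only [mul_smul_comm]
  _ = (δ:R)•(b.e*(wA2 b*ee b 2)) := by
        rw [← a1_t2 h6, ee2_eq]; simp only [mul_assoc]
        rw [wT_e_swap h6]

lemma mf2 (h6 : 6 ≤ n) :
    ee b 2 * (wTb b * ee b 2) = (δ:R)•(ee b 2*(wA2b b*b.e)) := by
  have h4 : 4 ≤ n := by omega
  have hM : ee b 2 = b.e*(wAb b*b.e) := by rw [ee2_eq, ← M1 h4]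
  calc ee b 2 * (wTb b * ee b 2)
      = ee b 2 * (wTb b * (b.e*(wAb b*b.e))) := by nth_rewrite 2 [hM]; rfl
  _ = ee b 2 * (b.e * (wTb b * (wAb b*b.e))) := by rw [wTb_e_swap h6]
  _ = (δ:R)•(b.e*(wA b*(b.e*(wTb b*(wAb b*b.e))))) := by
        nth_rewrite 1 [ee2_eq]
        simp only [mul_assoc]
        rw [Ee]; simp only [mul_smul_comm]
  _ = (δ:R)•(ee b 2*(wA2b b*b.e)) := by
        rw [ee2_eq, wA2b]; simp only [mul_assoc]

lemma X4 (h6 : 6 ≤ n) :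
    wT b * (ee b 2*(wT b*ee b 2)) = ee b 2*(wT b*ee b 2) := by
  rw [f2 h6, mul_smul_comm, wT_e_swap h6, ← mul_assoc (wT b) (wA2 b) (ee b 2),
    t2_a2 h6, mul_assoc, E3L' (by omega)]

lemma X5 (h6 : 6 ≤ n) :
    (ee b 2*(wT b*ee b 2)) * wT b = ee b 2*(wT b*ee b 2) := by
  have h4 : 4 ≤ n := by omega
  rw [← RE3 h6, mf2 h6, smul_mul_assoc]
  simp only [mul_assoc]
  rw [e_wT h6, wA2b_eq h6]
  rw [← mul_assoc (wA2b' b) (wT b) b.e, a2b_t2 h6, mul_assoc]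
  rw [← mul_assoc (ee b 2) (wA b), E3R' h4]

end QBP

namespace QBP
variable {b : QBrauer R q r δ n A}

/-- the shifted q-Brauer structure -/
def shiftQB (b : QBrauer R q r δ n A) (h5 : 5 ≤ n) : QBrauer R q r δ (n-2) A where
  g i := b.g (i+2)
  ginv i := b.ginv (i+2)
  e := ((δ⁻¹:Rˣ):R) • ee b 2
  param := b.param
  mul_ginv i h1 h2 := b.mul_ginv (i+2) (by omega) (by omega)
  ginv_mul i h1 h2 := b.ginv_mul (i+2) (by omega) (by omega)
  braid i h1 h2 := by
    have h := b.braid (i+2) (by omega) (by omega)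
    have e1 : i+2+1 = i+1+2 := by omega
    rw [e1] at h
    exact h
  gcomm i j h1 h2 h3 := b.gcomm (i+2) (j+2) (by omega) (by omega) (by omega)
  quad i h1 h2 := b.quad (i+2) (by omega) (by omega)
  esq := by
    have hd : ((δ⁻¹:Rˣ):R)*(δ:R) = 1 := δ.inv_mul
    simp only [smul_mul_assoc, mul_smul_comm, smul_smul, ee2_sq (show 4 ≤ n by omega)]
    match_scalars
    linear_combination (((δ⁻¹:Rˣ):R)*(δ:R)) * hd
  e_g i h2 h3 := by
    simp only [smul_mul_assoc, mul_smul_comm]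
    rw [ee2_gj (i+2) (by omega) (by omega)]
  e_g1 := by
    simp only [smul_mul_assoc, mul_smul_comm, smul_smul]
    rw [ee2_g3 (show 4 ≤ n by omega), smul_smul, mul_comm]
  g1_e := by
    simp only [smul_mul_assoc, mul_smul_comm, smul_smul]
    rw [g3_ee2 (show 4 ≤ n by omega), smul_smul, mul_comm]
  e_g2_e := by
    have hd : ((δ⁻¹:Rˣ):R)*(δ:R) = 1 := δ.inv_mul
    simp only [smul_mul_assoc, mul_smul_comm, smul_smul, mul_assoc]
    rw [ee2_g4_ee2 (show 5 ≤ n by omega)]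
    simp only [smul_smul]
    match_scalars
    linear_combination ((r:R)*((δ⁻¹:Rˣ):R)) * hd
  e_g2inv_e := by
    have hd : ((δ⁻¹:Rˣ):R)*(δ:R) = 1 := δ.inv_mul
    simp only [smul_mul_assoc, mul_smul_comm, smul_smul, mul_assoc]
    rw [ee2_g4i_ee2 (show 5 ≤ n by omega)]
    simp only [smul_smul]
    match_scalars
    linear_combination (((q⁻¹:Rˣ):R)*((δ⁻¹:Rˣ):R)) * hd
  E3_left := by
    intro h4'
    have h6 : 6 ≤ n := by omega
    simp only [smul_mul_assoc, mul_smul_comm, smul_smul, mul_assoc]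
    simp only [show ((2:ℕ)+2) = 4 from by norm_num, show ((3:ℕ)+2) = 5 from by norm_num,
      show ((1:ℕ)+2) = 3 from by norm_num]
    rw [show b.g 4 * (b.g 5 * (b.ginv 3 * (b.ginv 4 * ee b 2))) = wT b * ee b 2 from
      (wT_mul (ee b 2)).symm]
    rw [show b.g 4 * (b.g 5 * (b.ginv 3 * (b.ginv 4 * (ee b 2 * (wT b * ee b 2)))))
      = wT b * (ee b 2 * (wT b * ee b 2)) from (wT_mul _).symm]
    rw [X4 h6]
  E3_right := by
    intro h4'
    have h6 : 6 ≤ n := by omega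
    simp only [smul_mul_assoc, mul_smul_comm, smul_smul, mul_assoc]
    simp only [show ((2:ℕ)+2) = 4 from by norm_num, show ((3:ℕ)+2) = 5 from by norm_num,
      show ((1:ℕ)+2) = 3 from by norm_num]
    rw [show b.g 4 * (b.g 5 * (b.ginv 3 * b.ginv 4)) = wT b from rfl]
    rw [show b.g 4 * (b.g 5 * (b.ginv 3 * (b.ginv 4 * (ee b 2 * wT b))))
      = wT b * (ee b 2 * wT b) from (wT_mul _).symm]
    rw [show ee b 2 * (wT b * (ee b 2 * wT b)) = (ee b 2 * (wT b * ee b 2)) * wT b by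
      simp [mul_assoc]]
    rw [X5 h6]
    rw [show b.g 4 * (b.g 5 * (b.ginv 3 * (b.ginv 4 * ee b 2))) = wT b * ee b 2 from
      (wT_mul (ee b 2)).symm]

end QBP

namespace QBP
variable {b : QBrauer R q r δ n A}

lemma gp_shift (h5 : 5 ≤ n) (l m : ℕ) :
    gp (shiftQB b h5) l m = gp b (l+2) (m+2) := by
  simp only [gp]
  rw [show m+2+1-(l+2) = m+1-l from by omega, show l+2 = 2+l from by omega,
    ← List.map_add_range', List.map_map]
  apply congrArg List.prod
  apply List.map_congr_left
  intro i _
  show b.g (i+2) = b.g (2+i)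
  rw [Nat.add_comm]

lemma gm_shift (h5 : 5 ≤ n) (l m : ℕ) :
    gm (shiftQB b h5) l m = gm b (l+2) (m+2) := by
  simp only [gm]
  rw [show m+2+1-(l+2) = m+1-l from by omega, show l+2 = 2+l from by omega,
    ← List.map_add_range', List.map_map]
  apply congrArg List.prod
  apply List.map_congr_left
  intro i _
  show b.ginv (i+2) = b.ginv (2+i)
  rw [Nat.add_comm]

lemma ee_succ (k : ℕ) :
    ee b (k+2) = b.e * gp b 2 (2*k+3) * gm b 1 (2*k+2) * ee b (k+1) := by
  show b.e * gp b 2 (2*(k+1)+1) * gm b 1 (2*(k+1)) * ee b (k+1) = _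
  rw [show 2*(k+1)+1 = 2*k+3 from by ring, show 2*(k+1) = 2*k+2 from by ring]

lemma ee_head (k : ℕ) (hk : 1 ≤ k) : ∃ X, ee b k = b.e * X := by
  match k, hk with
  | 1, _ => exact ⟨1, by simp [ee]⟩
  | (m+2), _ =>
      exact ⟨gp b 2 (2*m+3) * (gm b 1 (2*m+2) * ee b (m+1)), by
        rw [ee_succ]; simp [mul_assoc]⟩

lemma e_ee (k : ℕ) (hk : 1 ≤ k) : b.e * ee b k = (δ:R) • ee b k := by
  obtain ⟨X, hX⟩ := ee_head (b := b) k hk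
  rw [hX, ← mul_assoc, b.esq, smul_mul_assoc]

lemma prod_comm_e (L : List ℕ) (h : ∀ i ∈ L, 2 < i ∧ i < n) (x : A) :
    b.e * ((L.map b.g).prod * x) = (L.map b.g).prod * (b.e * x) := by
  induction L generalizing x with
  | nil => simp
  | cons a L ih =>
      simp only [List.map_cons, List.prod_cons, mul_assoc]
      rw [Egc a (h a (List.mem_cons_self (a := a) (l := L))).1 (h a (List.mem_cons_self (a := a) (l := L))).2]
      rw [ih (fun i hi => h i (List.mem_cons_of_mem a hi)) x]

lemma prod_comm_e_inv (L : List ℕ) (h : ∀ i ∈ L, 2 < i ∧ i < n) (x : A) :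
    b.e * ((L.map b.ginv).prod * x) = (L.map b.ginv).prod * (b.e * x) := by
  induction L generalizing x with
  | nil => simp
  | cons a L ih =>
      simp only [List.map_cons, List.prod_cons, mul_assoc]
      rw [Egic a (h a (List.mem_cons_self (a := a) (l := L))).1 (h a (List.mem_cons_self (a := a) (l := L))).2]
      rw [ih (fun i hi => h i (List.mem_cons_of_mem a hi)) x]

lemma prod_comm_gv (j : ℕ) (hj : 1 ≤ j) (L : List ℕ) (h : ∀ i ∈ L, j+1 < i ∧ i < n)
    (x : A) :
    b.ginv j * ((L.map b.g).prod * x) = (L.map b.g).prod * (b.ginv j * x) := by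
  induction L generalizing x with
  | nil => simp
  | cons a L ih =>
      simp only [List.map_cons, List.prod_cons, mul_assoc]
      rw [QBP.lswap (c_vg j a hj (h a (List.mem_cons_self (a := a) (l := L))).1
        (h a (List.mem_cons_self (a := a) (l := L))).2)]
      rw [ih (fun i hi => h i (List.mem_cons_of_mem a hi)) x]

lemma gp_comm_e (l m : ℕ) (hl : 2 < l) (hm : m < n) (x : A) :
    b.e * (gp b l m * x) = gp b l m * (b.e * x) := by
  simp only [gp]
  apply prod_comm_e
  intro i hi
  rw [List.mem_range'_1] at hi
  omega

lemma gm_comm_e (l m : ℕ) (hl : 2 < l) (hm : m < n) (x : A) :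
    b.e * (gm b l m * x) = gm b l m * (b.e * x) := by
  simp only [gm]
  apply prod_comm_e_inv
  intro i hi
  rw [List.mem_range'_1] at hi
  omega

lemma gp_comm_gv (j l m : ℕ) (hj : 1 ≤ j) (hl : j+1 < l) (hm : m < n) (x : A) :
    b.ginv j * (gp b l m * x) = gp b l m * (b.ginv j * x) := by
  simp only [gp]
  apply prod_comm_gv j hj
  intro i hi
  rw [List.mem_range'_1] at hi
  omega

lemma gp_merge (M : ℕ) (hM : 3 ≤ M) (x : A) :
    b.g 2 * (b.g 3 * (gp b 4 M * x)) = gp b 2 M * x := by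
  simp only [gp]
  rw [show M+1-2 = ((M+1-4)+1)+1 from by omega]
  rw [List.range'_succ, List.range'_succ]
  simp only [List.map_cons, List.prod_cons, mul_assoc]

lemma gm_merge (M : ℕ) (hM : 2 ≤ M) (x : A) :
    b.ginv 1 * (b.ginv 2 * (gm b 3 M * x)) = gm b 1 M * x := by
  simp only [gm]
  rw [show M+1-1 = ((M+1-3)+1)+1 from by omega]
  rw [List.range'_succ, List.range'_succ]
  simp only [List.map_cons, List.prod_cons, mul_assoc]

lemma a1_merge (M M' : ℕ) (hM : 3 ≤ M) (hMn : M < n) (hM' : 2 ≤ M') (x : A) :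
    wA b * (gp b 4 M * (gm b 3 M' * x)) = gp b 2 M * (gm b 1 M' * x) := by
  rw [wA_mul]
  rw [gp_comm_gv 2 4 M (by omega) (by omega) hMn]
  rw [gp_comm_gv 1 4 M (by omega) (by omega) hMn]
  rw [gp_merge M hM, gm_merge M' hM']

/-- the bridge: `δ • ee b' k = ee b (k+1)` -/
lemma bridge (h5 : 5 ≤ n) :
    ∀ k, 1 ≤ k → 2*(k+1) ≤ n → (δ:R) • ee (shiftQB b h5) k = ee b (k+1) := by
  intro k
  induction k with
  | zero => intro h _; omega
  | succ m ih =>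
    intro hm1 hmn
    cases m with
    | zero =>
      show (δ:R) • (shiftQB b h5).e = ee b 2
      show (δ:R) • (((δ⁻¹:Rˣ):R) • ee b 2) = ee b 2
      rw [smul_smul, δ.mul_inv, one_smul]
    | succ m' =>
      have ihm := ih (by omega) (by omega)
      have ihm' : ee (shiftQB b h5) (m'+1) = ((δ⁻¹:Rˣ):R) • ee b (m'+2) :=
        QBP.usmul_cancel ihm
      rw [ee_succ (b := shiftQB b h5) m']
      rw [gp_shift, gm_shift]
      rw [ee_succ (b := b) (m'+1)]
      rw [show 2*(m'+1)+3 = 2*m'+5 from by ring, show 2*(m'+1)+2 = 2*m'+4 from by ring,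
        show 2*m'+3+2 = 2*m'+5 from by ring, show 2*m'+2+2 = 2*m'+4 from by ring]
      rw [ihm']
      show (δ:R) • ((((δ⁻¹:Rˣ):R) • ee b 2) * gp b 4 (2*m'+5) * gm b 3 (2*m'+4) *
        (((δ⁻¹:Rˣ):R) • ee b (m'+2))) = _
      simp only [mul_assoc, smul_mul_assoc, mul_smul_comm, smul_smul]
      rw [ee2_eq]
      simp only [mul_assoc]
      rw [gp_comm_e 4 (2*m'+5) (by omega) (by omega)]
      rw [gm_comm_e 3 (2*m'+4) (by omega) (by omega)]
      rw [e_ee (m'+2) (by omega)]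
      simp only [mul_smul_comm, smul_smul]
      rw [a1_merge (2*m'+5) (2*m'+4) (by omega) (by omega) (by omega)]
      have hd : ((δ⁻¹:Rˣ):R)*(δ:R) = 1 := δ.inv_mul
      match_scalars
      linear_combination (((δ⁻¹:Rˣ):R)*(δ:R)+1) * hd

end QBP

namespace QBP

/-- the induction statement -/
def P (R : Type) [CommRing R] (q r δ : Rˣ) (j : ℕ) : Prop :=
  ∀ (n : ℕ) (A : Type) [Ring A] [Algebra R A] (b : QBrauer R q r δ n A) (k : ℕ),
    1 ≤ j → j ≤ k → 2*k ≤ n → 2*j < n →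
    ee b j * b.g (2*j) * ee b k = ((r : R) * (δ : R) ^ (j-1)) • ee b k

lemma mainP : ∀ j, P R q r δ j := by
  intro j
  induction j using Nat.strong_induction_on with
  | _ j ih =>
    intro n A _ _ b k hj hjk hk hj2
    rcases Nat.lt_or_ge j 2 with h1 | h2
    · -- j = 1
      have hj1 : j = 1 := by omega
      subst hj1
      obtain ⟨X, hX⟩ := ee_head (b := b) k (by omega)
      rw [hX]
      show b.e * b.g 2 * (b.e * X) = ((r : R) * (δ : R) ^ (1-1)) • (b.e * X)
      rw [← mul_assoc, mul_assoc (b.e * b.g 2) b.e X, ← mul_assoc]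
      rw [b.e_g2_e, smul_mul_assoc]
      norm_num
    · -- j ≥ 2
      have h5n : 5 ≤ n := by omega
      have hbr1 : (δ:R) • ee (shiftQB b h5n) (j-1) = ee b j := by
        have h := bridge (b := b) h5n (j-1) (by omega) (by omega)
        rwa [show j-1+1 = j from by omega] at h
      have hbrk : (δ:R) • ee (shiftQB b h5n) (k-1) = ee b k := by
        have h := bridge (b := b) h5n (k-1) (by omega) (by omega)
        rwa [show k-1+1 = k from by omega] at h
      have hg : b.g (2*j) = (shiftQB b h5n).g (2*(j-1)) := by
        show b.g (2*j) = b.g (2*(j-1)+2)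
        congr 1
        omega
      have hIH := ih (j-1) (by omega) (n-2) A (shiftQB b h5n) (k-1)
        (by omega) (by omega) (by omega) (by omega)
      rw [← hbr1, ← hbrk, hg]
      rw [smul_mul_assoc, smul_mul_assoc, mul_smul_comm]
      rw [hIH]
      rw [smul_smul, smul_smul, smul_smul]
      congr 1
      rw [show j-1-1 = j-2 from by omega, show j-1 = (j-2)+1 from by omega, pow_succ]
      ring

end QBP


/-- Lemma 3.2(f): for `1 ≤ j ≤ k`, `e_{(j)} g_{2j} e_{(k)} = r ((r−1)/(q−1))^{j−1} e_{(k)}`. -/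
theorem ee_g_ee (b : QBrauer R q r δ n A) (j k : ℕ)
    (hj : 1 ≤ j) (hjk : j ≤ k) (hk : 2*k ≤ n) (hj2 : 2*j < n) :
    ee b j * b.g (2*j) * ee b k = ((r : R) * (δ : R) ^ (j-1)) • ee b k :=
  QBP.mainP j n A b k hj hjk hk hj2
end
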